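/- arXiv:1501.03907 — 8 statements merged into one kernel-verified Lean document; each statement's English description precedes it below -/
import Mathlib

section
/- Let k ≥ 3 be an integer and let C be a k-rotationally symmetric planar convex body with center of symmetry p, inradius r and circumradius R. Let x₁ ∈ ∂C satisfy dist(p, x₁) = r, let x₁, …, x_k be the images of x₁ under the iterates of the rotation ρ about p by angle 2π/k, and let C₁, …, C_k be the subsets of the associated standard k-partition, i.e. the intersections of C with the k closed angular sectors with apex p bounded by consecutive rays from p through x_i and x_{i+1}. Then the diameter of each C_i, and hence the maximum relative diameter d_M(P_k, C) = max_i diam(C_i), equals max{R, 2·r·sin(π/k)}. -/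
open Metric Set

/-- Rotation of the plane (identified with `ℂ`) about the point `p` by angle `2π/k`. -/
noncomputable def planeRotation (k : ℕ) (p z : ℂ) : ℂ :=
  p + Complex.exp (2 * (Real.pi : ℂ) * Complex.I / (k : ℂ)) * (z - p)

/-- A `k`-rotationally symmetric planar convex body with center of symmetry `p`. -/
def IsRotSymConvexBody (k : ℕ) (p : ℂ) (C : Set ℂ) : Prop :=
  IsCompact C ∧ Convex ℝ C ∧ (interior C).Nonempty ∧ planeRotation k p '' C = C

/-- The inradius of a planar set. -/
noncomputable def inradius (C : Set ℂ) : ℝ :=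
  sSup {r : ℝ | ∃ c : ℂ, closedBall c r ⊆ C}

/-- The circumradius of a planar set. -/
noncomputable def circumradius (C : Set ℂ) : ℝ :=
  sInf {R : ℝ | ∃ c : ℂ, C ⊆ closedBall c R}

/-- The `i`-th closed angular sector of angle `2π/k` with apex `p`, bounded by the rays
from `p` through `ρ^[i] x₁` and `ρ^[i+1] x₁`, where `ρ` is the rotation about `p`
by angle `2π/k`: the points `p + t·e^{iθ}·(ρ^[i] x₁ − p)` with `t ≥ 0`, `0 ≤ θ ≤ 2π/k`. -/
noncomputable def standardSector (k : ℕ) (p x₁ : ℂ) (i : ℕ) : Set ℂ :=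
  {z : ℂ | ∃ t θ : ℝ, 0 ≤ t ∧ 0 ≤ θ ∧ θ ≤ 2 * Real.pi / k ∧
    z = p + (t : ℂ) * Complex.exp ((θ : ℂ) * Complex.I) * ((planeRotation k p)^[i] x₁ - p)}

set_option maxHeartbeats 1000000

section Aux
open Real

lemma sin_mono {x y : ℝ} (hx : 0 ≤ x) (hxy : x ≤ y) (hy : y ≤ π/2) :
    Real.sin x ≤ Real.sin y :=
  Real.strictMonoOn_sin.monotoneOn ⟨by linarith [Real.pi_pos], by linarith⟩
    ⟨by linarith [Real.pi_pos], hy⟩ hxy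

lemma key1 (γ : ℝ) (h0 : 0 ≤ γ) (h1 : γ ≤ π/3) :
    Real.sin γ ≤ 2 * Real.sin (γ + π/3) * Real.cos γ := by
  have hpi := Real.pi_pos
  have hs : Real.sin γ ≤ Real.sqrt 3 / 2 := by
    have h := sin_mono h0 h1 (by linarith)
    rwa [Real.sin_pi_div_three] at h
  have hc : 1/2 ≤ Real.cos γ := by
    have h := Real.cos_le_cos_of_nonneg_of_le_pi h0 (by linarith) h1
    rwa [Real.cos_pi_div_three] at h
  have hsnn : 0 ≤ Real.sin γ := Real.sin_nonneg_of_nonneg_of_le_pi h0 (by linarith)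
  have hpyth := Real.sin_sq_add_cos_sq γ
  have h3 : Real.sqrt 3 ^ 2 = 3 := Real.sq_sqrt (by norm_num)
  have h3nn : 0 ≤ Real.sqrt 3 := Real.sqrt_nonneg 3
  rw [Real.sin_add, Real.sin_pi_div_three, Real.cos_pi_div_three]
  nlinarith [sq_nonneg (Real.sqrt 3 / 2 - Real.sin γ), sq_nonneg (Real.cos γ - 1/2),
    mul_nonneg hsnn (sub_nonneg.2 hc)]

lemma key2 (σ β : ℝ) (hσ0 : 0 ≤ σ) (hσ : σ ≤ β - π/3) (hβ : β ≤ 2*π/3) :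
    Real.sin σ ≤ 2 * Real.sin β * Real.cos σ := by
  have hpi := Real.pi_pos
  have hγ3 : β - π/3 ≤ π/3 := by linarith
  have hγ0 : 0 ≤ β - π/3 := le_trans hσ0 hσ
  have h1 : Real.sin σ ≤ Real.sin (β - π/3) := sin_mono hσ0 hσ (by linarith)
  have h2 : Real.cos (β - π/3) ≤ Real.cos σ :=
    Real.cos_le_cos_of_nonneg_of_le_pi hσ0 (by linarith) hσ
  have h3 := key1 (β - π/3) hγ0 hγ3
  have h4 : β - π/3 + π/3 = β := by ring
  rw [h4] at h3
  have hsβ : 0 ≤ Real.sin β := Real.sin_nonneg_of_nonneg_of_le_pi (by linarith) (by linarith)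
  nlinarith [mul_nonneg hsβ (sub_nonneg.2 h2)]


lemma quad_max (s t c up : ℝ) (hs : 0 ≤ s) (hup : s ≤ up) :
    s^2 + t^2 - 2*s*t*c ≤ max (t^2) (up^2 + t^2 - 2*up*t*c) := by
  rcases le_total s (t*c) with h | h
  · exact le_max_of_le_left (by nlinarith)
  · exact le_max_of_le_right (by nlinarith)

lemma corner (β r A B a' b' : ℝ) (hr : 0 < r) (hβu : β ≤ 2*π/3)
    (ha'0 : 0 ≤ a') (hb'0 : 0 ≤ b') (ha'2 : a' < π/2) (hb'2 : b' < π/2)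
    (hσβ : a' + b' ≤ β - π/3)
    (hy1 : A * Real.cos a' = r) (hy2 : B * Real.cos b' = r) :
    A^2 + B^2 - 2*A*B*Real.cos (β - (a'+b')) ≤ 2*r^2*(1-Real.cos β) := by
  have hpi := Real.pi_pos
  set ca := Real.cos a' with hca_def
  set sa := Real.sin a' with hsa_def
  set cb := Real.cos b' with hcb_def
  set sb := Real.sin b' with hsb_def
  have hca0 : 0 < ca := Real.cos_pos_of_mem_Ioo ⟨by linarith, ha'2⟩
  have hcb0 : 0 < cb := Real.cos_pos_of_mem_Ioo ⟨by linarith, hb'2⟩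
  have hsa0 : 0 ≤ sa := Real.sin_nonneg_of_nonneg_of_le_pi ha'0 (by linarith)
  have hsb0 : 0 ≤ sb := Real.sin_nonneg_of_nonneg_of_le_pi hb'0 (by linarith)
  have hpa : sa^2 + ca^2 = 1 := Real.sin_sq_add_cos_sq a'
  have hpb : sb^2 + cb^2 = 1 := Real.sin_sq_add_cos_sq b'
  have hcosβ1 : Real.cos β ≤ 1 := Real.cos_le_one β
  have hsinβ : 0 ≤ Real.sin β :=
    Real.sin_nonneg_of_nonneg_of_le_pi (by linarith) (by linarith)
  have hkey := key2 (a'+b') β (by linarith) hσβ hβu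
  rw [Real.sin_add, Real.cos_add] at hkey
  set X := sa*cb + ca*sb with hX_def
  have hX0 : 0 ≤ X := by positivity
  have hXle : X ≤ 2*Real.sin β*(ca*cb) := by
    nlinarith [mul_nonneg hsinβ (mul_nonneg hsa0 hsb0)]
  have e1 : X^2 ≤ 2*Real.sin β*(ca*cb)*X := by nlinarith
  have e2 : (0:ℝ) ≤ 2*sa*sb*ca*cb*(1-Real.cos β) := by
    have h1c : (0:ℝ) ≤ 1 - Real.cos β := by linarith
    have h2c : (0:ℝ) ≤ 2*sa*sb*ca*cb := by positivity
    exact mul_nonneg h2c h1c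
  have id : ca^2 + cb^2 = sa^2*cb^2 + sb^2*ca^2 + 2*ca^2*cb^2 := by
    linear_combination (-cb^2) * hpa + (-ca^2) * hpb
  set E := Real.cos β * (ca*cb - sa*sb) + Real.sin β * X with hE_def
  have G : ca^2 + cb^2 - 2*(ca*cb)*E ≤ 2*(1-Real.cos β)*(ca^2*cb^2) := by
    rw [hE_def]; nlinarith [e1, e2, id]
  have hexp : Real.cos (β - (a'+b')) = E := by
    rw [hE_def, Real.cos_sub, Real.cos_add, Real.sin_add]
  have hA : A = r / ca := by field_simp at hy1 ⊢; linarith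
  have hB : B = r / cb := by field_simp at hy2 ⊢; linarith
  rw [hexp, hA, hB]
  have hfrac : (r/ca)^2 + (r/cb)^2 - 2*(r/ca)*(r/cb)*E
      = (r^2*cb^2 + r^2*ca^2 - 2*r^2*(ca*cb)*E)/(ca^2*cb^2) := by
    field_simp
  rw [hfrac, div_le_iff₀ (by positivity)]
  nlinarith [mul_le_mul_of_nonneg_left G (sq_nonneg r)]


lemma core (β r R a b s₁ s₂ : ℝ) (hr : 0 < r) (hrR : r ≤ R) (hβ : β ≤ 2*π/3)
    (ha : 0 ≤ a) (hb : 0 ≤ b) (hδ : π/3 ≤ β - a - b)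
    (hs₁0 : 0 ≤ s₁) (hs₂0 : 0 ≤ s₂) (hs₁R : s₁ ≤ R) (hs₂R : s₂ ≤ R)
    (h1 : s₁ * Real.cos a ≤ r) (h2 : s₂ * Real.cos b ≤ r) :
    s₁^2 + s₂^2 - 2*s₁*s₂*Real.cos (β - a - b) ≤
      max (R^2) (2*r^2*(1-Real.cos β)) := by
  have hpi := Real.pi_pos
  have ha3 : a ≤ π/3 := by linarith
  have hb3 : b ≤ π/3 := by linarith
  have hcah : (1:ℝ)/2 ≤ Real.cos a := by
    have h := Real.cos_le_cos_of_nonneg_of_le_pi ha (by linarith) ha3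
    rwa [Real.cos_pi_div_three] at h
  have hcbh : (1:ℝ)/2 ≤ Real.cos b := by
    have h := Real.cos_le_cos_of_nonneg_of_le_pi hb (by linarith) hb3
    rwa [Real.cos_pi_div_three] at h
  have hca0 : 0 < Real.cos a := by linarith
  have hcb0 : 0 < Real.cos b := by linarith
  set A := min (r / Real.cos a) R with hA_def
  set B := min (r / Real.cos b) R with hB_def
  have hA0 : 0 < A := lt_min (by positivity) (by linarith)
  have hB0 : 0 < B := lt_min (by positivity) (by linarith)
  have hAr : r ≤ A := le_min (by rw [le_div_iff₀ hca0]; nlinarith [Real.cos_le_one a]) hrR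
  have hBr : r ≤ B := le_min (by rw [le_div_iff₀ hcb0]; nlinarith [Real.cos_le_one b]) hrR
  have hAR : A ≤ R := min_le_right _ _
  have hBR : B ≤ R := min_le_right _ _
  have hs₁A : s₁ ≤ A := le_min (by rw [le_div_iff₀ hca0]; exact h1) hs₁R
  have hs₂B : s₂ ≤ B := le_min (by rw [le_div_iff₀ hcb0]; exact h2) hs₂R
  set c := Real.cos (β - a - b) with hc_def
  -- reduce to corners
  have step1 := quad_max s₁ s₂ c A hs₁0 hs₁A
  have step2 := quad_max s₂ A c B hs₂0 hs₂B
  have hs₂sq : s₂^2 ≤ R^2 := pow_le_pow_left₀ hs₂0 hs₂R 2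
  have hAsq : A^2 ≤ R^2 := pow_le_pow_left₀ hA0.le hAR 2
  -- the corner value
  set a' := Real.arccos (r / A) with ha'_def
  set b' := Real.arccos (r / B) with hb'_def
  have hrA1 : r / A ≤ 1 := by rw [div_le_one hA0]; exact hAr
  have hrB1 : r / B ≤ 1 := by rw [div_le_one hB0]; exact hBr
  have hrA0 : 0 < r / A := by positivity
  have hrB0 : 0 < r / B := by positivity
  have hca' : Real.cos a' = r / A := Real.cos_arccos (by linarith) hrA1
  have hcb' : Real.cos b' = r / B := Real.cos_arccos (by linarith) hrB1
  have ha'0 : 0 ≤ a' := Real.arccos_nonneg _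
  have hb'0 : 0 ≤ b' := Real.arccos_nonneg _
  have ha'pi : a' ≤ π := Real.arccos_le_pi _
  have hb'pi : b' ≤ π := Real.arccos_le_pi _
  have ha'2 : a' < π/2 := by
    by_contra hcon
    push_neg at hcon
    have := Real.cos_le_cos_of_nonneg_of_le_pi (by linarith) ha'pi hcon
    rw [Real.cos_pi_div_two, hca'] at this
    linarith
  have hb'2 : b' < π/2 := by
    by_contra hcon
    push_neg at hcon
    have := Real.cos_le_cos_of_nonneg_of_le_pi (by linarith) hb'pi hcon
    rw [Real.cos_pi_div_two, hcb'] at this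
    linarith
  have ha'a : a' ≤ a := by
    have hle : Real.cos a ≤ r / A := by
      rw [le_div_iff₀ hA0]
      have := min_le_left (r / Real.cos a) R
      calc Real.cos a * A ≤ Real.cos a * (r / Real.cos a) := by
            apply mul_le_mul_of_nonneg_left _ hca0.le
            exact min_le_left _ _
        _ = r := by field_simp
    have h := Real.strictAntiOn_arccos.antitoneOn
      (Set.mem_Icc.2 ⟨Real.neg_one_le_cos a, Real.cos_le_one a⟩)
      (Set.mem_Icc.2 ⟨by linarith, hrA1⟩) hle
    rwa [Real.arccos_cos ha (by linarith)] at h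
  have hb'b : b' ≤ b := by
    have hle : Real.cos b ≤ r / B := by
      rw [le_div_iff₀ hB0]
      calc Real.cos b * B ≤ Real.cos b * (r / Real.cos b) := by
            apply mul_le_mul_of_nonneg_left _ hcb0.le
            exact min_le_left _ _
        _ = r := by field_simp
    have h := Real.strictAntiOn_arccos.antitoneOn
      (Set.mem_Icc.2 ⟨Real.neg_one_le_cos b, Real.cos_le_one b⟩)
      (Set.mem_Icc.2 ⟨by linarith, hrB1⟩) hle
    rwa [Real.arccos_cos hb (by linarith)] at h
  have hy1 : A * Real.cos a' = r := by rw [hca']; field_simp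
  have hy2 : B * Real.cos b' = r := by rw [hcb']; field_simp
  have hcmono : Real.cos (β - (a'+b')) ≤ c := by
    rw [hc_def]
    apply Real.cos_le_cos_of_nonneg_of_le_pi (by linarith) (by linarith)
    linarith
  have hcorner := corner β r A B a' b' hr hβ ha'0 hb'0 ha'2 hb'2 (by linarith) hy1 hy2
  have hcornerc : A^2 + B^2 - 2*A*B*c ≤ 2*r^2*(1-Real.cos β) := by
    have hm := mul_le_mul_of_nonneg_left hcmono
      (by positivity : (0:ℝ) ≤ 2*(A*B))
    linarith
  -- assemble
  rcases le_or_gt (s₁^2 + s₂^2 - 2*s₁*s₂*c) (s₂^2) with h | h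
  · exact le_max_of_le_left (by linarith)
  · have h' : s₁^2 + s₂^2 - 2*s₁*s₂*c ≤ A^2 + s₂^2 - 2*A*s₂*c := by
      rcases max_cases (s₂^2) (A^2 + s₂^2 - 2*A*s₂*c) with ⟨he, _⟩ | ⟨he, _⟩ <;>
        [skip; skip] <;> first
      | (rw [he] at step1; linarith)
      | (rw [he] at step1; linarith)
    rcases le_or_gt (s₂^2 + A^2 - 2*s₂*A*c) (A^2) with h2' | h2'
    · exact le_max_of_le_left (by linarith)
    · have h2'' : s₂^2 + A^2 - 2*s₂*A*c ≤ B^2 + A^2 - 2*B*A*c := by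
        rcases max_cases (A^2) (B^2 + A^2 - 2*B*A*c) with ⟨he, _⟩ | ⟨he, _⟩
        · rw [he] at step2; linarith
        · rw [he] at step2; linarith
      refine le_max_of_le_right ?_
      calc s₁^2 + s₂^2 - 2*s₁*s₂*c ≤ A^2 + s₂^2 - 2*A*s₂*c := h'
        _ = s₂^2 + A^2 - 2*s₂*A*c := by ring
        _ ≤ B^2 + A^2 - 2*B*A*c := h2''
        _ = A^2 + B^2 - 2*A*B*c := by ring
        _ ≤ 2*r^2*(1-Real.cos β) := hcornerc


noncomputable def om (k : ℕ) : ℂ := Complex.exp (2 * (Real.pi : ℂ) * Complex.I / (k : ℂ))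

lemma om_eq (k : ℕ) (hk : 3 ≤ k) :
    om k = Complex.exp (((2 * Real.pi / k : ℝ) : ℂ) * Complex.I) := by
  have hk0 : (k : ℂ) ≠ 0 := by
    exact_mod_cast Nat.pos_iff_ne_zero.mp (by omega)
  rw [om]
  congr 1
  push_cast
  field_simp

lemma rot_iter (k : ℕ) (p : ℂ) (i : ℕ) (z : ℂ) :
    (planeRotation k p)^[i] z = p + (om k)^i * (z - p) := by
  induction i with
  | zero => simp [om]
  | succ n ih =>
      rw [Function.iterate_succ_apply', ih, planeRotation]
      show p + om k * (p + om k ^ n * (z - p) - p) = p + om k ^ (n+1) * (z - p)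
      ring

lemma om_abs (k : ℕ) (hk : 3 ≤ k) : ‖om k‖ = 1 := by
  rw [om_eq k hk, Complex.norm_exp]
  simp

lemma om_ne_zero (k : ℕ) : om k ≠ 0 := Complex.exp_ne_zero _

lemma om_pow_k (k : ℕ) (hk : 3 ≤ k) : (om k)^k = 1 := by
  have hk0 : (k : ℂ) ≠ 0 := by
    exact_mod_cast Nat.pos_iff_ne_zero.mp (by omega)
  rw [om, ← Complex.exp_nat_mul]
  have : (k : ℂ) * (2 * (Real.pi : ℂ) * Complex.I / (k : ℂ)) = 2 * Real.pi * Complex.I := by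
    field_simp
  rw [this, Complex.exp_two_pi_mul_I]

lemma om_ne_one (k : ℕ) (hk : 3 ≤ k) : om k ≠ 1 := by
  have hpi := Real.pi_pos
  have hk3 : (3:ℝ) ≤ k := by exact_mod_cast hk
  intro h
  have hre : (om k).re = Real.cos (2 * Real.pi / k) := by
    rw [om_eq k hk, Complex.exp_ofReal_mul_I_re]
  have h1 : Real.cos (2 * Real.pi / k) = 1 := by rw [← hre, h]; rfl
  have hlt : 2 * Real.pi / k < 2 * Real.pi := by
    rw [div_lt_iff₀ (by linarith)]
    nlinarith
  have hgt : 0 < 2 * Real.pi / k := by positivity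
  rw [Real.cos_eq_one_iff_of_lt_of_lt (by linarith) hlt] at h1
  linarith

lemma om_sum (k : ℕ) (hk : 3 ≤ k) : ∑ j ∈ Finset.range k, (om k)^j = 0 := by
  rw [geom_sum_eq (om_ne_one k hk), om_pow_k k hk]
  simp

lemma om_pow_abs (k : ℕ) (hk : 3 ≤ k) (i : ℕ) : ‖(om k)^i‖ = 1 := by
  rw [norm_pow, om_abs k hk, one_pow]




section body
variable {k : ℕ} {p : ℂ} {C : Set ℂ}

lemma pow_cancel (hk : 3 ≤ k) (i : ℕ) : (om k)^i * (om k)^(i*(k-1)) = 1 := by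
  rw [← pow_add]
  have h : i + i*(k-1) = i*k := by
    have hk' : k - 1 + 1 = k := by omega
    calc i + i*(k-1) = i*((k-1)+1) := by ring
      _ = i*k := by rw [hk']
  rw [h, pow_mul', om_pow_k k hk, one_pow]

lemma mem_rot (hC : IsRotSymConvexBody k p C) (hk : 3 ≤ k) (i : ℕ) {z : ℂ} (hz : z ∈ C) :
    p + (om k)^i * (z - p) ∈ C := by
  have him : ∀ j, (planeRotation k p)^[j] '' C = C := by
    intro j
    induction j with
    | zero => simp
    | succ n ih => rw [Function.iterate_succ', Set.image_comp, ih, hC.2.2.2]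
  have : (planeRotation k p)^[i] z ∈ C := by
    rw [← him i]; exact Set.mem_image_of_mem _ hz
  rwa [rot_iter] at this

lemma mem_unrot (hC : IsRotSymConvexBody k p C) (hk : 3 ≤ k) (i : ℕ) {z : ℂ}
    (hz : p + (om k)^i * (z - p) ∈ C) : z ∈ C := by
  have h := mem_rot hC hk (i*(k-1)) hz
  have : p + (om k)^(i*(k-1)) * (p + (om k)^i * (z - p) - p) = z := by
    have hc := pow_cancel hk i
    calc p + (om k)^(i*(k-1)) * (p + (om k)^i * (z - p) - p)
        = p + ((om k)^i * (om k)^(i*(k-1))) * (z - p) := by ring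
      _ = z := by rw [hc]; ring
  rwa [this] at h

lemma closedBall_rot (hC : IsRotSymConvexBody k p C) (hk : 3 ≤ k) (i : ℕ) {c : ℂ} {s : ℝ}
    (hb : closedBall c s ⊆ C) : closedBall (p + (om k)^i * (c - p)) s ⊆ C := by
  intro w hw
  set v := p + (om k)^(i*(k-1)) * (w - p) with hv_def
  have hvc : v ∈ closedBall c s := by
    rw [mem_closedBall] at hw ⊢
    have habs : ‖(om k)^(i*(k-1))‖ = 1 := om_pow_abs k hk _
    have hkey : v - c = (om k)^(i*(k-1)) * (w - (p + (om k)^i * (c - p))) := by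
      rw [hv_def]
      have hc := pow_cancel hk i
      calc p + (om k)^(i*(k-1)) * (w - p) - c
          = (om k)^(i*(k-1)) * (w - p) - (c - p) := by ring
        _ = (om k)^(i*(k-1)) * (w - p) -
            ((om k)^i * (om k)^(i*(k-1))) * (c - p) := by rw [hc]; ring
        _ = (om k)^(i*(k-1)) * (w - (p + (om k)^i * (c - p))) := by ring
    rw [Complex.dist_eq] at hw ⊢
    rw [hkey, norm_mul, habs, one_mul]
    exact hw
  have hvC : v ∈ C := hb hvc
  have h := mem_rot hC hk i hvC
  have : p + (om k)^i * (v - p) = w := by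
    rw [hv_def]
    have hc := pow_cancel hk i
    calc p + (om k)^i * (p + (om k)^(i*(k-1)) * (w - p) - p)
        = p + ((om k)^i * (om k)^(i*(k-1))) * (w - p) := by ring
      _ = w := by rw [hc]; ring
  rwa [this] at h

lemma inradius_facts (hC : IsRotSymConvexBody k p C) (hk : 3 ≤ k) :
    0 < inradius C ∧ closedBall p (inradius C) ⊆ C := by
  obtain ⟨hcomp, hconv, hint, hinv⟩ := hC
  have hk0 : (k:ℂ) ≠ 0 := by exact_mod_cast Nat.pos_iff_ne_zero.mp (by omega)
  -- a small closed ball inside C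
  obtain ⟨c₀, hc₀⟩ := hint
  have hC_nhds : C ∈ nhds c₀ := mem_interior_iff_mem_nhds.1 hc₀
  obtain ⟨ε, hε0, hεsub⟩ := Metric.nhds_basis_closedBall.mem_iff.1 hC_nhds
  -- boundedness
  obtain ⟨M, hM⟩ : ∃ M, C ⊆ closedBall p M := hcomp.isBounded.subset_closedBall p
  have hbdd : BddAbove {r : ℝ | ∃ c : ℂ, closedBall c r ⊆ C} := by
    refine ⟨max 0 (2*M), ?_⟩
    rintro s ⟨c, hc⟩
    rcases le_or_gt s 0 with h | h
    · exact le_max_of_le_left h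
    · refine le_max_of_le_right ?_
      have h1 : c ∈ C := hc (mem_closedBall_self h.le)
      have h2 : c + s ∈ C := by
        apply hc
        rw [mem_closedBall, Complex.dist_eq]
        simp [Complex.norm_real, Real.norm_eq_abs, abs_of_nonneg h.le]
      have d1 : dist c p ≤ M := hM h1
      have d2 : dist (c + s) p ≤ M := hM h2
      have : dist (c + s) c = s := by
        rw [Complex.dist_eq]
        simp [Complex.norm_real, Real.norm_eq_abs, abs_of_nonneg h.le]
      have htri := dist_triangle (c + s) p c
      rw [this] at htri
      have e1 : dist p c = dist c p := dist_comm p c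
      linarith
  have hne : ε ∈ {r : ℝ | ∃ c : ℂ, closedBall c r ⊆ C} := ⟨c₀, hεsub⟩
  have hrpos : 0 < inradius C := lt_of_lt_of_le hε0 (le_csSup hbdd hne)
  -- ball p (inradius C) ⊆ C
  have hball : ball p (inradius C) ⊆ C := by
    intro z hz
    rw [mem_ball, Complex.dist_eq] at hz
    obtain ⟨s, hsmem, hslt⟩ := exists_lt_of_lt_csSup ⟨ε, hne⟩ hz
    obtain ⟨c, hc⟩ := hsmem
    -- average the rotated centers
    have hrotball : ∀ j : ℕ, closedBall (p + (om k)^j * (c - p)) s ⊆ C :=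
      fun j => closedBall_rot ⟨hcomp, hconv, ⟨c₀, hc₀⟩, hinv⟩ hk j hc
    have hmem : ∀ j ∈ Finset.range k, z + (om k)^j * (c - p) ∈ C := by
      intro j _
      apply hrotball j
      rw [mem_closedBall, Complex.dist_eq]
      have : z + (om k)^j * (c - p) - (p + (om k)^j * (c - p)) = z - p := by ring
      rw [this]
      exact hslt.le
    have heq : ∑ j ∈ Finset.range k, ((k:ℝ)⁻¹) • (z + (om k)^j * (c - p)) = z := by
      have : ∀ j, ((k:ℝ)⁻¹) • (z + (om k)^j * (c - p))
          = ((k:ℂ)⁻¹) * (z + (om k)^j * (c - p)) := by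
        intro j
        rw [Complex.real_smul]
        push_cast
        ring
      simp_rw [this]
      rw [← Finset.mul_sum]
      have hs : ∑ j ∈ Finset.range k, (z + (om k)^j * (c - p))
          = (k:ℂ) * z + (∑ j ∈ Finset.range k, (om k)^j) * (c - p) := by
        rw [Finset.sum_add_distrib, Finset.sum_const, Finset.card_range, Finset.sum_mul]
        push_cast
        ring
      rw [hs, om_sum k hk, zero_mul, add_zero, inv_mul_cancel_left₀ hk0]
    rw [← heq]
    apply hconv.sum_mem
    · intro j _; positivity
    · rw [Finset.sum_const, Finset.card_range, nsmul_eq_mul]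
      field_simp
    · exact hmem
  refine ⟨hrpos, ?_⟩
  have : closedBall p (inradius C) = closure (ball p (inradius C)) :=
    (closure_ball p hrpos.ne').symm
  rw [this]
  calc closure (ball p (inradius C)) ⊆ closure C := closure_mono hball
    _ = C := hcomp.isClosed.closure_eq

lemma circumradius_facts (hC : IsRotSymConvexBody k p C) (hk : 3 ≤ k) :
    C ⊆ closedBall p (circumradius C) ∧ (∃ q ∈ C, dist p q = circumradius C) := by
  obtain ⟨hcomp, hconv, hint, hinv⟩ := hC
  have hk0 : (k:ℝ) ≠ 0 := by exact_mod_cast Nat.pos_iff_ne_zero.mp (by omega)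
  have hk0' : (k:ℂ) ≠ 0 := by exact_mod_cast Nat.pos_iff_ne_zero.mp (by omega)
  have hCne : C.Nonempty := ⟨_, interior_subset hint.choose_spec⟩
  obtain ⟨q, hqC, hqmax⟩ := hcomp.exists_isMaxOn hCne (continuous_dist.comp
    (Continuous.prodMk continuous_const continuous_id)).continuousOn
  have hqmax' : ∀ z ∈ C, dist p z ≤ dist p q := hqmax
  set T := {R : ℝ | ∃ c : ℂ, C ⊆ closedBall c R} with hT_def
  have hTne : T.Nonempty := ⟨dist p q, p, fun z hz => by
    rw [mem_closedBall, dist_comm]; exact hqmax' z hz⟩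
  have hTbdd : BddBelow T := by
    refine ⟨0, ?_⟩
    rintro R' ⟨c, hc⟩
    obtain ⟨x, hx⟩ := hCne
    have := hc hx
    rw [mem_closedBall] at this
    linarith [dist_nonneg (x := x) (y := c)]
  have hle : circumradius C ≤ dist p q := csInf_le hTbdd ⟨p, fun z hz => by
    rw [mem_closedBall, dist_comm]; exact hqmax' z hz⟩
  have hge : dist p q ≤ circumradius C := by
    apply le_csInf hTne
    rintro R' ⟨c, hc⟩
    -- C is inside each rotated ball
    have hrot : ∀ j : ℕ, ∀ z ∈ C, dist z (p + (om k)^j * (c - p)) ≤ R' := by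
      intro j z hz
      have hv : p + (om k)^(j*(k-1)) * (z - p) ∈ C :=
        mem_rot ⟨hcomp, hconv, hint, hinv⟩ hk _ hz
      have h1 := hc hv
      rw [mem_closedBall] at h1
      have hkey : z - (p + (om k)^j * (c - p))
          = (om k)^j * ((p + (om k)^(j*(k-1)) * (z - p)) - c) := by
        have hcc := pow_cancel hk j
        calc z - (p + (om k)^j * (c - p))
            = ((om k)^j * (om k)^(j*(k-1))) * (z - p) - (om k)^j * (c - p) := by
              rw [hcc]; ring
          _ = (om k)^j * ((p + (om k)^(j*(k-1)) * (z - p)) - c) := by ring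
      rw [Complex.dist_eq, hkey, norm_mul, om_pow_abs k hk, one_mul]
      rw [Complex.dist_eq] at h1
      exact h1
    -- averaging
    have heq : q - p = ((k:ℂ)⁻¹) * ∑ j ∈ Finset.range k, (q - (p + (om k)^j * (c - p))) := by
      have hs : ∑ j ∈ Finset.range k, (q - (p + (om k)^j * (c - p)))
          = (k:ℂ) * (q - p) - (∑ j ∈ Finset.range k, (om k)^j) * (c - p) := by
        rw [Finset.sum_sub_distrib, Finset.sum_const, Finset.card_range]
        rw [Finset.sum_add_distrib, Finset.sum_const, Finset.card_range, Finset.sum_mul]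
        push_cast
        ring
      rw [hs, om_sum k hk, zero_mul, sub_zero, inv_mul_cancel_left₀ hk0']
    have hnorm : dist p q ≤ (k:ℝ)⁻¹ * (k * R') := by
      rw [dist_comm, Complex.dist_eq, heq]
      rw [norm_mul]
      have h1 : ‖(k:ℂ)⁻¹‖ = (k:ℝ)⁻¹ := by
        rw [norm_inv]
        simp
      rw [h1]
      apply mul_le_mul_of_nonneg_left _ (by positivity)
      calc ‖∑ j ∈ Finset.range k, (q - (p + (om k)^j * (c - p)))‖
          ≤ ∑ j ∈ Finset.range k, ‖q - (p + (om k)^j * (c - p))‖ := by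
            exact norm_sum_le _ _
        _ ≤ ∑ j ∈ Finset.range k, R' := by
            apply Finset.sum_le_sum
            intro j hj
            have := hrot j q hqC
            rwa [Complex.dist_eq] at this
        _ = k * R' := by rw [Finset.sum_const, Finset.card_range, nsmul_eq_mul]
    rw [inv_mul_cancel_left₀ hk0] at hnorm
    exact hnorm
  have heqR : dist p q = circumradius C := le_antisymm hge hle
  refine ⟨fun z hz => ?_, ⟨q, hqC, heqR⟩⟩
  rw [mem_closedBall, dist_comm, ← heqR]
  exact hqmax' z hz

lemma support_halfplane (hC : IsRotSymConvexBody k p C) (hk : 3 ≤ k) {x₁ : ℂ}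
    (hx₁ : x₁ ∈ frontier C) (hxr : ‖x₁ - p‖ = inradius C) :
    ∀ z ∈ C, ((z - p) * (starRingEnd ℂ) (x₁ - p)).re ≤ (inradius C)^2 := by
  obtain ⟨hrpos, hball⟩ := inradius_facts hC hk
  set r := inradius C with hr_def
  intro z hz
  by_contra hcon
  push_neg at hcon
  set δ := ((z - p) * (starRingEnd ℂ) (x₁ - p)).re - r^2 with hδ_def
  have hδpos : 0 < δ := by rw [hδ_def]; linarith
  set L := ‖z - p‖ with hL_def
  have hL0 : 0 ≤ L := norm_nonneg _
  set lam := min (1/2 : ℝ) (δ / (L^2 + 1)) with hlam_def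
  have hlam0 : 0 < lam := lt_min (by norm_num) (by positivity)
  have hlam1 : lam ≤ 1/2 := min_le_left _ _
  have hd : lam * (L^2 + 1) ≤ δ := by
    calc lam * (L^2 + 1) ≤ (δ / (L^2 + 1)) * (L^2 + 1) := by
          apply mul_le_mul_of_nonneg_right (min_le_right _ _) (by positivity)
      _ = δ := by field_simp
  -- the shifted point is strictly inside the shrunk ball
  set w := x₁ - p - (lam : ℂ) * (z - p) with hw_def
  have hre_sym : ((x₁ - p) * (starRingEnd ℂ) (z - p)).re
      = ((z - p) * (starRingEnd ℂ) (x₁ - p)).re := by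
    have : (x₁ - p) * (starRingEnd ℂ) (z - p)
        = (starRingEnd ℂ) ((z - p) * (starRingEnd ℂ) (x₁ - p)) := by
      rw [map_mul, Complex.conj_conj]
      ring
    rw [this, Complex.conj_re]
  have hkey : Complex.normSq w < ((1 - lam) * r)^2 := by
    have h1 : Complex.normSq w = r^2 - 2*lam*(r^2 + δ) + lam^2 * L^2 := by
      rw [hw_def, Complex.normSq_sub]
      have e1 : Complex.normSq (x₁ - p) = r^2 := by
        rw [← Complex.sq_norm, hxr]
      have e2 : Complex.normSq ((lam:ℂ) * (z - p)) = lam^2 * L^2 := by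
        rw [Complex.normSq_mul, Complex.normSq_ofReal, ← Complex.sq_norm, ← hL_def]
        ring
      have e3 : ((x₁ - p) * (starRingEnd ℂ) ((lam:ℂ) * (z - p))).re
          = lam * (r^2 + δ) := by
        rw [map_mul, Complex.conj_ofReal]
        have : (x₁ - p) * ((lam:ℂ) * (starRingEnd ℂ) (z - p))
            = (lam:ℂ) * ((x₁ - p) * (starRingEnd ℂ) (z - p)) := by ring
        rw [this, Complex.re_ofReal_mul, hre_sym]
        rw [hδ_def]
        ring
      rw [e1, e2, e3]
      ring
    rw [h1]
    have hsq : lam^2 * (L^2 - r^2) ≤ lam * δ := by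
      have h2 : lam * L^2 ≤ δ := by nlinarith
      nlinarith [sq_nonneg lam, sq_nonneg r, mul_pos hlam0 hlam0]
    nlinarith [mul_pos hlam0 hδpos]
  have h1lam : 0 < 1 - lam := by linarith
  have habs : ‖w‖ < (1 - lam) * r := by
    have h1 : (‖w‖)^2 < ((1 - lam) * r)^2 := by
      rw [Complex.sq_norm]; exact hkey
    exact lt_of_pow_lt_pow_left₀ 2 (by positivity) h1
  set ε := (1 - lam) * r - ‖w‖ with hε_def
  have hεpos : 0 < ε := by rw [hε_def]; linarith
  have hsub : ball x₁ ε ⊆ C := by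
    intro y hy
    rw [mem_ball, Complex.dist_eq] at hy
    set w' := p + (y - p - (lam:ℂ) * (z - p)) / ((1:ℂ) - lam) with hw'_def
    have h1lam' : ((1:ℂ) - lam) ≠ 0 := by
      intro h
      have : (1:ℂ) - lam = ((1 - lam : ℝ) : ℂ) := by push_cast; ring
      rw [this] at h
      have := Complex.ofReal_eq_zero.1 h
      linarith
    have hw'mem : w' ∈ C := by
      apply hball
      rw [mem_closedBall, Complex.dist_eq]
      have e1 : w' - p = (y - p - (lam:ℂ) * (z - p)) / ((1:ℂ) - lam) := by
        rw [hw'_def]; ring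
      rw [e1, norm_div]
      have e2 : ‖(1:ℂ) - lam‖ = 1 - lam := by
        have : (1:ℂ) - lam = ((1 - lam : ℝ) : ℂ) := by push_cast; ring
        rw [this, Complex.norm_real, Real.norm_eq_abs, abs_of_pos h1lam]
      rw [e2, div_le_iff₀ h1lam]
      have e3 : y - p - (lam:ℂ) * (z - p) = w + (y - x₁) := by
        rw [hw_def]; ring
      calc ‖y - p - (lam:ℂ) * (z - p)‖
          ≤ ‖w‖ + ‖y - x₁‖ := by
            rw [e3]; exact norm_add_le _ _
        _ ≤ ‖w‖ + ε := by linarith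
        _ = (1 - lam) * r := by rw [hε_def]; ring
        _ = r * (1 - lam) := by ring
    have hy_comb : y = (1 - lam) • w' + lam • z := by
      rw [hw'_def]
      rw [Complex.real_smul, Complex.real_smul]
      push_cast
      field_simp
      ring
    rw [hy_comb]
    exact hC.2.1 hw'mem hz (by linarith) hlam0.le (by ring)
  have hint : x₁ ∈ interior C :=
    mem_interior.2 ⟨ball x₁ ε, hsub, isOpen_ball, mem_ball_self hεpos⟩
  exact hx₁.2 hint


lemma sector_image (k : ℕ) (p x₁ : ℂ) (i : ℕ) :
    standardSector k p x₁ i = (fun z => p + (om k)^i * (z - p)) '' standardSector k p x₁ 0 := by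
  ext z
  constructor
  · rintro ⟨t, θ, ht, hθ0, hθ1, hz⟩
    refine ⟨p + (t:ℂ) * Complex.exp ((θ:ℂ) * Complex.I) * (x₁ - p), ⟨t, θ, ht, hθ0, hθ1, by simp⟩, ?_⟩
    rw [hz, rot_iter]
    ring
  · rintro ⟨w, ⟨t, θ, ht, hθ0, hθ1, hw⟩, hz⟩
    refine ⟨t, θ, ht, hθ0, hθ1, ?_⟩
    simp only [Function.iterate_zero_apply] at hw
    rw [← hz, hw, rot_iter]
    ring

lemma rot_isometry (k : ℕ) (hk : 3 ≤ k) (p : ℂ) (i : ℕ) :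
    Isometry (fun z => p + (om k)^i * (z - p)) := by
  apply Isometry.of_dist_eq
  intro x y
  rw [Complex.dist_eq, Complex.dist_eq]
  have : p + (om k)^i * (x - p) - (p + (om k)^i * (y - p)) = (om k)^i * (x - y) := by ring
  rw [this, norm_mul, om_pow_abs k hk, one_mul]

lemma rot_injective (k : ℕ) (p : ℂ) (i : ℕ) :
    Function.Injective (fun z : ℂ => p + (om k)^i * (z - p)) := by
  intro x y h
  simp only at h
  have hne : (om k)^i ≠ 0 := pow_ne_zero _ (om_ne_zero k)
  have h2 : (om k)^i * (x - p) = (om k)^i * (y - p) := by linear_combination h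
  have := mul_left_cancel₀ hne h2
  linear_combination this

lemma diam_piece_eq (hC : IsRotSymConvexBody k p C) (hk : 3 ≤ k) (x₁ : ℂ) (i : ℕ) :
    Metric.diam (C ∩ standardSector k p x₁ i) = Metric.diam (C ∩ standardSector k p x₁ 0) := by
  have hCrot : (fun z => p + (om k)^i * (z - p)) '' C = C := by
    have him : ∀ j, (planeRotation k p)^[j] '' C = C := by
      intro j
      induction j with
      | zero => simp
      | succ n ih => rw [Function.iterate_succ', Set.image_comp, ih, hC.2.2.2]
    have : (fun z => p + (om k)^i * (z - p)) = (planeRotation k p)^[i] := by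
      funext z
      rw [rot_iter]
    rw [this]
    exact him i
  have h1 : C ∩ standardSector k p x₁ i
      = (fun z => p + (om k)^i * (z - p)) '' (C ∩ standardSector k p x₁ 0) := by
    rw [Set.image_inter (rot_injective k p i), hCrot, ← sector_image]
  rw [h1]
  exact (rot_isometry k hk p i).diam_image _

lemma om_pow_exp (k : ℕ) (hk : 3 ≤ k) (j : ℕ) :
    (om k)^j = Complex.exp (((j * (2 * Real.pi / k) : ℝ) : ℂ) * Complex.I) := by
  rw [om_eq k hk, ← Complex.exp_nat_mul]
  congr 1
  push_cast
  ring

lemma exists_rot_mem_sector0 (k : ℕ) (hk : 3 ≤ k) (p x₁ : ℂ) (hx : x₁ ≠ p) (q : ℂ) :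
    ∃ j : ℕ, p + (om k)^j * (q - p) ∈ standardSector k p x₁ 0 := by
  have hpi := Real.pi_pos
  have hk0 : (0:ℝ) < k := by exact_mod_cast (by omega : 0 < k)
  rcases eq_or_ne q p with rfl | hq
  · exact ⟨0, 0, 0, le_refl _, le_refl _, by positivity, by simp⟩
  set u := (q - p) / (x₁ - p) with hu_def
  have hx' : x₁ - p ≠ 0 := sub_ne_zero.2 hx
  have hq' : q - p ≠ 0 := sub_ne_zero.2 hq
  have hu0 : u ≠ 0 := div_ne_zero hq' hx'
  set α := Complex.arg u with hα_def
  have hα1 : α ≤ Real.pi := Complex.arg_le_pi u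
  have hα2 : -Real.pi < α := Complex.neg_pi_lt_arg u
  set α' := if 0 ≤ α then α else α + 2 * Real.pi with hα'_def
  have hα'0 : 0 ≤ α' := by
    rw [hα'_def]; split_ifs with h
    · exact h
    · push_neg at h; linarith
  have hα'2 : α' < 2 * Real.pi := by
    rw [hα'_def]; split_ifs with h
    · linarith
    · push_neg at h; linarith
  set f := Nat.floor (α' * k / (2 * Real.pi)) with hf_def
  have hfle : (f:ℝ) ≤ α' * k / (2 * Real.pi) := Nat.floor_le (by positivity)
  have hflt : α' * k / (2 * Real.pi) < (f:ℝ) + 1 := Nat.lt_floor_add_one _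
  have hfk : f < k := by
    rw [hf_def]
    apply (Nat.floor_lt (by positivity)).2
    rw [div_lt_iff₀ (by positivity)]
    nlinarith
  set θ := α' - 2 * Real.pi * f / k with hθ_def
  have hθ0 : 0 ≤ θ := by
    rw [hθ_def, sub_nonneg, div_le_iff₀ hk0]
    calc 2 * Real.pi * f = (f:ℝ) * (2 * Real.pi) := by ring
      _ ≤ (α' * k / (2 * Real.pi)) * (2 * Real.pi) := by
          apply mul_le_mul_of_nonneg_right hfle (by positivity)
      _ = α' * k := by field_simp
  have hθ1 : θ ≤ 2 * Real.pi / k := by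
    rw [hθ_def, sub_le_iff_le_add, ← add_div, le_div_iff₀ hk0]
    rw [div_lt_iff₀ (by positivity)] at hflt
    nlinarith
  refine ⟨k - f, ‖u‖, θ, norm_nonneg u, hθ0, hθ1, ?_⟩
  simp only [Function.iterate_zero_apply]
  congr 1
  set x := ((k - f : ℕ) : ℝ) * (2 * Real.pi / k) with hx_def
  have hxval : x = 2 * Real.pi - 2 * Real.pi * f / k := by
    rw [hx_def, Nat.cast_sub hfk.le]
    field_simp
  have hxα : x + α = θ + 2 * Real.pi ∨ x + α = θ := by
    rw [hθ_def, hxval, hα'_def]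
    split_ifs with h
    · left; ring
    · right; ring
  have hexp : Complex.exp ((x:ℂ) * Complex.I) * Complex.exp ((α:ℂ) * Complex.I)
      = Complex.exp ((θ:ℂ) * Complex.I) := by
    rw [← Complex.exp_add]
    have e0 : (x:ℂ) * Complex.I + (α:ℂ) * Complex.I = ((x + α : ℝ) : ℂ) * Complex.I := by
      push_cast; ring
    rw [e0]
    rcases hxα with h | h
    · rw [h]
      have e1 : ((θ + 2*Real.pi : ℝ) : ℂ) * Complex.I
          = (θ:ℂ) * Complex.I + 2 * (Real.pi:ℂ) * Complex.I := by push_cast; ring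
      rw [e1, Complex.exp_add, Complex.exp_two_pi_mul_I, mul_one]
    · rw [h]
  have hu : (q - p) = u * (x₁ - p) := by
    rw [hu_def, div_mul_cancel₀ _ hx']
  have huarg : ((‖u‖ : ℝ) : ℂ) * Complex.exp ((α:ℂ) * Complex.I) = u :=
    Complex.norm_mul_exp_arg_mul_I u
  rw [hu, om_pow_exp k hk, ← hx_def]
  calc Complex.exp ((x:ℂ) * Complex.I) * (u * (x₁ - p))
      = Complex.exp ((x:ℂ) * Complex.I) *
        (((‖u‖ : ℝ) : ℂ) * Complex.exp ((α:ℂ) * Complex.I) * (x₁ - p)) := by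
        rw [huarg]
    _ = ((‖u‖ : ℝ) : ℂ) *
        (Complex.exp ((x:ℂ) * Complex.I) * Complex.exp ((α:ℂ) * Complex.I)) * (x₁ - p) := by
        ring
    _ = ((‖u‖ : ℝ) : ℂ) * Complex.exp ((θ:ℂ) * Complex.I) * (x₁ - p) := by
        rw [hexp]

-- cast of core with the ordered-pair reduction
end body

section main
variable {k : ℕ} {p : ℂ} {C : Set ℂ} {x₁ : ℂ}

lemma sector0_point_data (hC : IsRotSymConvexBody k p C) (hk : 3 ≤ k)
    (hx₁ : x₁ ∈ frontier C) (hxr : ‖x₁ - p‖ = inradius C)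
    {y : ℂ} (hy : y ∈ C ∩ standardSector k p x₁ 0) :
    ∃ t θ : ℝ, 0 ≤ t ∧ 0 ≤ θ ∧ θ ≤ 2 * Real.pi / k ∧
      y = p + (t : ℂ) * Complex.exp ((θ : ℂ) * Complex.I) * (x₁ - p) ∧
      t * inradius C ≤ circumradius C ∧
      (t * inradius C) * Real.cos θ ≤ inradius C ∧
      (t * inradius C) * Real.cos (2 * Real.pi / k - θ) ≤ inradius C := by
  obtain ⟨hrpos, hball⟩ := inradius_facts hC hk
  obtain ⟨hsubR, -⟩ := circumradius_facts hC hk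
  set r := inradius C with hr_def
  obtain ⟨hyC, t, θ, ht, hθ0, hθ1, hyeq⟩ := hy
  simp only [Function.iterate_zero_apply] at hyeq
  refine ⟨t, θ, ht, hθ0, hθ1, hyeq, ?_, ?_, ?_⟩
  · -- t * r ≤ R
    have h := hsubR hyC
    rw [mem_closedBall, Complex.dist_eq, hyeq] at h
    have e1 : p + (t : ℂ) * Complex.exp ((θ : ℂ) * Complex.I) * (x₁ - p) - p
        = (t : ℂ) * Complex.exp ((θ : ℂ) * Complex.I) * (x₁ - p) := by ring
    rw [e1, norm_mul, norm_mul, Complex.norm_real, Real.norm_eq_abs, abs_of_nonneg ht,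
      Complex.norm_exp_ofReal_mul_I, mul_one, hxr] at h
    exact h
  · -- slab 1
    have h := support_halfplane hC hk hx₁ hxr y hyC
    rw [hyeq] at h
    have e1 : (p + (t : ℂ) * Complex.exp ((θ : ℂ) * Complex.I) * (x₁ - p) - p)
        * (starRingEnd ℂ) (x₁ - p)
        = ((t * r^2 : ℝ) : ℂ) * Complex.exp ((θ : ℂ) * Complex.I) := by
      have e2 : (x₁ - p) * (starRingEnd ℂ) (x₁ - p) = ((Complex.normSq (x₁ - p) : ℝ) : ℂ) :=
        Complex.mul_conj _
      have e3 : Complex.normSq (x₁ - p) = r^2 := by rw [← Complex.sq_norm, hxr]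
      calc (p + (t : ℂ) * Complex.exp ((θ : ℂ) * Complex.I) * (x₁ - p) - p)
          * (starRingEnd ℂ) (x₁ - p)
          = (t : ℂ) * Complex.exp ((θ : ℂ) * Complex.I)
            * ((x₁ - p) * (starRingEnd ℂ) (x₁ - p)) := by ring
        _ = (t : ℂ) * Complex.exp ((θ : ℂ) * Complex.I) * ((r^2 : ℝ) : ℂ) := by rw [e2, e3]
        _ = ((t * r^2 : ℝ) : ℂ) * Complex.exp ((θ : ℂ) * Complex.I) := by push_cast; ring
    rw [e1, Complex.re_ofReal_mul, Complex.exp_ofReal_mul_I_re] at h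
    -- h : t * r^2 * cos θ ≤ r^2
    have := mul_le_mul_of_nonneg_right (le_refl r) hrpos.le  -- dummy
    nlinarith [h]
  · -- slab 2 (rotated support line)
    have hsup2 : ((y - p) * (starRingEnd ℂ) (om k * (x₁ - p))).re ≤ r^2 := by
      have hz' := mem_rot hC hk (k-1) hyC
      have h := support_halfplane hC hk hx₁ hxr _ hz'
      have hconj : (starRingEnd ℂ) (om k) = (om k)^(k-1) := by
        have h1 : om k * (starRingEnd ℂ) (om k) = 1 := by
          rw [Complex.mul_conj]
          have : Complex.normSq (om k) = 1 := by
            rw [← Complex.sq_norm, om_abs k hk]; norm_num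
          rw [this]; norm_num
        have h2 : om k * (om k)^(k-1) = 1 := by
          rw [← pow_succ']
          have : k - 1 + 1 = k := by omega
          rw [this, om_pow_k k hk]
        exact mul_left_cancel₀ (om_ne_zero k) (h1.trans h2.symm)
      have e1 : (p + (om k)^(k-1) * (y - p) - p) * (starRingEnd ℂ) (x₁ - p)
          = (y - p) * (starRingEnd ℂ) (om k * (x₁ - p)) := by
        rw [map_mul, hconj]
        ring
      rwa [e1] at h
    rw [hyeq] at hsup2
    set β := 2 * Real.pi / k with hβ_def
    have homβ : om k = Complex.exp (((β : ℝ) : ℂ) * Complex.I) := om_eq k hk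
    have e1 : (p + (t : ℂ) * Complex.exp ((θ : ℂ) * Complex.I) * (x₁ - p) - p)
        * (starRingEnd ℂ) (om k * (x₁ - p))
        = ((t * r^2 : ℝ) : ℂ) * Complex.exp (((θ - β : ℝ) : ℂ) * Complex.I) := by
      rw [map_mul, homβ, ← Complex.exp_conj]
      have e2 : (starRingEnd ℂ) (((β : ℝ) : ℂ) * Complex.I) = -(((β : ℝ) : ℂ) * Complex.I) := by
        simp
      rw [e2]
      have e3 : (x₁ - p) * (starRingEnd ℂ) (x₁ - p) = ((Complex.normSq (x₁ - p) : ℝ) : ℂ) :=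
        Complex.mul_conj _
      have e4 : Complex.normSq (x₁ - p) = r^2 := by rw [← Complex.sq_norm, hxr]
      have e5 : Complex.exp ((θ:ℂ) * Complex.I) * Complex.exp (-(((β : ℝ) : ℂ) * Complex.I))
          = Complex.exp (((θ - β : ℝ) : ℂ) * Complex.I) := by
        rw [← Complex.exp_add]
        congr 1
        push_cast
        ring
      calc (p + (t : ℂ) * Complex.exp ((θ : ℂ) * Complex.I) * (x₁ - p) - p)
          * (Complex.exp (-(((β : ℝ) : ℂ) * Complex.I)) * (starRingEnd ℂ) (x₁ - p))
          = (t : ℂ) * (Complex.exp ((θ:ℂ) * Complex.I) * Complex.exp (-(((β : ℝ) : ℂ) * Complex.I)))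
            * ((x₁ - p) * (starRingEnd ℂ) (x₁ - p)) := by ring
        _ = (t : ℂ) * Complex.exp (((θ - β : ℝ) : ℂ) * Complex.I) * ((r^2 : ℝ) : ℂ) := by
            rw [e5, e3, e4]
        _ = ((t * r^2 : ℝ) : ℂ) * Complex.exp (((θ - β : ℝ) : ℂ) * Complex.I) := by
            push_cast; ring
    rw [e1, Complex.re_ofReal_mul, Complex.exp_ofReal_mul_I_re] at hsup2
    -- hsup2 : t * r^2 * cos (θ - β) ≤ r^2
    have hcos : Real.cos (θ - β) = Real.cos (β - θ) := by
      rw [← Real.cos_neg]; congr 1; ring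
    rw [hcos] at hsup2
    nlinarith [hsup2]

end main

section main2
variable {k : ℕ} {p : ℂ} {C : Set ℂ} {x₁ : ℂ}

lemma dist_sector_sq (p x₁ : ℂ) (t₁ t₂ θ₁ θ₂ r : ℝ) (hxr : ‖x₁ - p‖ = r) :
    (dist (p + (t₁ : ℂ) * Complex.exp ((θ₁ : ℂ) * Complex.I) * (x₁ - p))
      (p + (t₂ : ℂ) * Complex.exp ((θ₂ : ℂ) * Complex.I) * (x₁ - p)))^2
    = (t₁*r)^2 + (t₂*r)^2 - 2*(t₁*r)*(t₂*r)*Real.cos (θ₁ - θ₂) := by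
  rw [Complex.dist_eq, Complex.sq_norm]
  have e0 : p + (t₁ : ℂ) * Complex.exp ((θ₁ : ℂ) * Complex.I) * (x₁ - p)
      - (p + (t₂ : ℂ) * Complex.exp ((θ₂ : ℂ) * Complex.I) * (x₁ - p))
      = ((t₁ : ℂ) * Complex.exp ((θ₁ : ℂ) * Complex.I)
        - (t₂ : ℂ) * Complex.exp ((θ₂ : ℂ) * Complex.I)) * (x₁ - p) := by ring
  rw [e0, Complex.normSq_mul]
  have er : Complex.normSq (x₁ - p) = r^2 := by rw [← Complex.sq_norm, hxr]
  rw [er, Complex.normSq_sub]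
  have e1 : Complex.normSq ((t₁ : ℂ) * Complex.exp ((θ₁ : ℂ) * Complex.I)) = t₁^2 := by
    rw [Complex.normSq_mul, Complex.normSq_ofReal, ← Complex.sq_norm,
      Complex.norm_exp_ofReal_mul_I]
    norm_num
    ring
  have e2 : Complex.normSq ((t₂ : ℂ) * Complex.exp ((θ₂ : ℂ) * Complex.I)) = t₂^2 := by
    rw [Complex.normSq_mul, Complex.normSq_ofReal, ← Complex.sq_norm,
      Complex.norm_exp_ofReal_mul_I]
    norm_num
    ring
  have e3 : (((t₁ : ℂ) * Complex.exp ((θ₁ : ℂ) * Complex.I))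
      * (starRingEnd ℂ) ((t₂ : ℂ) * Complex.exp ((θ₂ : ℂ) * Complex.I))).re
      = t₁ * t₂ * Real.cos (θ₁ - θ₂) := by
    rw [map_mul, Complex.conj_ofReal, ← Complex.exp_conj]
    have : (starRingEnd ℂ) ((θ₂:ℂ) * Complex.I) = -((θ₂:ℂ) * Complex.I) := by simp
    rw [this]
    have e4 : (t₁ : ℂ) * Complex.exp ((θ₁:ℂ) * Complex.I)
        * ((t₂:ℂ) * Complex.exp (-((θ₂:ℂ) * Complex.I)))
        = ((t₁ * t₂ : ℝ) : ℂ) * Complex.exp (((θ₁ - θ₂ : ℝ) : ℂ) * Complex.I) := by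
      have h5 : Complex.exp ((θ₁:ℂ) * Complex.I) * Complex.exp (-((θ₂:ℂ) * Complex.I))
          = Complex.exp (((θ₁ - θ₂ : ℝ) : ℂ) * Complex.I) := by
        rw [← Complex.exp_add]
        congr 1
        push_cast
        ring
      calc (t₁ : ℂ) * Complex.exp ((θ₁:ℂ) * Complex.I)
          * ((t₂:ℂ) * Complex.exp (-((θ₂:ℂ) * Complex.I)))
          = ((t₁:ℂ) * (t₂:ℂ)) * (Complex.exp ((θ₁:ℂ) * Complex.I)
            * Complex.exp (-((θ₂:ℂ) * Complex.I))) := by ring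
        _ = ((t₁ * t₂ : ℝ) : ℂ) * Complex.exp (((θ₁ - θ₂ : ℝ) : ℂ) * Complex.I) := by
            rw [h5]; push_cast; ring
    rw [e4, Complex.re_ofReal_mul, Complex.exp_ofReal_mul_I_re]
  rw [e1, e2, e3]
  ring

end main2


end Aux

/-- The subsets of the standard `k`-partition of a `k`-rotationally symmetric planar
convex body (the intersections of `C` with the `k` closed angular sectors with apex `p`
determined by the `k`-symmetric images of a boundary point `x₁` closest to `p`)
all have diameter equal to `max {R, 2 r sin(π/k)}`; in particular this is the value of
the maximum relative diameter of the standard `k`-partition. -/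

theorem diam_standardPartition_piece
    (k : ℕ) (hk : 3 ≤ k) (p : ℂ) (C : Set ℂ) (hC : IsRotSymConvexBody k p C)
    (x₁ : ℂ) (hx₁ : x₁ ∈ frontier C) (hx₁dist : dist p x₁ = inradius C) :
    ∀ i < k, Metric.diam (C ∩ standardSector k p x₁ i) =
      max (circumradius C) (2 * inradius C * Real.sin (Real.pi / k)) := by
  intro i _
  have hpi := Real.pi_pos
  have hk3 : (3:ℝ) ≤ k := by exact_mod_cast hk
  have hk0 : (0:ℝ) < k := by linarith
  obtain ⟨hrpos, hball⟩ := inradius_facts hC hk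
  obtain ⟨hsubR, q, hqC, hqR⟩ := circumradius_facts hC hk
  set r := inradius C with hr_def
  set R := circumradius C with hR_def
  have hx₁r : ‖x₁ - p‖ = r := by
    rw [← hx₁dist, Complex.dist_eq]
    have e : x₁ - p = -(p - x₁) := by ring
    rw [e, norm_neg]
  have hx₁C : x₁ ∈ C := by
    have h := hx₁.1
    rwa [hC.1.isClosed.closure_eq] at h
  have hx₁p : x₁ ≠ p := by
    intro h
    rw [h] at hx₁r
    simp at hx₁r
    linarith
  have hrR : r ≤ R := by
    have h1 : p + (r:ℂ) ∈ C := by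
      apply hball
      rw [mem_closedBall, Complex.dist_eq]
      have e : p + (r:ℂ) - p = (r:ℂ) := by ring
      rw [e, Complex.norm_real, Real.norm_eq_abs, abs_of_nonneg hrpos.le]
    have h2 := hsubR h1
    rw [mem_closedBall, Complex.dist_eq] at h2
    have e : p + (r:ℂ) - p = (r:ℂ) := by ring
    rwa [e, Complex.norm_real, Real.norm_eq_abs, abs_of_nonneg hrpos.le] at h2
  have hR0 : 0 < R := lt_of_lt_of_le hrpos hrR
  set β := 2 * Real.pi / (k:ℝ) with hβ_def
  have hβ0 : 0 < β := by positivity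
  have hβu : β ≤ 2 * Real.pi / 3 := by
    rw [hβ_def]
    exact div_le_div_of_nonneg_left (by linarith) (by norm_num) hk3
  have hβhalf : β / 2 = Real.pi / k := by
    rw [hβ_def]
    field_simp
  have hsink : 0 ≤ Real.sin (Real.pi / k) := by
    apply Real.sin_nonneg_of_nonneg_of_le_pi (by positivity)
    rw [div_le_iff₀ hk0]
    nlinarith
  set M := max R (2 * r * Real.sin (Real.pi / k)) with hM_def
  have hM0 : 0 ≤ M := le_trans hR0.le (le_max_left _ _)
  have hMsq : ∀ d : ℝ, 0 ≤ d → d^2 ≤ max (R^2) (2*r^2*(1 - Real.cos β)) → d ≤ M := by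
    intro d hd hdsq
    have h2 : 2*r^2*(1 - Real.cos β) = (2*r*Real.sin (Real.pi/k))^2 := by
      rw [← hβhalf]
      have hs : Real.sin (β/2)^2 = 1/2 - Real.cos (2*(β/2))/2 := Real.sin_sq_eq_half_sub (β/2)
      rw [show 2*(β/2) = β from by ring] at hs
      linear_combination (-4*r^2) * hs
    rw [h2] at hdsq
    have hdM : d^2 ≤ M^2 := by
      rcases max_cases (R^2) ((2*r*Real.sin (Real.pi/k))^2) with ⟨he,_⟩|⟨he,_⟩ <;>
          rw [he] at hdsq
      · exact hdsq.trans (pow_le_pow_left₀ hR0.le (le_max_left _ _) 2)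
      · exact hdsq.trans (pow_le_pow_left₀ (by positivity) (le_max_right _ _) 2)
    have h3 := Real.sqrt_le_sqrt hdM
    rwa [Real.sqrt_sq hd, Real.sqrt_sq hM0] at h3
  -- upper bound
  have hub : Metric.diam (C ∩ standardSector k p x₁ 0) ≤ M := by
    apply Metric.diam_le_of_forall_dist_le hM0
    intro y hy z hz
    obtain ⟨t₁, θ₁, ht₁, hθ₁0, hθ₁1, hyeq, hs₁R, hs₁1, hs₁2⟩ :=
      sector0_point_data hC hk hx₁ hx₁r hy
    obtain ⟨t₂, θ₂, ht₂, hθ₂0, hθ₂1, hzeq, hs₂R, hs₂1, hs₂2⟩ :=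
      sector0_point_data hC hk hx₁ hx₁r hz
    set s₁ := t₁ * r with hs₁_def
    set s₂ := t₂ * r with hs₂_def
    have hs₁0 : 0 ≤ s₁ := mul_nonneg ht₁ hrpos.le
    have hs₂0 : 0 ≤ s₂ := mul_nonneg ht₂ hrpos.le
    have hdsq : (dist y z)^2 = s₁^2 + s₂^2 - 2*s₁*s₂*Real.cos (θ₁ - θ₂) := by
      rw [hyeq, hzeq]
      exact dist_sector_sq p x₁ t₁ t₂ θ₁ θ₂ r hx₁r
    apply hMsq _ dist_nonneg
    rw [hdsq]
    have hcos_even : Real.cos (θ₁ - θ₂) = Real.cos (θ₂ - θ₁) := by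
      rw [← Real.cos_neg]; congr 1; ring
    rcases le_total θ₁ θ₂ with hord | hord
    · rcases le_total (θ₂ - θ₁) (Real.pi/3) with hsmall | hbig
      · have hcosge : 1/2 ≤ Real.cos (θ₂ - θ₁) := by
          have h := Real.cos_le_cos_of_nonneg_of_le_pi (by linarith) (by linarith)
            hsmall
          rwa [Real.cos_pi_div_three] at h
        refine le_max_of_le_left ?_
        rw [hcos_even]
        nlinarith [mul_le_mul_of_nonneg_left hcosge (mul_nonneg hs₁0 hs₂0),
          mul_nonneg (sub_nonneg.2 hs₁R) (sub_nonneg.2 hs₂R),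
          mul_nonneg hs₁0 (sub_nonneg.2 hs₂R),
          mul_nonneg hs₂0 (sub_nonneg.2 hs₁R)]
      · have hcore := core β r R θ₁ (β - θ₂) s₁ s₂ hrpos hrR hβu hθ₁0
          (by linarith) (by linarith) hs₁0 hs₂0 hs₁R hs₂R hs₁1 hs₂2
        have harg : β - θ₁ - (β - θ₂) = θ₂ - θ₁ := by ring
        rw [harg] at hcore
        rw [hcos_even]
        exact hcore
    · rcases le_total (θ₁ - θ₂) (Real.pi/3) with hsmall | hbig
      · have hcosge : 1/2 ≤ Real.cos (θ₁ - θ₂) := by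
          have h := Real.cos_le_cos_of_nonneg_of_le_pi (by linarith) (by linarith)
            hsmall
          rwa [Real.cos_pi_div_three] at h
        refine le_max_of_le_left ?_
        nlinarith [mul_le_mul_of_nonneg_left hcosge (mul_nonneg hs₁0 hs₂0),
          mul_nonneg (sub_nonneg.2 hs₁R) (sub_nonneg.2 hs₂R),
          mul_nonneg hs₁0 (sub_nonneg.2 hs₂R),
          mul_nonneg hs₂0 (sub_nonneg.2 hs₁R)]
      · have hcore := core β r R θ₂ (β - θ₁) s₂ s₁ hrpos hrR hβu hθ₂0
          (by linarith) (by linarith) hs₂0 hs₁0 hs₂R hs₁R hs₂1 hs₁2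
        have harg : β - θ₂ - (β - θ₁) = θ₁ - θ₂ := by ring
        rw [harg] at hcore
        calc s₁^2 + s₂^2 - 2*s₁*s₂*Real.cos (θ₁ - θ₂)
            = s₂^2 + s₁^2 - 2*s₂*s₁*Real.cos (θ₁ - θ₂) := by ring
          _ ≤ max (R^2) (2*r^2*(1 - Real.cos β)) := hcore
  -- lower bound
  have hbd : Bornology.IsBounded (C ∩ standardSector k p x₁ 0) :=
    hC.1.isBounded.subset Set.inter_subset_left
  have hpmem : p ∈ C ∩ standardSector k p x₁ 0 := by
    refine ⟨hball (mem_closedBall_self hrpos.le), 0, 0, le_refl _, le_refl _, by positivity, ?_⟩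
    simp
  have hx₂C : p + om k * (x₁ - p) ∈ C := by
    have h := mem_rot hC hk 1 hx₁C
    rwa [pow_one] at h
  have hx₁S : x₁ ∈ C ∩ standardSector k p x₁ 0 := by
    refine ⟨hx₁C, 1, 0, zero_le_one, le_refl _, by positivity, ?_⟩
    simp
  have hx₂S : p + om k * (x₁ - p) ∈ C ∩ standardSector k p x₁ 0 := by
    refine ⟨hx₂C, 1, β, zero_le_one, hβ0.le, le_refl _, ?_⟩
    simp only [Function.iterate_zero_apply]
    rw [om_eq k hk, ← hβ_def]
    simp
  obtain ⟨j, hjS⟩ := exists_rot_mem_sector0 k hk p x₁ hx₁p q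
  have hq'C : p + (om k)^j * (q - p) ∈ C := mem_rot hC hk j hqC
  have hq'dist : dist p (p + (om k)^j * (q - p)) = R := by
    rw [Complex.dist_eq]
    have e : p - (p + (om k)^j * (q - p)) = -((om k)^j * (q - p)) := by ring
    rw [e, norm_neg, norm_mul, om_pow_abs k hk, one_mul]
    rw [← hqR, Complex.dist_eq, norm_sub_rev]
  have hlb1 : R ≤ Metric.diam (C ∩ standardSector k p x₁ 0) := by
    rw [← hq'dist]
    exact Metric.dist_le_diam_of_mem hbd hpmem ⟨hq'C, hjS⟩
  have hlb2 : 2*r*Real.sin (Real.pi/k) ≤ Metric.diam (C ∩ standardSector k p x₁ 0) := by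
    have habs : ‖om k - 1‖ = 2*Real.sin (Real.pi/k) := by
      have h1 : (om k - 1).re = Real.cos β - 1 := by
        rw [om_eq k hk, ← hβ_def]
        simp [Complex.exp_ofReal_mul_I_re]
      have h2 : (om k - 1).im = Real.sin β := by
        rw [om_eq k hk, ← hβ_def]
        simp [Complex.exp_ofReal_mul_I_im]
      rw [Complex.norm_def, Complex.normSq_apply, h1, h2]
      rw [← hβhalf]
      have hs : Real.sin (β/2)^2 = 1/2 - Real.cos (2*(β/2))/2 := Real.sin_sq_eq_half_sub (β/2)
      rw [show 2*(β/2) = β from by ring] at hs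
      rw [show (Real.cos β - 1)*(Real.cos β - 1) + Real.sin β * Real.sin β
          = (2*Real.sin (β/2))^2 from by
        nlinarith [Real.sin_sq_add_cos_sq β, hs]]
      apply Real.sqrt_sq
      rw [hβhalf]
      positivity
    have hd : dist x₁ (p + om k * (x₁ - p)) = 2*r*Real.sin (Real.pi/k) := by
      rw [Complex.dist_eq]
      have e : x₁ - (p + om k * (x₁ - p)) = -((om k - 1) * (x₁ - p)) := by ring
      rw [e, norm_neg, norm_mul, habs, hx₁r]
      ring
    rw [← hd]
    exact Metric.dist_le_diam_of_mem hbd hx₁S hx₂S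
  rw [diam_piece_eq hC hk x₁ i]
  exact le_antisymm hub (max_le hlb1 hlb2)
end

section
/- Let k ≥ 3 be an integer, let C be a k-rotationally symmetric planar convex body with circumradius R, and let P be a k-partition of C, i.e. connected subsets C₁, …, C_k of C whose union is C, whose interiors are pairwise disjoint, and which all contain a common point c lying in the interior of C. Then the maximum relative diameter satisfies d_M(P) = max_{1≤i≤k} diam(C_i) ≥ R. -/
open Metric Set

/-- A `k`-subdivision of `C`: `k` connected subsets of `C` covering `C`,
with pairwise disjoint interiors. -/
def IsSubdivision (C : Set ℂ) (k : ℕ) (P : Fin k → Set ℂ) : Prop :=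
  (∀ i, P i ⊆ C) ∧ (∀ i, IsConnected (P i)) ∧ (⋃ i, P i) = C ∧
    ∀ i j, i ≠ j → interior (P i) ∩ interior (P j) = ∅

/-- A `k`-partition of `C`: a `k`-subdivision all of whose pieces share a common
point `c` lying in the interior of `C`. -/
def IsPartition (C : Set ℂ) (k : ℕ) (P : Fin k → Set ℂ) (c : ℂ) : Prop :=
  IsSubdivision C k P ∧ c ∈ interior C ∧ ∀ i, c ∈ P i

/-- If the real inner product of `w` with `u` is nonpositive, then `|u| ≤ |w - u|`. -/
lemma aux_abs_le_abs_sub {u w : ℂ} (h : (w * (starRingEnd ℂ) u).re ≤ 0) :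
    ‖u‖ ≤ ‖w - u‖ := by
  rw [Complex.norm_def, Complex.norm_def]
  apply Real.sqrt_le_sqrt
  have := Complex.normSq_sub w u
  have h0 : 0 ≤ Complex.normSq w := Complex.normSq_nonneg w
  nlinarith

/-- For `k ≥ 3`, some rotated copy `p + ω^m v` of `p + v` is at distance at least
`|v|` from any given point `c`. -/
lemma aux_exists_far_rotated (k : ℕ) (hk : 3 ≤ k) (p v c : ℂ) :
    ∃ m : ℕ, ‖v‖ ≤
      dist c (p + Complex.exp (2 * (Real.pi : ℂ) * Complex.I / (k : ℂ)) ^ m * v) := by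
  set ω : ℂ := Complex.exp (2 * (Real.pi : ℂ) * Complex.I / (k : ℂ)) with hω
  have hprim : IsPrimitiveRoot ω k := Complex.isPrimitiveRoot_exp k (by omega)
  have hsum : ∑ m ∈ Finset.range k, ω ^ m = 0 := hprim.geom_sum_eq_zero (by omega)
  -- the sum of the inner products is zero
  have hsum2 : ∑ m ∈ Finset.range k,
      ((c - p) * (starRingEnd ℂ) (ω ^ m * v)).re = 0 := by
    have : ∑ m ∈ Finset.range k, ((c - p) * (starRingEnd ℂ) (ω ^ m * v)) =
        (c - p) * (starRingEnd ℂ) v * (starRingEnd ℂ) (∑ m ∈ Finset.range k, ω ^ m) := by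
      rw [map_sum, Finset.mul_sum]
      refine Finset.sum_congr rfl fun m _ => ?_
      rw [map_mul]; ring
    calc ∑ m ∈ Finset.range k, ((c - p) * (starRingEnd ℂ) (ω ^ m * v)).re
        = (∑ m ∈ Finset.range k, ((c - p) * (starRingEnd ℂ) (ω ^ m * v))).re := by
          rw [Complex.re_sum]
      _ = 0 := by rw [this, hsum, map_zero, mul_zero, Complex.zero_re]
  -- hence some inner product is nonpositive
  have hex : ∃ m ∈ Finset.range k, ((c - p) * (starRingEnd ℂ) (ω ^ m * v)).re ≤ 0 := by
    by_contra hcon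
    push_neg at hcon
    have : 0 < ∑ m ∈ Finset.range k, ((c - p) * (starRingEnd ℂ) (ω ^ m * v)).re :=
      Finset.sum_pos (fun m hm => hcon m hm) ⟨0, Finset.mem_range.2 (by omega)⟩
    linarith
  obtain ⟨m, _, hm⟩ := hex
  refine ⟨m, ?_⟩
  have habs : ‖ω ^ m * v‖ = ‖v‖ := by
    rw [norm_mul, norm_pow, hω, Complex.norm_exp]
    have : (2 * (Real.pi : ℂ) * Complex.I / (k : ℂ)).re = 0 := by
      simp [Complex.div_re]
    rw [this, Real.exp_zero, one_pow, one_mul]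
  calc ‖v‖ = ‖ω ^ m * v‖ := habs.symm
    _ ≤ ‖(c - p) - ω ^ m * v‖ := aux_abs_le_abs_sub hm
    _ = dist c (p + ω ^ m * v) := by rw [Complex.dist_eq]; ring_nf
  
/-- For any `k`-partition (`k ≥ 3`) of a `k`-rotationally symmetric planar convex
body, the maximum relative diameter is at least the circumradius. -/
theorem circumradius_le_maxRelDiam_partition
    (k : ℕ) (hk : 3 ≤ k) (p : ℂ) (C : Set ℂ) (hC : IsRotSymConvexBody k p C)
    (P : Fin k → Set ℂ) (c : ℂ) (hP : IsPartition C k P c) :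
    circumradius C ≤ ⨆ i, Metric.diam (P i) := by
  obtain ⟨hcomp, -, hint, hrot⟩ := hC
  have hCne : C.Nonempty := hint.mono interior_subset
  -- farthest point from p
  obtain ⟨x, hxC, hxmax⟩ :=
    hcomp.exists_isMaxOn hCne (Continuous.continuousOn (by continuity :
      Continuous fun z : ℂ => dist z p))
  set R₀ : ℝ := dist x p with hR₀
  have hsub : C ⊆ closedBall p R₀ := fun z hz => mem_closedBall.2 (hxmax hz)
  -- circumradius ≤ R₀
  have h1 : circumradius C ≤ R₀ := by
    apply csInf_le
    · refine ⟨0, fun R hR => ?_⟩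
      obtain ⟨c', hc'⟩ := hR
      obtain ⟨z, hz⟩ := hCne
      exact le_trans dist_nonneg (mem_closedBall.1 (hc' hz))
    · exact ⟨p, hsub⟩
  set ω : ℂ := Complex.exp (2 * (Real.pi : ℂ) * Complex.I / (k : ℂ)) with hω
  -- rotated copies of x stay in C
  have hrotmem : ∀ m : ℕ, p + ω ^ m * (x - p) ∈ C := by
    intro m
    induction m with
    | zero => simpa using hxC
    | succ n ih =>
      have : planeRotation k p (p + ω ^ n * (x - p)) ∈ C := by
        rw [← hrot]; exact mem_image_of_mem _ ih
      have heq : planeRotation k p (p + ω ^ n * (x - p)) = p + ω ^ (n + 1) * (x - p) := by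
        unfold planeRotation
        rw [← hω]; ring
      rwa [heq] at this
  -- some rotated copy is far from c
  obtain ⟨m, hm⟩ := aux_exists_far_rotated k hk p (x - p) c
  rw [← hω] at hm
  have hRm : R₀ ≤ dist c (p + ω ^ m * (x - p)) := by
    calc R₀ = ‖x - p‖ := Complex.dist_eq x p
      _ ≤ _ := hm
  -- the rotated copy lies in some piece
  have hmem : p + ω ^ m * (x - p) ∈ ⋃ i, P i := hP.1.2.2.1 ▸ hrotmem m
  obtain ⟨i, hi⟩ := mem_iUnion.1 hmem
  have hbd : Bornology.IsBounded (P i) := hcomp.isBounded.subset (hP.1.1 i)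
  have h2 : dist c (p + ω ^ m * (x - p)) ≤ Metric.diam (P i) :=
    Metric.dist_le_diam_of_mem hbd (hP.2.2 i) hi
  have h3 : Metric.diam (P i) ≤ ⨆ j, Metric.diam (P j) :=
    le_ciSup (f := fun j => Metric.diam (P j)) (Finite.bddAbove_range _) i
  linarith
end

section
/- Let k be an integer with 3 ≤ k ≤ 6, let C be a k-rotationally symmetric planar convex body with circumradius R, and let S be a k-subdivision of C, i.e. connected subsets C₁, …, C_k of C whose union is C and whose interiors are pairwise disjoint. Then the maximum relative diameter satisfies d_M(S) = max_{1≤i≤k} diam(C_i) ≥ R. -/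
open Metric Set

lemma cos_le_half_aux {θ : ℝ} (h1 : Real.pi / 3 ≤ θ) (h2 : θ ≤ 5 * Real.pi / 3) :
    Real.cos θ ≤ 1 / 2 := by
  have hπ := Real.pi_pos
  rcases le_total θ Real.pi with h | h
  · calc Real.cos θ ≤ Real.cos (Real.pi / 3) :=
        Real.cos_le_cos_of_nonneg_of_le_pi (by positivity) h h1
      _ = 1 / 2 := Real.cos_pi_div_three
  · have heq : Real.cos θ = Real.cos (2 * Real.pi - θ) := by
      rw [Real.cos_two_pi_sub]
    rw [heq]
    calc Real.cos (2 * Real.pi - θ) ≤ Real.cos (Real.pi / 3) :=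
        Real.cos_le_cos_of_nonneg_of_le_pi (by positivity) (by linarith) (by linarith)
      _ = 1 / 2 := Real.cos_pi_div_three

lemma one_le_abs_exp_sub_one {θ : ℝ} (h1 : Real.pi / 3 ≤ θ) (h2 : θ ≤ 5 * Real.pi / 3) :
    1 ≤ ‖Complex.exp (θ * Complex.I) - 1‖ := by
  have hcos := cos_le_half_aux h1 h2
  have hz : Complex.exp ((θ : ℂ) * Complex.I) - 1 =
      ((Real.cos θ - 1 : ℝ) : ℂ) + ((Real.sin θ : ℝ) : ℂ) * Complex.I := by
    rw [Complex.exp_mul_I, ← Complex.ofReal_cos, ← Complex.ofReal_sin]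
    push_cast
    ring
  rw [hz, Complex.norm_def, Complex.normSq_add_mul_I]
  have hsq := Real.sin_sq_add_cos_sq θ
  have h1' : (1 : ℝ) ≤ (Real.cos θ - 1) ^ 2 + Real.sin θ ^ 2 := by nlinarith
  calc (1 : ℝ) = Real.sqrt 1 := (Real.sqrt_one).symm
    _ ≤ _ := Real.sqrt_le_sqrt h1'

lemma one_le_abs_pow_sub_one {k d : ℕ} (hk : 3 ≤ k) (hk' : k ≤ 6)
    (hd1 : 1 ≤ d) (hdk : d < k) :
    1 ≤ ‖(Complex.exp (2 * (Real.pi : ℂ) * Complex.I / (k : ℂ))) ^ d - 1‖ := by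
  have hk0 : (0 : ℝ) < k := by positivity
  have hkC : (k : ℂ) ≠ 0 := by exact_mod_cast (by positivity : (0:ℝ) < k).ne'
  have hπ := Real.pi_pos
  have heq : (Complex.exp (2 * (Real.pi : ℂ) * Complex.I / (k : ℂ))) ^ d =
      Complex.exp (((2 * Real.pi * d / k : ℝ) : ℂ) * Complex.I) := by
    rw [← Complex.exp_nat_mul]
    congr 1
    push_cast
    field_simp
  rw [heq]
  have hd1' : (1 : ℝ) ≤ d := by exact_mod_cast hd1
  have hdk' : (d : ℝ) + 1 ≤ k := by exact_mod_cast hdk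
  have hk6 : (k : ℝ) ≤ 6 := by exact_mod_cast hk'
  apply one_le_abs_exp_sub_one
  · rw [le_div_iff₀ hk0]; nlinarith
  · rw [div_le_iff₀ hk0]; nlinarith

/-- For any `k`-subdivision with `3 ≤ k ≤ 6` of a `k`-rotationally symmetric planar
convex body, the maximum relative diameter is at least the circumradius. -/
theorem circumradius_le_maxRelDiam_subdivision
    (k : ℕ) (hk : 3 ≤ k) (hk' : k ≤ 6) (p : ℂ) (C : Set ℂ)
    (hC : IsRotSymConvexBody k p C)
    (S : Fin k → Set ℂ) (hS : IsSubdivision C k S) :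
    circumradius C ≤ ⨆ i, Metric.diam (S i) := by
  obtain ⟨hcomp, hconv, hint, hrot⟩ := hC
  set ω : ℂ := Complex.exp (2 * (Real.pi : ℂ) * Complex.I / (k : ℂ)) with hω
  have hk0 : k ≠ 0 := by omega
  have hkC : (k : ℂ) ≠ 0 := by exact_mod_cast (Nat.cast_ne_zero (R := ℂ)).2 hk0
  have hprim : IsPrimitiveRoot ω k := Complex.isPrimitiveRoot_exp k hk0
  have hCne : C.Nonempty := hint.mono interior_subset
  obtain ⟨x, hxC, hxmax⟩ := hcomp.exists_isMaxOn (f := fun z => dist z p) hCne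
    (Continuous.continuousOn (by fun_prop))
  set r : ℝ := dist x p with hr
  have hrotC : ∀ z ∈ C, planeRotation k p z ∈ C := fun z hz => hrot ▸ mem_image_of_mem _ hz
  -- the rotated copies of x
  have hpt : ∀ j : ℕ, p + ω ^ j * (x - p) ∈ C := by
    intro j
    induction j with
    | zero =>
        have : p + ω ^ 0 * (x - p) = x := by rw [pow_zero]; ring
        rw [this]; exact hxC
    | succ n ih =>
        have heq : planeRotation k p (p + ω ^ n * (x - p)) = p + ω ^ (n + 1) * (x - p) := by
          simp only [planeRotation, ← hω]; ring
        rw [← heq]; exact hrotC _ ih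
  -- sum of roots of unity vanishes
  have hsum0 : ∑ j ∈ Finset.range k, ω ^ j = 0 := by
    have h1 : ω ≠ 1 := hprim.ne_one (by omega)
    have hk1 : ω ^ k = 1 := hprim.pow_eq_one
    rw [geom_sum_eq h1, hk1, sub_self, zero_div]
  -- the center belongs to C
  have hpC : p ∈ C := by
    have hmem := hconv.sum_mem (t := Finset.range k) (w := fun _ => (k : ℝ)⁻¹)
      (z := fun j => p + ω ^ j * (x - p)) (fun i _ => by positivity)
      (by
        rw [Finset.sum_const, Finset.card_range, nsmul_eq_mul]
        exact mul_inv_cancel₀ (by exact_mod_cast (Nat.cast_ne_zero (R := ℝ)).2 hk0))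
      (fun j _ => hpt j)
    have hsum : ∑ j ∈ Finset.range k, (k : ℝ)⁻¹ • (p + ω ^ j * (x - p)) = p := by
      rw [← Finset.smul_sum]
      have hinner : ∑ j ∈ Finset.range k, (p + ω ^ j * (x - p)) = (k : ℂ) * p := by
        rw [Finset.sum_add_distrib, Finset.sum_const, Finset.card_range, ← Finset.sum_mul,
          hsum0, zero_mul, add_zero, nsmul_eq_mul]
      rw [hinner, Complex.real_smul]
      push_cast
      rw [← mul_assoc, inv_mul_cancel₀ hkC, one_mul]
    rwa [hsum] at hmem
  -- norms
  have habsω : ∀ j : ℕ, ‖ω ^ j‖ = 1 := by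
    intro j
    rw [norm_pow]
    have h1 : (2 * (Real.pi : ℂ) * Complex.I / (k : ℂ)) =
        ((2 * Real.pi / k : ℝ) : ℂ) * Complex.I := by push_cast; ring
    rw [hω, h1, Complex.norm_exp_ofReal_mul_I, one_pow]
  have hrabs : r = ‖x - p‖ := by rw [hr, Complex.dist_eq]
  -- the family of k+1 points: the k rotated copies of x, plus the center p
  set pts : Fin (k + 1) → ℂ :=
    fun j => if (j : ℕ) = k then p else p + ω ^ (j : ℕ) * (x - p) with hpts
  have hptsC : ∀ j, pts j ∈ C := by
    intro j
    by_cases h : (j : ℕ) = k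
    · simpa [hpts, h] using hpC
    · simpa [hpts, h] using hpt (j : ℕ)
  -- distance from p to a rotated copy
  have hdp : ∀ m : ℕ, dist p (p + ω ^ m * (x - p)) = r := by
    intro m
    rw [Complex.dist_eq, hrabs]
    have : p - (p + ω ^ m * (x - p)) = -(ω ^ m * (x - p)) := by ring
    rw [this, norm_neg, norm_mul, habsω, one_mul]
  -- distance between two distinct rotated copies
  have hdd : ∀ m n : ℕ, m < n → n < k → r ≤ dist (p + ω ^ m * (x - p)) (p + ω ^ n * (x - p)) := by
    intro m n hmn hnk
    rw [Complex.dist_eq, hrabs]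
    have hfac : p + ω ^ m * (x - p) - (p + ω ^ n * (x - p)) =
        -(ω ^ m * ((ω ^ (n - m) - 1) * (x - p))) := by
      have : ω ^ m * ω ^ (n - m) = ω ^ n := by
        rw [← pow_add]; congr 1; omega
      calc p + ω ^ m * (x - p) - (p + ω ^ n * (x - p))
          = -((ω ^ m * ω ^ (n - m)) * (x - p)) + ω ^ m * (x - p) := by rw [this]; ring
        _ = -(ω ^ m * ((ω ^ (n - m) - 1) * (x - p))) := by ring
    rw [hfac, norm_neg, norm_mul, habsω, one_mul, norm_mul]
    have hge : 1 ≤ ‖ω ^ (n - m) - 1‖ :=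
      one_le_abs_pow_sub_one hk hk' (by omega) (by omega)
    calc ‖x - p‖ = 1 * ‖x - p‖ := (one_mul _).symm
      _ ≤ ‖ω ^ (n - m) - 1‖ * ‖x - p‖ :=
          mul_le_mul_of_nonneg_right hge (norm_nonneg _)
  -- any two distinct points of the family are at distance at least r
  have hdist : ∀ i j : Fin (k + 1), i ≠ j → r ≤ dist (pts i) (pts j) := by
    intro i j hij
    have hvij : (i : ℕ) ≠ (j : ℕ) := fun h => hij (Fin.ext h)
    by_cases hi : (i : ℕ) = k <;> by_cases hj : (j : ℕ) = k
    · exact absurd (hi.trans hj.symm) hvij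
    · have e1 : pts i = p := by simp [hpts, hi]
      have e2 : pts j = p + ω ^ (j : ℕ) * (x - p) := by simp [hpts, hj]
      rw [e1, e2]; exact (hdp _).ge
    · have e1 : pts i = p + ω ^ (i : ℕ) * (x - p) := by simp [hpts, hi]
      have e2 : pts j = p := by simp [hpts, hj]
      rw [e1, e2, dist_comm]; exact (hdp _).ge
    · have e1 : pts i = p + ω ^ (i : ℕ) * (x - p) := by simp [hpts, hi]
      have e2 : pts j = p + ω ^ (j : ℕ) * (x - p) := by simp [hpts, hj]
      rw [e1, e2]
      have hik : (i : ℕ) < k := by omega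
      have hjk : (j : ℕ) < k := by omega
      rcases lt_or_gt_of_ne hvij with h | h
      · exact hdd _ _ h hjk
      · rw [dist_comm]; exact hdd _ _ h hik
  -- pigeonhole: some piece contains two of the k+1 points
  have hcov : ∀ j : Fin (k + 1), ∃ i : Fin k, pts j ∈ S i := by
    intro j
    have h := hptsC j
    rw [← hS.2.2.1] at h
    exact mem_iUnion.1 h
  choose f hf using hcov
  obtain ⟨a, b, hab, hfab⟩ := Fintype.exists_ne_map_eq_of_card_lt f (by simp)
  have hbound : Bornology.IsBounded C := hcomp.isBounded
  have hrle : r ≤ Metric.diam (S (f a)) := by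
    refine le_trans (hdist a b hab) ?_
    exact Metric.dist_le_diam_of_mem (hbound.subset (hS.1 (f a))) (hf a) (hfab ▸ hf b)
  have hle2 : Metric.diam (S (f a)) ≤ ⨆ i, Metric.diam (S i) := by
    apply le_ciSup (f := fun i => Metric.diam (S i))
    exact ⟨Metric.diam C, by rintro y ⟨i, rfl⟩; exact Metric.diam_mono (hS.1 i) hbound⟩
  have hcirc : circumradius C ≤ r := by
    apply csInf_le
    · exact ⟨0, fun R hR => by
        obtain ⟨c, hc⟩ := hR
        exact dist_nonneg.trans (hc hxC)⟩
    · exact ⟨p, fun y hy => mem_closedBall.2 (hxmax hy)⟩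
  linarith
end

section
/- Let k ≥ 3 be an integer, let C be a k-rotationally symmetric planar convex body with inradius r, and let S be a k-subdivision of C, i.e. connected subsets C₁, …, C_k of C whose union is C and whose interiors are pairwise disjoint. Then the maximum relative diameter satisfies d_M(S) = max_{1≤i≤k} diam(C_i) ≥ 2·r·sin(π/k). -/
open Metric Set

/-- Chord length formula. -/
lemma chord_formula (α β : ℝ) :
    ‖Complex.exp (α * Complex.I) - Complex.exp (β * Complex.I)‖
      = 2 * |Real.sin ((α - β) / 2)| := by
  have hre : (Complex.exp (α * Complex.I) - Complex.exp (β * Complex.I)).re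
      = Real.cos α - Real.cos β := by
    simp [Complex.sub_re, Complex.exp_ofReal_mul_I_re]
  have him : (Complex.exp (α * Complex.I) - Complex.exp (β * Complex.I)).im
      = Real.sin α - Real.sin β := by
    simp [Complex.sub_im, Complex.exp_ofReal_mul_I_im]
  rw [Complex.norm_def, Complex.normSq_apply, hre, him]
  have h1 : Real.cos (α - β) = Real.cos α * Real.cos β + Real.sin α * Real.sin β :=
    Real.cos_sub α β
  have h2 : Real.sin ((α - β) / 2) ^ 2 = (1 - Real.cos (α - β)) / 2 := by
    have hc := Real.cos_sq ((α - β) / 2)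
    rw [show 2 * ((α - β) / 2) = α - β by ring] at hc
    have h3 := Real.sin_sq_add_cos_sq ((α - β) / 2)
    nlinarith
  have h4 := Real.sin_sq_add_cos_sq α
  have h5 := Real.sin_sq_add_cos_sq β
  have key : (Real.cos α - Real.cos β) * (Real.cos α - Real.cos β)
      + (Real.sin α - Real.sin β) * (Real.sin α - Real.sin β)
      = (2 * |Real.sin ((α - β) / 2)|) ^ 2 := by
    have habs : |Real.sin ((α - β) / 2)| ^ 2 = Real.sin ((α - β) / 2) ^ 2 := sq_abs _
    nlinarith
  rw [key, Real.sqrt_sq (by positivity)]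

/-- Discrete arc lemma: a subset of `range N` with pairwise circular distance at most `d`
(with `3d < N`) has at most `d+1` elements. -/
lemma arc_lemma (N d : ℕ) (h3 : 3 * d < N) (J : Finset ℕ)
    (hJN : ∀ a ∈ J, a < N)
    (hpair : ∀ a ∈ J, ∀ b ∈ J, a ≤ b → min (b - a) (N - (b - a)) ≤ d) :
    J.card ≤ d + 1 := by
  rcases J.eq_empty_or_nonempty with rfl | hne
  · simp
  set a₀ := J.min' hne with ha₀
  have ha₀J : a₀ ∈ J := J.min'_mem hne
  set f : ℕ → ℤ := fun b => if (b : ℤ) ≤ (a₀ : ℤ) + d then (b : ℤ) else (b : ℤ) - N with hf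
  -- window
  have hwin : ∀ b ∈ J, (a₀ : ℤ) - d ≤ f b ∧ f b ≤ (a₀ : ℤ) + d := by
    intro b hb
    have hab : a₀ ≤ b := J.min'_le b hb
    have hbN : b < N := hJN b hb
    by_cases hcase : (b : ℤ) ≤ (a₀ : ℤ) + d
    · simp only [hf, if_pos hcase]
      constructor
      · omega
      · exact hcase
    · simp only [hf, if_neg hcase]
      push_neg at hcase
      have hp := hpair a₀ ha₀J b hb hab
      have hv : d < b - a₀ := by omega
      have hNv : N - (b - a₀) ≤ d := by omega
      omega
  -- pairwise
  have hpf : ∀ b ∈ J, ∀ c ∈ J, c ≤ b → f b - f c ≤ d ∧ f c - f b ≤ d := by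
    intro b hb c hc hcb
    have hab : a₀ ≤ c := J.min'_le c hc
    have hbN : b < N := hJN b hb
    have hcN : c < N := hJN c hc
    have hwb := hwin b hb
    have hwc := hwin c hc
    have hp := hpair c hc b hb hcb
    by_cases h1 : (b : ℤ) ≤ (a₀ : ℤ) + d
    · -- then c ≤ b ≤ a₀ + d, both if-true
      have h2 : (c : ℤ) ≤ (a₀ : ℤ) + d := by omega
      simp only [hf, if_pos h1, if_pos h2]
      omega
    · by_cases h2 : (c : ℤ) ≤ (a₀ : ℤ) + d
      · -- f b = b - N, f c = c
        simp only [hf, if_neg h1, if_pos h2] at hwb hwc ⊢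
        -- value f c - f b = N - (b - c) ∈ (0, 2d]; use hp
        omega
      · simp only [hf, if_neg h1, if_neg h2] at hwb hwc ⊢
        omega
  -- injectivity and cardinality
  have hinj : Set.InjOn f J := by
    intro b hb c hc hfe
    have hbN : b < N := hJN b hb
    have hcN : c < N := hJN c hc
    simp only [hf] at hfe
    split_ifs at hfe <;> omega
  have hcard : J.card = (J.image f).card := (Finset.card_image_of_injOn hinj).symm
  have hneim : (J.image f).Nonempty := hne.image f
  set m := (J.image f).min' hneim with hm
  obtain ⟨b₀, hb₀J, hb₀⟩ := Finset.mem_image.1 ((J.image f).min'_mem hneim)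
  have hsub : J.image f ⊆ Finset.Icc m (m + d) := by
    intro y hy
    obtain ⟨b, hbJ, rfl⟩ := Finset.mem_image.1 hy
    have h1 : m ≤ f b := (J.image f).min'_le _ hy
    have h2 : f b - f b₀ ≤ d := by
      rcases le_total b₀ b with h | h
      · exact (hpf b hbJ b₀ hb₀J h).1
      · exact (hpf b₀ hb₀J b hbJ h).2
    rw [Finset.mem_Icc]
    omega
  calc J.card = (J.image f).card := hcard
    _ ≤ (Finset.Icc m (m + d)).card := Finset.card_le_card hsub
    _ = d + 1 := by rw [Int.card_Icc]; omega

set_option maxHeartbeats 2000000 in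
/-- For any `k`-subdivision (`k ≥ 3`) of a `k`-rotationally symmetric planar convex
body with inradius `r`, the maximum relative diameter is at least `2·r·sin(π/k)`. -/
theorem inradius_bound_le_maxRelDiam_subdivision
    (k : ℕ) (hk : 3 ≤ k) (p : ℂ) (C : Set ℂ) (hC : IsRotSymConvexBody k p C)
    (S : Fin k → Set ℂ) (hS : IsSubdivision C k S) :
    2 * inradius C * Real.sin (Real.pi / k) ≤ ⨆ i, Metric.diam (S i) := by
  classical
  obtain ⟨hcomp, -, -, -⟩ := hC
  obtain ⟨hsub, -, hcover, -⟩ := hS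
  have hkpos : 0 < k := by omega
  have hπ := Real.pi_pos
  have hkR : (3:ℝ) ≤ (k:ℝ) := by exact_mod_cast hk
  have hkR0 : (0:ℝ) < (k:ℝ) := by linarith
  have hπk : (0:ℝ) < Real.pi / k := by positivity
  have hπk3 : Real.pi / k ≤ Real.pi / 3 := by
    apply div_le_div_of_nonneg_left hπ.le (by norm_num) hkR
  have hs : 0 < Real.sin (Real.pi / k) :=
    Real.sin_pos_of_pos_of_lt_pi hπk (lt_of_le_of_lt hπk3 (by linarith))
  set X := ⨆ i, Metric.diam (S i) with hX
  have hbdd : BddAbove (Set.range fun i => Metric.diam (S i)) := (Set.finite_range _).bddAbove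
  have hdiam_le : ∀ i, Metric.diam (S i) ≤ X := fun i => le_ciSup hbdd i
  have hXnn : 0 ≤ X := le_trans Metric.diam_nonneg (hdiam_le ⟨0, hkpos⟩)
  clear_value X
  suffices h : inradius C ≤ X / (2 * Real.sin (Real.pi / k)) by
    have h2 : (0:ℝ) < 2 * Real.sin (Real.pi / k) := by positivity
    have h3 : 2 * inradius C * Real.sin (Real.pi / k)
        ≤ 2 * (X / (2 * Real.sin (Real.pi / k))) * Real.sin (Real.pi / k) := by
      have := mul_le_mul_of_nonneg_right (mul_le_mul_of_nonneg_left h (by norm_num : (0:ℝ) ≤ 2)) hs.le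
      linarith
    calc 2 * inradius C * Real.sin (Real.pi / k)
        ≤ 2 * (X / (2 * Real.sin (Real.pi / k))) * Real.sin (Real.pi / k) := h3
      _ = X := by field_simp
  apply Real.sSup_le _ (by positivity)
  rintro r ⟨c, hball⟩
  rcases le_or_gt r 0 with h0 | h0
  · exact h0.trans (by positivity)
  by_contra hcon
  push_neg at hcon
  rw [div_lt_iff₀ (by positivity)] at hcon
  -- hcon : X < r * (2 * sin (π/k))
  set q := X / (2 * r) with hq
  have hq0 : 0 ≤ q := by positivity
  have hqs : q < Real.sin (Real.pi / k) := by
    rw [hq, div_lt_iff₀ (by positivity)]; linarith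
  have hq1 : q ≤ 1 := hqs.le.trans (Real.sin_le_one _)
  clear_value q
  set δ := 2 * Real.arcsin q with hδ
  clear_value δ
  have hδ0 : 0 ≤ δ := by
    have := Real.arcsin_nonneg.2 hq0; linarith [hδ]
  have harc : Real.arcsin q < Real.pi / k := by
    have h1 : Real.arcsin q < Real.arcsin (Real.sin (Real.pi / k)) := by
      apply Real.strictMonoOn_arcsin ⟨by linarith, hq1⟩
        ⟨by linarith [Real.neg_one_le_sin (Real.pi / k)], Real.sin_le_one _⟩ hqs
    rwa [Real.arcsin_sin (by linarith) (by linarith)] at h1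
  have hδk : δ * k < 2 * Real.pi := by
    rw [hδ]
    have := (lt_div_iff₀ hkR0).mp harc
    nlinarith
  have hδ3 : 3 * δ < 2 * Real.pi := by nlinarith [mul_nonneg hδ0 (by linarith : (0:ℝ) ≤ (k:ℝ) - 3)]
  -- choose N
  have hden : (0:ℝ) < 2 * Real.pi - k * δ := by nlinarith [hδk]
  obtain ⟨N, hN⟩ := exists_nat_gt (2 * Real.pi * k / (2 * Real.pi - k * δ))
  have hNR : (0:ℝ) < (N:ℝ) := lt_of_le_of_lt (by positivity) hN
  have hNpos : 0 < N := by exact_mod_cast hNR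
  have hNbig : 2 * Real.pi * k < N * (2 * Real.pi - k * δ) := by
    rw [div_lt_iff₀ hden] at hN; linarith
  -- grid
  set g : ℝ → ℂ := fun θ => c + (r:ℂ) * Complex.exp ((θ:ℂ) * Complex.I) with hg
  clear_value g
  have hgball : ∀ θ : ℝ, g θ ∈ C := by
    intro θ
    apply hball
    rw [Metric.mem_closedBall, hg]
    beta_reduce
    simp only [Complex.dist_eq, add_sub_cancel_left, norm_mul, Complex.norm_real, Real.norm_eq_abs,
      Complex.norm_exp_ofReal_mul_I, mul_one, abs_of_pos h0, le_refl]
  -- key estimate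
  have key6 : ∀ (i : Fin k) (θ ψ : ℝ), g θ ∈ S i → g ψ ∈ S i → |θ - ψ| ≤ Real.pi →
      |θ - ψ| ≤ δ := by
    intro i θ ψ hθ hψ hle
    have hd : dist (g θ) (g ψ) ≤ X :=
      le_trans (Metric.dist_le_diam_of_mem (hcomp.isBounded.subset (hsub i)) hθ hψ)
        (hdiam_le i)
    have hdist : dist (g θ) (g ψ) = 2 * r * |Real.sin ((θ - ψ) / 2)| := by
      rw [hg]
      beta_reduce
      simp only [Complex.dist_eq]
      have heq : (c + (r:ℂ) * Complex.exp ((θ:ℂ) * Complex.I))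
          - (c + (r:ℂ) * Complex.exp ((ψ:ℂ) * Complex.I))
          = (r:ℂ) * (Complex.exp ((θ:ℂ) * Complex.I) - Complex.exp ((ψ:ℂ) * Complex.I)) := by
        ring
      rw [heq, norm_mul, Complex.norm_real, Real.norm_eq_abs, chord_formula, abs_of_pos h0]
      ring
    have habs : |Real.sin ((θ - ψ) / 2)| = Real.sin (|θ - ψ| / 2) := by
      rcases abs_cases (θ - ψ) with ⟨h1, h2⟩ | ⟨h1, h2⟩
      · rw [h1, abs_of_nonneg (Real.sin_nonneg_of_nonneg_of_le_pi (by linarith) (by linarith))]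
      · rw [h1, show -(θ - ψ) / 2 = -((θ - ψ) / 2) by ring, Real.sin_neg,
          abs_of_nonpos (Real.sin_nonpos_of_nonpos_of_neg_pi_le (by linarith) (by linarith))]
    have hsin : Real.sin (|θ - ψ| / 2) ≤ q := by
      rw [hq, le_div_iff₀ (by positivity)]
      rw [hdist, habs] at hd
      linarith
    have harcle : |θ - ψ| / 2 ≤ Real.arcsin q := by
      have h1 : |θ - ψ| / 2 = Real.arcsin (Real.sin (|θ - ψ| / 2)) :=
        (Real.arcsin_sin (by have := abs_nonneg (θ - ψ); linarith) (by linarith [abs_nonneg (θ - ψ)])).symm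
      rw [h1]
      exact Real.monotone_arcsin hsin
    rw [hδ]; linarith
  -- grid points and counting
  set θf : ℕ → ℝ := fun j => 2 * Real.pi * j / N with hθf
  clear_value θf
  set d : ℕ := ⌊δ * N / (2 * Real.pi)⌋₊ with hd
  have hdle : (d:ℝ) ≤ δ * N / (2 * Real.pi) := Nat.floor_le (by positivity)
  clear_value d
  have hdle2 : (d:ℝ) * (2 * Real.pi) ≤ δ * N := by
    rw [← le_div_iff₀ (by positivity)]; exact hdle
  have h3d : 3 * d < N := by
    have h2π : (0:ℝ) < 2 * Real.pi := by positivity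
    have hx := mul_lt_mul_of_pos_right hδ3 hNR
    have h1 : (3:ℝ) * d * (2 * Real.pi) < N * (2 * Real.pi) := by nlinarith [hdle2]
    have h1' : (3:ℝ) * d < N := by
      have := (mul_lt_mul_iff_left₀ h2π).mp h1
      linarith
    exact_mod_cast h1'
  have hkd : k * (d + 1) < N := by
    have h2π : (0:ℝ) < 2 * Real.pi := by positivity
    have hm := mul_le_mul_of_nonneg_left hdle2 (le_of_lt hkR0)
    have h1 : (k:ℝ) * ((d:ℝ) + 1) * (2 * Real.pi) < N * (2 * Real.pi) := by ring_nf at hm hNbig ⊢; linarith [hm, hNbig]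
    have h1' : (k:ℝ) * ((d:ℝ) + 1) < N := (mul_lt_mul_iff_left₀ h2π).mp h1
    have h2 : ((k * (d+1) : ℕ) : ℝ) < (N:ℝ) := by push_cast; linarith
    exact_mod_cast h2
  set J : Fin k → Finset ℕ := fun i => (Finset.range N).filter (fun j => g (θf j) ∈ S i)
    with hJ
  clear_value J
  have hcover' : ∀ j ∈ Finset.range N, ∃ i : Fin k, j ∈ J i := by
    intro j hj
    have h1 : g (θf j) ∈ ⋃ i, S i := by rw [hcover]; exact hgball (θf j)
    obtain ⟨i, hi⟩ := Set.mem_iUnion.1 h1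
    refine ⟨i, ?_⟩
    rw [hJ]
    beta_reduce
    exact Finset.mem_filter.2 ⟨hj, hi⟩
  have hper : ∀ θ : ℝ, g (θ - 2 * Real.pi) = g θ := by
    intro θ
    have hc : ((θ - 2 * Real.pi : ℝ) : ℂ) * Complex.I
        = (θ:ℂ) * Complex.I - 2 * (Real.pi:ℂ) * Complex.I := by push_cast; ring
    rw [hg]
    beta_reduce
    rw [hc, Complex.exp_sub, Complex.exp_two_pi_mul_I, div_one]
  have hcards : ∀ i, (J i).card ≤ d + 1 := by
    intro i
    apply arc_lemma N d h3d
    · intro a ha; rw [hJ] at ha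
      simp only [Finset.mem_filter, Finset.mem_range] at ha
      exact ha.1
    · intro a ha b hb hab
      rw [hJ] at ha hb
      simp only [Finset.mem_filter, Finset.mem_range] at ha hb
      have hga : g (θf a) ∈ S i := ha.2
      have hgb : g (θf b) ∈ S i := hb.2
      have haN : a < N := ha.1
      have hbN : b < N := hb.1
      have hvcast : ((b - a : ℕ) : ℝ) = (b:ℝ) - (a:ℝ) := by
        push_cast [Nat.cast_sub hab]; ring
      rcases le_or_gt (2 * (b - a)) N with hcase | hcase
      · have hcaseR : 2 * ((b:ℝ) - a) ≤ N := by
          rw [← hvcast]; exact_mod_cast hcase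
        have hdiff : θf b - θf a = 2 * Real.pi * ((b:ℝ) - a) / N := by
          rw [hθf]; beta_reduce; field_simp
        have habnn : (0:ℝ) ≤ (b:ℝ) - a := by
          have : (a:ℝ) ≤ b := by exact_mod_cast hab
          linarith
        have hpi : |θf b - θf a| ≤ Real.pi := by
          rw [hdiff, abs_of_nonneg (by positivity)]
          rw [div_le_iff₀ hNR]
          linarith [mul_le_mul_of_nonneg_left hcaseR hπ.le]
        have h6 := key6 i _ _ hgb hga hpi
        rw [hdiff, abs_of_nonneg (by positivity)] at h6
        have h7 : (b:ℝ) - a ≤ δ * N / (2 * Real.pi) := by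
          rw [div_le_iff₀ hNR] at h6
          rw [le_div_iff₀ (by positivity)]
          linarith
        have h8 : b - a ≤ d := by rw [hd]; exact Nat.le_floor (by rw [hvcast]; exact h7)
        omega
      · -- wraparound case
        have hgb' : g (θf b - 2 * Real.pi) ∈ S i := by rw [hper]; exact hgb
        have hvcast2 : ((N - (b - a) : ℕ) : ℝ) = (N:ℝ) - ((b:ℝ) - a) := by
          have h1 : b - a ≤ N := by omega
          push_cast [Nat.cast_sub h1, Nat.cast_sub hab]; ring
        have hdiff : θf a - (θf b - 2 * Real.pi) = 2 * Real.pi * ((N:ℝ) - ((b:ℝ) - a)) / N := by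
          rw [hθf]; beta_reduce; field_simp; ring
        have hcaseR : (N:ℝ) < 2 * ((b:ℝ) - a) := by
          rw [← hvcast]; exact_mod_cast hcase
        have hwnn : (0:ℝ) ≤ (N:ℝ) - ((b:ℝ) - a) := by
          have : (b:ℝ) ≤ N := by exact_mod_cast hbN.le
          have : (0:ℝ) ≤ (a:ℝ) := by positivity
          linarith
        have hpi : |θf a - (θf b - 2 * Real.pi)| ≤ Real.pi := by
          rw [hdiff, abs_of_nonneg (by positivity)]
          rw [div_le_iff₀ hNR]
          have hlin : 2 * ((N:ℝ) - ((b:ℝ) - a)) ≤ N := by linarith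
          linarith [mul_le_mul_of_nonneg_left hlin hπ.le]
        have h6 := key6 i _ _ hga hgb' hpi
        rw [hdiff, abs_of_nonneg (by positivity)] at h6
        have h7 : (N:ℝ) - ((b:ℝ) - a) ≤ δ * N / (2 * Real.pi) := by
          rw [div_le_iff₀ hNR] at h6
          rw [le_div_iff₀ (by positivity)]
          linarith
        have h8 : N - (b - a) ≤ d := by rw [hd]; exact Nat.le_floor (by rw [hvcast2]; exact h7)
        omega
  have hNle : N ≤ k * (d + 1) := by
    calc N = (Finset.range N).card := (Finset.card_range N).symm
      _ ≤ (Finset.biUnion Finset.univ J).card := by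
          apply Finset.card_le_card
          intro j hj
          obtain ⟨i, hi⟩ := hcover' j hj
          exact Finset.mem_biUnion.2 ⟨i, Finset.mem_univ i, hi⟩
      _ ≤ ∑ i, (J i).card := Finset.card_biUnion_le
      _ ≤ ∑ _i : Fin k, (d + 1) := Finset.sum_le_sum (fun i _ => hcards i)
      _ = k * (d + 1) := by simp [Finset.sum_const, Finset.card_univ]
  omega
end

section
/- Let k ≥ 3 be an integer, let C be a k-rotationally symmetric planar convex body with inradius r and circumradius R, and let P be any k-partition of C, i.e. connected subsets C₁, …, C_k of C whose union is C, whose interiors are pairwise disjoint, and which all contain a common point c ∈ int(C). Then the maximum relative diameter of P is at least that of the standard k-partition: d_M(P) = max_{1≤i≤k} diam(C_i) ≥ max{R, 2·r·sin(π/k)} = d_M(P_k). In other words, the standard k-partition is a minimizing k-partition for the maximum relative diameter. -/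
open Metric Set

private lemma abs_exp_sub_exp' (a b : ℝ) :
    ‖Complex.exp ((a:ℂ) * Complex.I) - Complex.exp ((b:ℂ) * Complex.I)‖ =
      2 * |Real.sin ((a - b) / 2)| := by
  have h2 : Complex.exp ((a:ℂ) * Complex.I) - Complex.exp ((b:ℂ) * Complex.I) =
      ((Real.cos a - Real.cos b : ℝ) : ℂ) + ((Real.sin a - Real.sin b : ℝ) : ℂ) * Complex.I := by
    rw [Complex.exp_mul_I, Complex.exp_mul_I, ← Complex.ofReal_cos, ← Complex.ofReal_sin,
      ← Complex.ofReal_cos, ← Complex.ofReal_sin]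
    push_cast
    ring
  rw [h2, Complex.norm_def, Complex.normSq_add_mul_I]
  have h6 : Real.cos (a - b) = 1 - 2 * Real.sin ((a - b) / 2) ^ 2 := by
    have h7 : a - b = 2 * ((a - b) / 2) := by ring
    rw [h7, Real.cos_two_mul', Real.cos_sq']
    ring
  have h3 : (Real.cos a - Real.cos b) ^ 2 + (Real.sin a - Real.sin b) ^ 2 =
      (2 * |Real.sin ((a - b) / 2)|) ^ 2 := by
    rw [mul_pow, sq_abs]
    nlinarith [Real.cos_sub a b, Real.sin_sq_add_cos_sq a, Real.sin_sq_add_cos_sq b, h6]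
  rw [h3, Real.sqrt_sq (by positivity)]

private lemma arc_lemma' (N d : ℤ) (hd : 0 ≤ d) (hN : 3 * d < N) (S : Finset ℤ)
    (hS : ∀ j ∈ S, 0 ≤ j ∧ j < N)
    (h : ∀ j ∈ S, ∀ j' ∈ S, ∃ v : ℤ, -d ≤ v ∧ v ≤ d ∧ N ∣ j - j' - v) :
    (S.card : ℤ) ≤ d + 1 := by
  classical
  rcases S.eq_empty_or_nonempty with rfl | hne
  · simp; omega
  obtain ⟨j0, hj0⟩ := hne
  choose! v hv1 hv2 hv3 using h
  set o : ℤ → ℤ := fun j => v j j0 with ho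
  have ho1 : ∀ j ∈ S, -d ≤ o j := fun j hj => hv1 j hj j0 hj0
  have ho2 : ∀ j ∈ S, o j ≤ d := fun j hj => hv2 j hj j0 hj0
  have ho3 : ∀ j ∈ S, N ∣ j - j0 - o j := fun j hj => hv3 j hj j0 hj0
  have hzero : ∀ w : ℤ, N ∣ w → -N < w → w < N → w = 0 := fun w h1 h2 h3 =>
    Int.eq_zero_of_abs_lt_dvd h1 (abs_lt.mpr ⟨h2, h3⟩)
  have hinj : Set.InjOn o S := by
    intro a ha b hb hab
    have d1 := ho3 a ha
    have d2 := ho3 b hb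
    have hdvd : N ∣ a - b := by
      have h' := dvd_sub d1 d2
      have he : a - j0 - o a - (b - j0 - o b) = a - b := by
        rw [show (o a : ℤ) = o b from hab]; ring
      rwa [he] at h'
    have h1 := hS a ha
    have h2 := hS b hb
    have := hzero _ hdvd (by omega) (by omega)
    omega
  have hpair : ∀ a ∈ S, ∀ b ∈ S, o a - o b ≤ d := by
    intro a ha b hb
    have d1 := ho3 a ha
    have d2 := ho3 b hb
    have d3 := hv3 a ha b hb
    have e1 := hv1 a ha b hb
    have e2 := hv2 a ha b hb
    have hdvd : N ∣ (o a - o b) - v a b := by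
      have he : (o a - o b) - v a b =
          ((b - j0 - o b) - (a - j0 - o a)) + ((a - b) - v a b) := by ring
      rw [he]
      exact dvd_add (dvd_sub d2 d1) d3
    have := hzero _ hdvd (by have := ho1 a ha; have := ho2 b hb; omega)
      (by have := ho2 a ha; have := ho1 b hb; omega)
    omega
  have hTne : (S.image o).Nonempty := ⟨o j0, Finset.mem_image_of_mem _ hj0⟩
  set m := (S.image o).min' hTne with hm
  obtain ⟨jm, hjm, hjmo⟩ := Finset.mem_image.mp ((S.image o).min'_mem hTne)
  have hsubset : S.image o ⊆ Finset.Icc m (m + d) := by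
    intro t ht
    obtain ⟨j, hj, rfl⟩ := Finset.mem_image.mp ht
    refine Finset.mem_Icc.mpr ⟨(S.image o).min'_le _ ht, ?_⟩
    have := hpair j hj jm hjm
    omega
  have hc1 : (S.image o).card = S.card := Finset.card_image_of_injOn hinj
  have hc2 := Finset.card_le_card hsubset
  rw [Int.card_Icc] at hc2
  omega

/-- The standard `k`-partition is a minimizing `k`-partition for the maximum relative
diameter: every `k`-partition (`k ≥ 3`) of a `k`-rotationally symmetric planar convex
body has maximum relative diameter at least `max {R, 2·r·sin(π/k)}`, which is the
maximum relative diameter of the standard `k`-partition. -/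
theorem standardPartition_isMinimizing_partition
    (k : ℕ) (hk : 3 ≤ k) (p : ℂ) (C : Set ℂ) (hC : IsRotSymConvexBody k p C)
    (P : Fin k → Set ℂ) (c : ℂ) (hP : IsPartition C k P c) :
    max (circumradius C) (2 * inradius C * Real.sin (Real.pi / k)) ≤
      ⨆ i, Metric.diam (P i) := by
  classical
  obtain ⟨⟨hsub, hconn, hcover, hdisj⟩, hcint, hcmem⟩ := hP
  obtain ⟨hcomp, hconv, hint, hrot⟩ := hC
  have hCne : C.Nonempty := by
    obtain ⟨x, hx⟩ := hint
    exact ⟨x, interior_subset hx⟩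
  have hCb : Bornology.IsBounded C := hcomp.isBounded
  haveI : Nonempty (Fin k) := ⟨⟨0, by omega⟩⟩
  set D := ⨆ i, Metric.diam (P i) with hD
  have hbdd : BddAbove (Set.range fun i => Metric.diam (P i)) := (Set.finite_range _).bddAbove
  have hle : ∀ i, Metric.diam (P i) ≤ D := fun i => le_ciSup hbdd i
  have hD0 : 0 ≤ D := le_trans Metric.diam_nonneg (hle (Classical.arbitrary _))
  have key : ∀ i : Fin k, ∀ x ∈ P i, ∀ y ∈ P i, dist x y ≤ D := fun i x hx y hy =>
    (Metric.dist_le_diam_of_mem (hCb.subset (hsub i)) hx hy).trans (hle i)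
  have hmem : ∀ x ∈ C, ∃ i, x ∈ P i := by
    intro x hx
    rw [← hcover] at hx
    simpa using hx
  -- branch 1
  have b1 : circumradius C ≤ D := by
    have hsub' : C ⊆ closedBall c D := by
      intro x hx
      obtain ⟨i, hi⟩ := hmem x hx
      exact mem_closedBall.mpr (key i x hi c (hcmem i))
    refine csInf_le ⟨0, ?_⟩ ⟨c, hsub'⟩
    rintro R ⟨c', hc'⟩
    obtain ⟨x, hx⟩ := hCne
    exact le_trans dist_nonneg (hc' hx)
  -- positivity of sin (π / k)
  have hkR : (0:ℝ) < k := by positivity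
  have hπk : 0 < Real.pi / k := div_pos Real.pi_pos hkR
  have hπk2 : Real.pi / k < Real.pi := by
    rw [div_lt_iff₀ hkR]
    have hk3 : (3:ℝ) ≤ (k:ℝ) := by exact_mod_cast hk
    nlinarith [Real.pi_pos]
  have hsin : 0 < Real.sin (Real.pi / k) := Real.sin_pos_of_pos_of_lt_pi hπk hπk2
  -- branch 2 core
  have b2core : ∀ (q : ℂ) (r' : ℝ), 0 < r' → closedBall q r' ⊆ C →
      2 * r' * Real.sin (Real.pi / k) ≤ D := by
    intro q r' hr' hq
    have step : ∀ M : ℕ, 2 * r' * Real.sin (Real.pi * M / ((M + 1) * k)) ≤ D := by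
      intro M
      rcases Nat.eq_zero_or_pos M with rfl | hM
      · simpa using hD0

      -- M ≥ 1 : pigeonhole on (M+1)*k sample points on the circle of radius r'
      set N : ℕ := (M + 1) * k with hNdef
      have hNpos : 0 < N := by positivity
      have hNR : (0:ℝ) < N := by exact_mod_cast hNpos
      set x : ℕ → ℂ :=
        fun j => q + (r' : ℂ) * Complex.exp (((2 * Real.pi * j / N : ℝ) : ℂ) * Complex.I)
        with hxdef
      have hxball : ∀ j : ℕ, x j ∈ closedBall q r' := by
        intro j
        rw [mem_closedBall, Complex.dist_eq]
        have hre : x j - q = (r' : ℂ) * Complex.exp (((2 * Real.pi * j / N : ℝ) : ℂ) * Complex.I) := by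
          rw [hxdef]; ring
        rw [hre, norm_mul, Complex.norm_real, Real.norm_eq_abs, Complex.norm_exp_ofReal_mul_I, mul_one,
          abs_of_pos hr']
      have hchoice : ∀ j : ℕ, ∃ i, x j ∈ P i := fun j => hmem _ (hq (hxball j))
      choose g hg using hchoice
      obtain ⟨i, -, hcard⟩ := Finset.exists_le_card_fiber_of_mul_le_card_of_maps_to
        (f := g) (s := Finset.range N) (t := (Finset.univ : Finset (Fin k))) (n := M + 1)
        (fun a _ => Finset.mem_univ _) Finset.univ_nonempty
        (by rw [Finset.card_univ, Fintype.card_fin, Finset.card_range, hNdef, Nat.mul_comm])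
      set S : Finset ℕ := {j ∈ Finset.range N | g j = i} with hSdef
      have hSmem : ∀ j ∈ S, j < N ∧ g j = i := by
        intro j hj
        rw [hSdef, Finset.mem_filter, Finset.mem_range] at hj
        exact hj
      have hMZ : (1:ℤ) ≤ (M:ℤ) := by exact_mod_cast hM
      have hkZ : (3:ℤ) ≤ (k:ℤ) := by exact_mod_cast hk
      have hNZ : ((N:ℕ):ℤ) = ((M:ℤ) + 1) * (k:ℤ) := by rw [hNdef]; push_cast; ring
      -- there exist two sample points in the same piece and at circular distance ≥ M steps
      have hfar : ∃ j ∈ S, ∃ j' ∈ S, j' < j ∧ (M:ℤ) ≤ (j:ℤ) - (j':ℤ) ∧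
          ((j:ℤ) - (j':ℤ)) + (M:ℤ) ≤ (N:ℤ) := by
        by_contra hcon
        push_neg at hcon
        have hpairlt : ∀ j ∈ S, ∀ j' ∈ S, j' < j →
            ∃ v : ℤ, -((M:ℤ) - 1) ≤ v ∧ v ≤ (M:ℤ) - 1 ∧ ((N:ℕ):ℤ) ∣ (j:ℤ) - (j':ℤ) - v := by
          intro j hj j' hj' hlt
          have hc := hcon j hj j' hj' hlt
          have hjN := (hSmem j hj).1
          have hj'N := (hSmem j' hj').1
          rcases le_or_gt ((j:ℤ) - (j':ℤ)) ((M:ℤ) - 1) with hle' | hlt'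
          · exact ⟨(j:ℤ) - (j':ℤ), by omega, hle', by simp⟩
          · have h2 := hc (by omega)
            refine ⟨(j:ℤ) - (j':ℤ) - (N:ℤ), by omega, by omega, ?_⟩
            have : (j:ℤ) - (j':ℤ) - ((j:ℤ) - (j':ℤ) - (N:ℤ)) = (N:ℤ) := by ring
            rw [this]
        have harc := arc_lemma' ((N:ℕ):ℤ) ((M:ℤ) - 1) (by omega)
          (by rw [hNZ]; nlinarith) (S.image (fun j : ℕ => (j:ℤ)))
          (by
            intro a ha
            obtain ⟨j, hj, rfl⟩ := Finset.mem_image.mp ha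
            have := (hSmem j hj).1
            constructor <;> omega)
          (by
            intro a ha b hb
            obtain ⟨j, hj, rfl⟩ := Finset.mem_image.mp ha
            obtain ⟨j', hj', rfl⟩ := Finset.mem_image.mp hb
            rcases lt_trichotomy j j' with hlt | rfl | hlt
            · obtain ⟨v, hv1, hv2, hv3⟩ := hpairlt j' hj' j hj hlt
              refine ⟨-v, by omega, by omega, ?_⟩
              have he : (j:ℤ) - (j':ℤ) - (-v) = -((j':ℤ) - (j:ℤ) - v) := by ring
              rw [he]
              exact dvd_neg.mpr hv3
            · exact ⟨0, by omega, by omega, by simp⟩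
            · exact hpairlt j hj j' hj' hlt)
        have hci : (S.image (fun j : ℕ => (j:ℤ))).card = S.card :=
          Finset.card_image_of_injective S (fun a b hab => by exact_mod_cast hab)
        rw [hci] at harc
        omega
      obtain ⟨j, hj, j', hj', hlt, hfar1, hfar2⟩ := hfar
      set u : ℕ := j - j' with hu
      have huZ : ((u:ℕ):ℤ) = (j:ℤ) - (j':ℤ) := by omega
      have hu1 : M ≤ u := by omega
      have hu2 : u + M ≤ N := by omega
      have hjN := (hSmem j hj).1
      -- both points lie in piece i
      have hxj : x j ∈ P i := by have := hg j; rwa [(hSmem j hj).2] at this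
      have hxj' : x j' ∈ P i := by have := hg j'; rwa [(hSmem j' hj').2] at this
      have hdistD : dist (x j) (x j') ≤ D := key i _ hxj _ hxj'
      -- compute the distance
      have hdeq : dist (x j) (x j') = 2 * r' * |Real.sin (Real.pi * ((j:ℝ) - (j':ℝ)) / N)| := by
        rw [Complex.dist_eq]
        have hre : x j - x j' = (r' : ℂ) *
            (Complex.exp (((2 * Real.pi * j / N : ℝ) : ℂ) * Complex.I) -
             Complex.exp (((2 * Real.pi * j' / N : ℝ) : ℂ) * Complex.I)) := by
          rw [hxdef]; ring
        rw [hre, norm_mul, Complex.norm_real, Real.norm_eq_abs, abs_of_pos hr', abs_exp_sub_exp']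
        have harg : (2 * Real.pi * (j:ℝ) / N - 2 * Real.pi * (j':ℝ) / N) / 2 =
            Real.pi * ((j:ℝ) - (j':ℝ)) / N := by ring
        rw [harg]; ring
      have huR : ((j:ℝ) - (j':ℝ)) = ((u:ℕ):ℝ) := by
        have : ((u:ℕ):ℝ) = (((u:ℕ):ℤ):ℝ) := by push_cast; ring
        rw [this, huZ]; push_cast; ring
      have huRle : (M:ℝ) ≤ (u:ℝ) := by exact_mod_cast hu1
      -- sin comparison
      have hsin_ineq : Real.sin (Real.pi * M / N) ≤ Real.sin (Real.pi * u / N) := by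
        rcases le_or_gt (2 * u) N with hcase | hcase
        · apply Real.sin_le_sin_of_le_of_le_pi_div_two
          · have h0 : (0:ℝ) ≤ Real.pi * M / N := by positivity
            linarith [Real.pi_pos]
          · rw [div_le_div_iff₀ hNR (by norm_num : (0:ℝ) < 2)]
            have h2u : 2 * (u:ℝ) ≤ (N:ℝ) := by exact_mod_cast hcase
            nlinarith [Real.pi_pos]
          · gcongr
        · have hrw : Real.pi * (u:ℝ) / N = Real.pi - Real.pi * ((N:ℝ) - u) / N := by
            field_simp
            ring
          rw [hrw, Real.sin_pi_sub]
          apply Real.sin_le_sin_of_le_of_le_pi_div_two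
          · have h0 : (0:ℝ) ≤ Real.pi * M / N := by positivity
            linarith [Real.pi_pos]
          · rw [div_le_div_iff₀ hNR (by norm_num : (0:ℝ) < 2)]
            have h2u : (N:ℝ) < 2 * (u:ℝ) := by exact_mod_cast hcase
            have huN : (u:ℝ) ≤ (N:ℝ) := by
              have : u ≤ N := by omega
              exact_mod_cast this
            nlinarith [Real.pi_pos]
          · gcongr
            have : (M:ℝ) + (u:ℝ) ≤ (N:ℝ) := by exact_mod_cast by omega
            linarith
      have hNcast : ((M:ℝ) + 1) * (k:ℝ) = (N:ℝ) := by rw [hNdef]; push_cast; ring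
      calc 2 * r' * Real.sin (Real.pi * M / ((M + 1) * k))
          = 2 * r' * Real.sin (Real.pi * M / N) := by rw [hNcast]
        _ ≤ 2 * r' * Real.sin (Real.pi * u / N) :=
            mul_le_mul_of_nonneg_left hsin_ineq (by positivity)
        _ ≤ 2 * r' * |Real.sin (Real.pi * u / N)| :=
            mul_le_mul_of_nonneg_left (le_abs_self _) (by positivity)
        _ = dist (x j) (x j') := by rw [hdeq, huR]
        _ ≤ D := hdistD

    -- limit
    have h1 : Filter.Tendsto (fun M : ℕ => Real.pi * M / ((M + 1) * k))
        Filter.atTop (nhds (Real.pi / k)) := by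
      have h2 : Filter.Tendsto (fun M : ℕ => ((M : ℝ) / (M + 1))) Filter.atTop (nhds 1) :=
        tendsto_natCast_div_add_atTop (1 : ℝ)
      have h3 := h2.const_mul (Real.pi / (k:ℝ))
      rw [mul_one] at h3
      have heq : (fun M : ℕ => Real.pi * M / ((M + 1) * k)) =
          fun M : ℕ => Real.pi / (k:ℝ) * ((M:ℝ) / (M + 1)) := by
        funext M
        rw [div_mul_div_comm, mul_comm ((k:ℝ)) (((M:ℝ) + 1))]
      rw [heq]
      exact h3
    have h4 : Filter.Tendsto (fun M : ℕ => 2 * r' * Real.sin (Real.pi * M / ((M + 1) * k)))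
        Filter.atTop (nhds (2 * r' * Real.sin (Real.pi / k))) :=
      ((Real.continuous_sin.tendsto _).comp h1).const_mul _
    exact le_of_tendsto h4 (Filter.Eventually.of_forall step)
  -- branch 2
  have b2 : 2 * inradius C * Real.sin (Real.pi / k) ≤ D := by
    have hup : inradius C ≤ D / (2 * Real.sin (Real.pi / k)) := by
      have hne' : {r : ℝ | ∃ q : ℂ, closedBall q r ⊆ C}.Nonempty := by
        refine ⟨-1, ⟨0, ?_⟩⟩
        rw [Metric.closedBall_eq_empty.mpr (by norm_num)]
        exact empty_subset _
      unfold inradius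
      apply csSup_le hne'
      rintro r' ⟨q, hq⟩
      rcases le_or_gt r' 0 with h | h
      · exact h.trans (div_nonneg hD0 (by positivity))
      · rw [le_div_iff₀ (by positivity)]
        have := b2core q r' h hq
        nlinarith
    rw [mul_comm, ← mul_assoc]
    calc Real.sin (Real.pi / k) * 2 * inradius C
        ≤ Real.sin (Real.pi / k) * 2 * (D / (2 * Real.sin (Real.pi / k))) := by
          apply mul_le_mul_of_nonneg_left hup (by positivity)
      _ = D := by field_simp
  exact max_le b1 b2
end

section
/- Let k be an integer with 3 ≤ k ≤ 6, let C be a k-rotationally symmetric planar convex body with inradius r and circumradius R, and let S be any k-subdivision of C, i.e. connected subsets C₁, …, C_k of C whose union is C and whose interiors are pairwise disjoint. Then the maximum relative diameter of S is at least that of the standard k-partition: d_M(S) = max_{1≤i≤k} diam(C_i) ≥ max{R, 2·r·sin(π/k)} = d_M(P_k). In other words, for 3 ≤ k ≤ 6 the standard k-partition is a minimizing k-subdivision for the maximum relative diameter. -/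
open Metric Set

section Helpers

theorem sin_ge_sin' {a x : ℝ} (h0 : 0 ≤ a) (ha : 2*a ≤ Real.pi) (h1 : a ≤ x) (h2 : x ≤ Real.pi - a) :
    Real.sin a ≤ Real.sin x := by
  rcases le_or_gt x (Real.pi/2) with h | h
  · exact Real.strictMonoOn_sin.monotoneOn ⟨by linarith, by linarith⟩ ⟨by linarith, h⟩ h1
  · rw [← Real.sin_pi_sub x]
    exact Real.strictMonoOn_sin.monotoneOn ⟨by linarith, by linarith⟩ ⟨by linarith, by linarith⟩ (by linarith)

theorem sin_lipschitz' (x y : ℝ) : |Real.sin x - Real.sin y| ≤ |x - y| := by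
  rw [Real.sin_sub_sin]
  have h1 := Real.abs_sin_le_abs (x := (x-y)/2)
  have h2 := Real.abs_cos_le_one ((x+y)/2)
  have h3 : |(x-y)/2| = |x-y|/2 := by rw [abs_div]; norm_num
  calc |2 * Real.sin ((x-y)/2) * Real.cos ((x+y)/2)|
      = 2 * |Real.sin ((x-y)/2)| * |Real.cos ((x+y)/2)| := by
        rw [abs_mul, abs_mul]; norm_num
    _ ≤ |x - y| := by nlinarith [abs_nonneg (Real.sin ((x-y)/2)), abs_nonneg (Real.cos ((x+y)/2))]

theorem norm_exp_sub_one' (θ : ℝ) : ‖Complex.exp (θ * Complex.I) - 1‖ = 2 * |Real.sin (θ/2)| := by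
  set z : ℂ := ((θ/2 : ℝ) : ℂ) with hz
  have h : Complex.exp (θ * Complex.I) - 1 = Complex.exp (z * Complex.I) * (2 * Complex.I * Complex.sin z) := by
    have hs : 2 * Complex.I * Complex.sin z = Complex.exp (z*Complex.I) - Complex.exp (-z*Complex.I) := by
      rw [Complex.sin]; simp [Complex.I_sq]; ring_nf
      rw [Complex.I_sq]; ring
    rw [hs, mul_sub, ← Complex.exp_add, ← Complex.exp_add]
    have h1 : z * Complex.I + z * Complex.I = (θ:ℂ) * Complex.I := by rw [hz]; push_cast; ring
    have h2 : z * Complex.I + -z * Complex.I = 0 := by ring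
    rw [h1, h2, Complex.exp_zero]
  have h4 : (2:ℂ) * Complex.I * Complex.sin z = 2 * Complex.I * ((Real.sin (θ/2) : ℝ) : ℂ) := by
    rw [hz, ← Complex.ofReal_sin]
  have h3 : ‖Complex.exp (z * Complex.I)‖ = 1 := by
    rw [hz]; exact Complex.norm_exp_ofReal_mul_I _
  rw [h, norm_mul, h3, one_mul, h4, norm_mul, norm_mul]
  simp [-Complex.ofReal_sin]

theorem chord_ge (p u : ℂ) (hu : ‖u‖ = 1) (s : ℝ) (hs : 0 ≤ s) (N a b M : ℕ)
    (hN : 0 < N) (hM2 : 2*M ≤ N) (hba : b ≤ a) (h1 : M ≤ a - b) (h2 : a - b ≤ N - M) :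
    2*s*Real.sin (Real.pi*M/N) ≤
      dist (p + (s:ℂ) * Complex.exp (((2*Real.pi*a/N : ℝ) : ℂ) * Complex.I) * u)
           (p + (s:ℂ) * Complex.exp (((2*Real.pi*b/N : ℝ) : ℂ) * Complex.I) * u) := by
  set t : ℕ := a - b with hT
  have htM : t + M ≤ N := by omega
  have htN : (t:ℝ) + M ≤ N := by exact_mod_cast htM
  have h2M : 2*(M:ℝ) ≤ N := by exact_mod_cast hM2
  have hMt : (M:ℝ) ≤ t := by exact_mod_cast h1
  have hNpos : (0:ℝ) < N := by exact_mod_cast hN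
  have key : dist (p + (s:ℂ) * Complex.exp (((2*Real.pi*a/N : ℝ) : ℂ) * Complex.I) * u)
      (p + (s:ℂ) * Complex.exp (((2*Real.pi*b/N : ℝ) : ℂ) * Complex.I) * u)
      = 2 * s * Real.sin (Real.pi * t / N) := by
    rw [Complex.dist_eq]
    have hsplit : Complex.exp (((2*Real.pi*a/N : ℝ) : ℂ) * Complex.I)
        = Complex.exp (((2*Real.pi*b/N : ℝ) : ℂ) * Complex.I) * Complex.exp (((2*Real.pi*t/N : ℝ) : ℂ) * Complex.I) := by
      rw [← Complex.exp_add]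
      congr 1
      have hab : (t:ℝ) = (a:ℝ) - b := by rw [hT, Nat.cast_sub hba]
      push_cast [hab]
      ring
    rw [hsplit, show (p + ↑s * (Complex.exp (((2*Real.pi*b/N : ℝ) : ℂ) * Complex.I) * Complex.exp (((2*Real.pi*t/N : ℝ) : ℂ) * Complex.I)) * u)
        - (p + ↑s * Complex.exp (((2*Real.pi*b/N : ℝ) : ℂ) * Complex.I) * u)
        = ↑s * Complex.exp (((2*Real.pi*b/N : ℝ) : ℂ) * Complex.I) * ((Complex.exp (((2*Real.pi*t/N : ℝ) : ℂ) * Complex.I) - 1) * u) from by ring]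
    rw [norm_mul, norm_mul, norm_mul, hu, mul_one, Complex.norm_real,
      Complex.norm_exp_ofReal_mul_I, mul_one, norm_exp_sub_one']
    have harg : (2*Real.pi*t/N)/2 = Real.pi * t / N := by ring
    rw [harg, Real.norm_eq_abs, _root_.abs_of_nonneg hs, _root_.abs_of_nonneg (Real.sin_nonneg_of_nonneg_of_le_pi
      (by positivity) (by rw [div_le_iff₀ hNpos]; nlinarith [Real.pi_pos]))]
    ring
  rw [key]
  have hsin : Real.sin (Real.pi*M/N) ≤ Real.sin (Real.pi*t/N) := by
    apply sin_ge_sin' (by positivity)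
    · rw [show 2*(Real.pi*(M:ℝ)/N) = Real.pi*(2*M)/N from by ring, div_le_iff₀ hNpos]
      nlinarith [Real.pi_pos]
    · gcongr
    · rw [div_le_iff₀ hNpos, sub_mul, div_mul_cancel₀ _ (ne_of_gt hNpos)]
      nlinarith [Real.pi_pos]
  nlinarith [hsin]

theorem comb_lemma {k M N : ℕ} (hk : 3 ≤ k) (hM : 1 ≤ M) (hN : N = k*M+1)
    (A : Finset ℕ) (hlt : ∀ x ∈ A, x < N) (hcard : M+1 ≤ A.card) :
    ∃ x ∈ A, ∃ y ∈ A, y ≤ x ∧ M ≤ x - y ∧ x - y ≤ N - M := by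
  classical
  by_contra h
  push_neg at h
  have hneg : ∀ x ∈ A, ∀ y ∈ A, y ≤ x → (x - y < M ∨ N - M < x - y) := by
    intro x hx y hy hxy
    by_cases hc : M ≤ x - y
    · exact Or.inr (h x hx y hy hxy hc)
    · exact Or.inl (by omega)
  have h3M : 3*M ≤ k*M := Nat.mul_le_mul_right M hk
  have hA : A.Nonempty := Finset.card_pos.mp (by omega)
  set m0 := A.min' hA with hm0def
  have hm0 : m0 ∈ A := A.min'_mem hA
  have hm0le : ∀ x ∈ A, m0 ≤ x := fun x hx => A.min'_le x hx
  set B := A.filter (fun x => x < m0 + M) with hB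
  set Cs := A.filter (fun x => ¬ (x < m0 + M)) with hCs
  have hsplit : B.card + Cs.card = A.card := A.card_filter_add_card_filter_not _
  have hBcard : B.card ≤ M := by
    have hsub : B ⊆ Finset.Ico m0 (m0 + M) := by
      intro x hx
      rw [hB, Finset.mem_filter] at hx
      exact Finset.mem_Ico.mpr ⟨hm0le x hx.1, hx.2⟩
    calc B.card ≤ (Finset.Ico m0 (m0+M)).card := Finset.card_le_card hsub
    _ = M := by rw [Nat.card_Ico]; omega
  rcases Finset.eq_empty_or_nonempty Cs with hCe | hCne
  · rw [hCe] at hsplit; simp at hsplit; omega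
  · set c0 := Cs.min' hCne with hc0def
    have hc0Cs : c0 ∈ Cs := Cs.min'_mem hCne
    have hc0A : c0 ∈ A := (Finset.mem_filter.mp hc0Cs).1
    have hc0big : ¬ (c0 < m0 + M) := (Finset.mem_filter.mp hc0Cs).2
    have hc0N : c0 < N := hlt c0 hc0A
    have hgap0 : N - M < c0 - m0 := by
      rcases hneg c0 hc0A m0 hm0 (hm0le c0 hc0A) with h' | h' <;> omega
    have hBsub2 : ∀ x ∈ B, x + (N - M) < c0 := by
      intro x hx
      rw [hB, Finset.mem_filter] at hx
      have hxA := hx.1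
      have hxm0 := hm0le x hxA
      have hxle : x ≤ c0 := by omega
      rcases hneg c0 hc0A x hxA hxle with h' | h' <;> omega
    have hBcard2 : B.card ≤ c0 - (N - M) - m0 := by
      have hsub : B ⊆ Finset.Ico m0 (c0 - (N-M)) := by
        intro x hx
        refine Finset.mem_Ico.mpr ⟨hm0le x ((Finset.mem_filter.mp hx).1), ?_⟩
        have := hBsub2 x hx; omega
      calc B.card ≤ (Finset.Ico m0 (c0 - (N-M))).card := Finset.card_le_card hsub
      _ = c0 - (N-M) - m0 := by rw [Nat.card_Ico]
    have hCcard : Cs.card ≤ N - c0 := by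
      have hsub : Cs ⊆ Finset.Ico c0 N := by
        intro x hx
        exact Finset.mem_Ico.mpr ⟨Cs.min'_le x hx, hlt x ((Finset.mem_filter.mp hx).1)⟩
      calc Cs.card ≤ (Finset.Ico c0 N).card := Finset.card_le_card hsub
      _ = N - c0 := by rw [Nat.card_Ico]
    omega

noncomputable def rotUnit (k : ℕ) : ℂ := Complex.exp (2 * (Real.pi : ℂ) * Complex.I / (k : ℂ))

lemma rotUnit_pow_eq (k : ℕ) (n : ℕ) :
    (rotUnit k)^n = Complex.exp (((2*Real.pi*n/k : ℝ) : ℂ) * Complex.I) := by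
  rw [rotUnit, ← Complex.exp_nat_mul]
  congr 1
  push_cast
  ring

lemma norm_rotUnit_pow (k n : ℕ) : ‖(rotUnit k)^n‖ = 1 := by
  rw [rotUnit_pow_eq]; exact Complex.norm_exp_ofReal_mul_I _

lemma rotUnit_pow_k {k : ℕ} (hk : k ≠ 0) : (rotUnit k)^k = 1 :=
  (Complex.isPrimitiveRoot_exp k hk).pow_eq_one

lemma sum_rotUnit {k : ℕ} (hk : 2 ≤ k) : ∑ i ∈ Finset.range k, (rotUnit k)^i = 0 := by
  have hne : rotUnit k ≠ 1 := (Complex.isPrimitiveRoot_exp k (by omega)).ne_one (by omega)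
  rw [geom_sum_eq hne, rotUnit_pow_k (by omega : k ≠ 0), sub_self, zero_div]

lemma orbit_mem {k : ℕ} {p : ℂ} {C : Set ℂ} (hC : IsRotSymConvexBody k p C)
    {z : ℂ} (hz : z ∈ C) (n : ℕ) : p + (rotUnit k)^n * (z - p) ∈ C := by
  induction n with
  | zero => simpa using hz
  | succ n ih =>
    have h1 : p + (rotUnit k)^(n+1) * (z - p) = planeRotation k p (p + (rotUnit k)^n * (z - p)) := by
      unfold planeRotation
      rw [show Complex.exp (2 * (Real.pi : ℂ) * Complex.I / (k : ℂ)) = rotUnit k from rfl, pow_succ]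
      ring
    rw [h1]
    have := Set.mem_image_of_mem (planeRotation k p) ih
    rwa [hC.2.2.2] at this

lemma hki_one {k : ℕ} (hk : k ≠ 0) {i : ℕ} (hik : i ≤ k) :
    (rotUnit k)^(k-i) * (rotUnit k)^i = 1 := by
  rw [← pow_add, show k - i + i = k from by omega, rotUnit_pow_k hk]

lemma ball_transfer {k : ℕ} {p : ℂ} {C : Set ℂ} (hk : 3 ≤ k) (hC : IsRotSymConvexBody k p C)
    {c : ℂ} {s : ℝ} (hball : Metric.closedBall c s ⊆ C) : Metric.closedBall p s ⊆ C := by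
  rcases lt_or_ge s 0 with hs | hs
  · rw [Metric.closedBall_eq_empty.mpr hs]; exact empty_subset _
  intro x hx
  rw [Metric.mem_closedBall, Complex.dist_eq] at hx
  have hk0 : k ≠ 0 := by omega
  have hmem : ∀ i ∈ Finset.range k, (x - p) + (p + (rotUnit k)^i * (c - p)) ∈ C := by
    intro i hi
    have hik : i ≤ k := le_of_lt (Finset.mem_range.mp hi)
    set y : ℂ := (x - p) + (p + (rotUnit k)^i * (c - p)) with hy
    set y' : ℂ := p + (rotUnit k)^(k-i) * (y - p) with hy'
    have h1 : (rotUnit k)^(k-i) * (rotUnit k)^i = 1 := hki_one hk0 hik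
    have h2 : y' - c = (rotUnit k)^(k-i) * (x - p) := by
      rw [hy', hy]; linear_combination (c - p) * h1
    have h3 : y' ∈ Metric.closedBall c s := by
      rw [Metric.mem_closedBall, Complex.dist_eq, h2, norm_mul, norm_rotUnit_pow, one_mul]
      exact hx
    have h4 : p + (rotUnit k)^i * (y' - p) ∈ C := orbit_mem hC (hball h3) i
    have h5 : p + (rotUnit k)^i * (y' - p) = y := by
      rw [hy']; linear_combination (y - p) * (by linear_combination h1 : (rotUnit k)^i * (rotUnit k)^(k-i) = 1)
    rwa [h5] at h4
  have hsum := hC.2.1.sum_mem (t := Finset.range k) (w := fun _ => (1/k : ℝ))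
    (fun i _ => by positivity)
    (by rw [Finset.sum_const, Finset.card_range, nsmul_eq_mul]; field_simp)
    hmem
  have hkey : ∑ i ∈ Finset.range k, (1/k : ℝ) • ((x - p) + (p + (rotUnit k)^i * (c - p))) = x := by
    have hsum2 : ∑ i ∈ Finset.range k, ((x - p) + (p + (rotUnit k)^i * (c - p)))
        = (k : ℂ) * x := by
      rw [Finset.sum_add_distrib, Finset.sum_add_distrib, ← Finset.sum_mul, sum_rotUnit (by omega),
        zero_mul, add_zero, Finset.sum_const, Finset.sum_const, Finset.card_range,
        nsmul_eq_mul, nsmul_eq_mul]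
      ring
    calc ∑ i ∈ Finset.range k, (1/k : ℝ) • ((x - p) + (p + (rotUnit k)^i * (c - p)))
        = ∑ i ∈ Finset.range k, ((1/k : ℝ) : ℂ) * ((x - p) + (p + (rotUnit k)^i * (c - p))) := by
          simp only [Complex.real_smul]
      _ = ((1/k : ℝ) : ℂ) * ∑ i ∈ Finset.range k, ((x - p) + (p + (rotUnit k)^i * (c - p))) := by
          rw [Finset.mul_sum]
      _ = x := by
          rw [hsum2]
          have : (k : ℂ) ≠ 0 := Nat.cast_ne_zero.mpr hk0
          push_cast
          field_simp
  rwa [hkey] at hsum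

lemma subset_ball_center {k : ℕ} {p : ℂ} {C : Set ℂ} (hk : 3 ≤ k) (hC : IsRotSymConvexBody k p C)
    {c : ℂ} {R₀ : ℝ} (hsub : C ⊆ Metric.closedBall c R₀) : C ⊆ Metric.closedBall p R₀ := by
  intro x hx
  have hk0 : k ≠ 0 := by omega
  rw [Metric.mem_closedBall, Complex.dist_eq]
  have hkR : (k : ℝ) * ‖x - p‖ ≤ (k : ℝ) * R₀ := by
    have hterm : ∀ i ∈ Finset.range k, ‖x - (p + (rotUnit k)^i * (c - p))‖ ≤ R₀ := by
      intro i hi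
      have hik : i ≤ k := le_of_lt (Finset.mem_range.mp hi)
      have h1 : (rotUnit k)^i * (rotUnit k)^(k-i) = 1 := by
        linear_combination hki_one hk0 hik
      have hx' : p + (rotUnit k)^(k-i) * (x - p) ∈ C := orbit_mem hC hx (k-i)
      have h2 : x - (p + (rotUnit k)^i * (c - p))
          = (rotUnit k)^i * ((p + (rotUnit k)^(k-i) * (x - p)) - c) := by
        linear_combination (p - x) * h1
      rw [h2, norm_mul, norm_rotUnit_pow, one_mul]
      have := hsub hx'
      rwa [Metric.mem_closedBall, Complex.dist_eq] at this
    have hsum2 : ∑ i ∈ Finset.range k, (x - (p + (rotUnit k)^i * (c - p))) = (k : ℂ) * (x - p) := by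
      rw [Finset.sum_sub_distrib, Finset.sum_add_distrib, ← Finset.sum_mul, sum_rotUnit (by omega),
        zero_mul, add_zero, Finset.sum_const, Finset.sum_const, Finset.card_range,
        nsmul_eq_mul, nsmul_eq_mul]
      ring
    calc (k:ℝ) * ‖x - p‖ = ‖(k:ℂ) * (x - p)‖ := by
          rw [norm_mul]; simp
      _ = ‖∑ i ∈ Finset.range k, (x - (p + (rotUnit k)^i * (c - p)))‖ := by rw [hsum2]
      _ ≤ ∑ i ∈ Finset.range k, ‖x - (p + (rotUnit k)^i * (c - p))‖ := norm_sum_le _ _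
      _ ≤ ∑ _i ∈ Finset.range k, R₀ := Finset.sum_le_sum hterm
      _ = (k:ℝ) * R₀ := by rw [Finset.sum_const, Finset.card_range, nsmul_eq_mul]
  have hkpos : (0:ℝ) < k := by positivity
  exact le_of_mul_le_mul_left hkR hkpos

end Helpers

set_option maxHeartbeats 2000000 in
/-- For `3 ≤ k ≤ 6` the standard `k`-partition is a minimizing `k`-subdivision for the
maximum relative diameter: every `k`-subdivision of a `k`-rotationally symmetric planar
convex body has maximum relative diameter at least `max {R, 2·r·sin(π/k)}`, which is the
maximum relative diameter of the standard `k`-partition. -/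
theorem standardPartition_isMinimizing_subdivision
    (k : ℕ) (hk : 3 ≤ k) (hk' : k ≤ 6) (p : ℂ) (C : Set ℂ)
    (hC : IsRotSymConvexBody k p C)
    (S : Fin k → Set ℂ) (hS : IsSubdivision C k S) :
    max (circumradius C) (2 * inradius C * Real.sin (Real.pi / k)) ≤
      ⨆ i, Metric.diam (S i) := by
  have hk0 : k ≠ 0 := by omega
  have hkR : (0:ℝ) < k := by positivity
  set D := ⨆ i, Metric.diam (S i) with hD
  have hbddD : BddAbove (Set.range fun i => Metric.diam (S i)) := (Set.finite_range _).bddAbove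
  have hDle : ∀ i, Metric.diam (S i) ≤ D := fun i => le_ciSup hbddD i
  have hD0 : 0 ≤ D := le_trans Metric.diam_nonneg (hDle ⟨0, by omega⟩)
  have hCne : C.Nonempty := ⟨_, interior_subset hC.2.2.1.some_mem⟩
  obtain ⟨z₀, hz₀⟩ := hCne
  have hCbdd : Bornology.IsBounded C := hC.1.isBounded
  have hRne : {R : ℝ | ∃ c : ℂ, C ⊆ closedBall c R}.Nonempty := by
    obtain ⟨r0, hr0⟩ := hCbdd.subset_closedBall 0
    exact ⟨r0, 0, hr0⟩
  have hRbdd : BddBelow {R : ℝ | ∃ c : ℂ, C ⊆ closedBall c R} :=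
    ⟨0, fun R0 hR0 => by obtain ⟨c, hc⟩ := hR0; exact le_trans dist_nonneg (hc hz₀)⟩
  have hpick : ∀ x ∈ C, ∃ i, x ∈ S i := fun x hx => Set.mem_iUnion.mp (hS.2.2.1 ▸ hx)
  have key : ∀ i : Fin k, ∀ x y : ℂ, x ∈ S i → y ∈ S i → dist x y ≤ D :=
    fun i x y hx hy => le_trans (Metric.dist_le_diam_of_mem (hCbdd.subset (hS.1 i)) hx hy) (hDle i)
  have hpC : p ∈ C := by
    have h0 : Metric.closedBall z₀ 0 ⊆ C := by
      intro w hw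
      rw [Metric.mem_closedBall, dist_le_zero] at hw
      rwa [hw]
    have := ball_transfer hk hC h0
    exact this (by simp)
  have hsin6 : (1/2 : ℝ) ≤ Real.sin (Real.pi / k) := by
    rw [← Real.sin_pi_div_six]
    have hpi := Real.pi_pos
    have h6 : Real.pi / k ≥ Real.pi / 6 := by
      apply div_le_div_of_nonneg_left hpi.le hkR
      exact_mod_cast hk'
    have h3 : Real.pi / k ≤ Real.pi / 3 := by
      apply div_le_div_of_nonneg_left hpi.le (by norm_num)
      exact_mod_cast hk
    exact sin_ge_sin' (by positivity) (by linarith) h6 (by linarith)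
  have hsin1 : Real.sin (Real.pi / k) ≤ 1 := Real.sin_le_one _
  -- Part A : circumradius ≤ D
  have hRD : circumradius C ≤ D := by
    refine le_of_forall_pos_le_add fun ε hε => ?_
    rcases le_or_gt (circumradius C) ε with hcase | hcase
    · linarith
    have hex : ∃ x ∈ C, circumradius C - ε < dist x p := by
      by_contra hcon
      push_neg at hcon
      have hsub : C ⊆ closedBall p (circumradius C - ε) := fun x hx =>
        Metric.mem_closedBall.mpr (hcon x hx)
      have : circumradius C ≤ circumradius C - ε := csInf_le hRbdd ⟨p, hsub⟩
      linarith
    obtain ⟨x, hxC, hxd⟩ := hex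
    set s := dist x p with hs
    have hspos : 0 < s := lt_of_le_of_lt (by linarith) hxd
    set u : ℂ := (x - p) / (s:ℂ) with hu_def
    have hsC : (s:ℂ) ≠ 0 := by exact_mod_cast ne_of_gt hspos
    have hxpnorm : ‖x - p‖ = s := (Complex.dist_eq x p).symm
    have hu : ‖u‖ = 1 := by
      rw [hu_def, norm_div, Complex.norm_real, Real.norm_eq_abs, _root_.abs_of_nonneg hspos.le,
        hxpnorm, div_self (ne_of_gt hspos)]
    have hxp : (s:ℂ) * u = x - p := by
      rw [hu_def]; field_simp
    set z : Fin (k+1) → ℂ := fun j =>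
      if j.val < k then p + (s:ℂ) * Complex.exp (((2*Real.pi*j.val/k : ℝ):ℂ) * Complex.I) * u else p
      with hzdef
    have hzC : ∀ j, z j ∈ C := by
      intro j
      by_cases hj : j.val < k
      · have horb := orbit_mem hC hxC j.val
        rw [rotUnit_pow_eq] at horb
        have heq : p + (rotUnit k)^j.val * (x - p)
            = p + Complex.exp (((2*Real.pi*j.val/k : ℝ):ℂ) * Complex.I) * (x - p) := by
          rw [rotUnit_pow_eq]
        simp only [hzdef, if_pos hj]
        have : p + (s:ℂ) * Complex.exp (((2*Real.pi*j.val/k : ℝ):ℂ) * Complex.I) * u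
            = p + Complex.exp (((2*Real.pi*j.val/k : ℝ):ℂ) * Complex.I) * (x - p) := by
          rw [← hxp]; ring
        rwa [this]
      · simp only [hzdef, if_neg hj]
        exact hpC
    choose g hg using fun j => hpick _ (hzC j)
    obtain ⟨a, b, hab, hgab⟩ := Fintype.exists_ne_map_eq_of_card_lt g (by simp)
    have hboth : ∀ a b : Fin (k+1), a.val < k → b.val < k → b.val ≤ a.val → a.val ≠ b.val →
        s ≤ dist (z a) (z b) := by
      intro a b ha hb hba hne
      have hch := chord_ge p u hu s hspos.le k a.val b.val 1
        (by omega) (by omega) hba (by omega) (by omega)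
      have hza : z a = p + (s:ℂ) * Complex.exp (((2*Real.pi*a.val/k : ℝ):ℂ) * Complex.I) * u := by
        simp only [hzdef, if_pos ha]
      have hzb : z b = p + (s:ℂ) * Complex.exp (((2*Real.pi*b.val/k : ℝ):ℂ) * Complex.I) * u := by
        simp only [hzdef, if_pos hb]
      rw [hza, hzb]
      have h1k : Real.pi * (1:ℕ) / k = Real.pi / k := by norm_num
      rw [h1k] at hch
      nlinarith [hsin6, hspos.le]
    have hmix : ∀ a b : Fin (k+1), a.val < k → ¬ (b.val < k) → s ≤ dist (z a) (z b) := by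
      intro a b ha hb
      have hza : z a = p + (s:ℂ) * Complex.exp (((2*Real.pi*a.val/k : ℝ):ℂ) * Complex.I) * u := by
        simp only [hzdef, if_pos ha]
      have hzb : z b = p := by simp only [hzdef, if_neg hb]
      rw [hza, hzb, Complex.dist_eq,
        show p + (s:ℂ) * Complex.exp (((2*Real.pi*a.val/k : ℝ):ℂ) * Complex.I) * u - p
          = (s:ℂ) * (Complex.exp (((2*Real.pi*a.val/k : ℝ):ℂ) * Complex.I) * u) from by ring,
        norm_mul, norm_mul, hu, Complex.norm_exp_ofReal_mul_I, Complex.norm_real,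
        Real.norm_eq_abs, _root_.abs_of_nonneg hspos.le]
      norm_num
    have hdab : s ≤ dist (z a) (z b) := by
      by_cases ha : a.val < k <;> by_cases hb : b.val < k
      · have hne : a.val ≠ b.val := fun h => hab (Fin.ext h)
        rcases le_total b.val a.val with h | h
        · exact hboth a b ha hb h hne
        · rw [dist_comm]; exact hboth b a hb ha h (Ne.symm hne)
      · exact hmix a b ha hb
      · rw [dist_comm]; exact hmix b a hb ha
      · exfalso; apply hab; apply Fin.ext; omega
    have hDs : s ≤ D := le_trans hdab (key (g a) _ _ (hg a) (hgab ▸ hg b))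
    linarith
  -- Part B : 2 * inradius * sin(π/k) ≤ D
  have hrne : {r : ℝ | ∃ c : ℂ, closedBall c r ⊆ C}.Nonempty :=
    ⟨0, z₀, by intro w hw; rw [Metric.mem_closedBall, dist_le_zero] at hw; rwa [hw]⟩
  have hrbdd : BddAbove {r : ℝ | ∃ c : ℂ, closedBall c r ⊆ C} := by
    obtain ⟨R₀, hR₀⟩ := hCbdd.subset_closedBall 0
    refine ⟨max R₀ 0, fun t ht => ?_⟩
    obtain ⟨c, hc⟩ := ht
    rcases le_or_gt t 0 with h | h
    · exact le_trans h (le_max_right _ _)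
    · refine le_trans ?_ (le_max_left _ _)
      have h1 : c + (t:ℂ) ∈ closedBall (0:ℂ) R₀ := hR₀ (hc (by
        rw [Metric.mem_closedBall, Complex.dist_eq]
        simp [_root_.abs_of_nonneg h.le]))
      have h2 : c - (t:ℂ) ∈ closedBall (0:ℂ) R₀ := hR₀ (hc (by
        rw [Metric.mem_closedBall, Complex.dist_eq]
        simp [_root_.abs_of_nonneg h.le]))
      rw [Metric.mem_closedBall, Complex.dist_eq] at h1 h2
      simp only [sub_zero] at h1 h2
      have h3 : ‖(c + (t:ℂ)) - (c - (t:ℂ))‖ = 2*t := by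
        rw [show (c + (t:ℂ)) - (c - (t:ℂ)) = 2*(t:ℂ) from by ring]
        rw [norm_mul]
        simp [_root_.abs_of_nonneg h.le]
      have h4 := norm_sub_le (c + (t:ℂ)) (c - (t:ℂ))
      rw [h3] at h4
      linarith
  have hr0 : 0 ≤ inradius C :=
    le_csSup hrbdd (show (0:ℝ) ∈ {r : ℝ | ∃ c : ℂ, closedBall c r ⊆ C} from
      ⟨z₀, fun w hw => by rw [Metric.mem_closedBall, dist_le_zero] at hw; rwa [hw]⟩)
  have hB1 : ∀ s : ℝ, 0 ≤ s → s < inradius C → ∀ M : ℕ, 1 ≤ M →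
      2*s*Real.sin (Real.pi*M/((k*M+1 : ℕ) : ℝ)) ≤ D := by
    intro s hs0 hsr M hM
    have h3M : 3*M ≤ k*M := Nat.mul_le_mul_right M hk
    set N := k*M+1 with hN
    have hball : closedBall p s ⊆ C := by
      obtain ⟨t, ht, hst⟩ := exists_lt_of_lt_csSup hrne hsr
      obtain ⟨c, hc⟩ := ht
      exact ball_transfer hk hC (le_trans (Metric.closedBall_subset_closedBall hst.le) hc)
    set w : Fin N → ℂ := fun j =>
      p + (s:ℂ) * Complex.exp (((2*Real.pi*j.val/N : ℝ):ℂ) * Complex.I) * 1 with hwdef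
    have hwC : ∀ j, w j ∈ C := by
      intro j
      apply hball
      rw [Metric.mem_closedBall, Complex.dist_eq]
      simp only [hwdef]
      rw [show p + (s:ℂ) * Complex.exp (((2*Real.pi*j.val/N : ℝ):ℂ) * Complex.I) * 1 - p
          = (s:ℂ) * Complex.exp (((2*Real.pi*j.val/N : ℝ):ℂ) * Complex.I) from by ring,
        norm_mul, Complex.norm_exp_ofReal_mul_I, Complex.norm_real, Real.norm_eq_abs,
        _root_.abs_of_nonneg hs0, mul_one]
    choose g hg using fun j => hpick _ (hwC j)
    obtain ⟨i, _, hcard⟩ := Finset.exists_lt_card_fiber_of_mul_lt_card_of_maps_to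
      (s := (Finset.univ : Finset (Fin N))) (t := (Finset.univ : Finset (Fin k)))
      (f := g) (n := M) (fun a _ => Finset.mem_univ _) (by simp; omega)
    set T := Finset.univ.filter (fun j => g j = i) with hT
    set A := T.image (fun j : Fin N => j.val) with hA
    have hAcard : M+1 ≤ A.card := by
      rw [hA, Finset.card_image_of_injective T Fin.val_injective]
      omega
    have hAlt : ∀ x ∈ A, x < N := by
      intro x hx
      obtain ⟨j, _, hj⟩ := Finset.mem_image.mp hx
      rw [← hj]; exact j.isLt
    obtain ⟨xv, hxA, yv, hyA, hyx, h1, h2⟩ := comb_lemma hk hM rfl A hAlt hAcard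
    obtain ⟨ja, hjaT, hja⟩ := Finset.mem_image.mp hxA
    obtain ⟨jb, hjbT, hjb⟩ := Finset.mem_image.mp hyA
    have hch := chord_ge p 1 (norm_one) s hs0 N xv yv M (by omega) (by omega) hyx h1 h2
    have hwa : w ja = p + (s:ℂ) * Complex.exp (((2*Real.pi*xv/N : ℝ):ℂ) * Complex.I) * 1 := by
      simp only [hwdef, hja]
    have hwb : w jb = p + (s:ℂ) * Complex.exp (((2*Real.pi*yv/N : ℝ):ℂ) * Complex.I) * 1 := by
      simp only [hwdef, hjb]
    have hga : g ja = i := (Finset.mem_filter.mp hjaT).2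
    have hgb : g jb = i := (Finset.mem_filter.mp hjbT).2
    calc 2*s*Real.sin (Real.pi*M/N) ≤ dist (w ja) (w jb) := by rw [hwa, hwb]; exact hch
      _ ≤ D := key i _ _ (hga ▸ hg ja) (hgb ▸ hg jb)
  have hB2 : ∀ s : ℝ, 0 ≤ s → s < inradius C → 2*s*Real.sin (Real.pi/k) ≤ D := by
    intro s hs0 hsr
    refine le_of_forall_pos_le_add fun δ hδ => ?_
    obtain ⟨M0, hM0⟩ := exists_nat_gt (2*s*Real.pi/δ)
    set M := M0 + 1 with hM
    have hM1 : 1 ≤ M := by omega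
    have hMR : (0:ℝ) < M := by positivity
    have hMbig : 2*s*Real.pi/δ < M := lt_of_lt_of_le hM0 (by exact_mod_cast Nat.le_succ M0)
    have hB := hB1 s hs0 hsr M hM1
    set N := k*M+1 with hN
    have hNR : (0:ℝ) < (N:ℝ) := by positivity
    have hNcast : ((N:ℕ):ℝ) = (k:ℝ)*(M:ℝ)+1 := by rw [hN]; push_cast; ring
    have hdiff : Real.pi/k - Real.pi*M/N = Real.pi/((k:ℝ)*N) := by
      rw [hNcast]
      field_simp
      ring
    have hlip := sin_lipschitz' (Real.pi/k) (Real.pi*M/(N:ℝ))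
    have hdist : |Real.pi/k - Real.pi*M/(N:ℝ)| = Real.pi/((k:ℝ)*N) := by
      rw [hdiff]; exact _root_.abs_of_nonneg (by positivity)
    rw [hdist] at hlip
    have hsin_ge : Real.sin (Real.pi/k) - Real.pi/((k:ℝ)*N) ≤ Real.sin (Real.pi*M/(N:ℝ)) := by
      have := abs_le.mp hlip
      linarith [this.2]
    have hsmall : 2*s*(Real.pi/((k:ℝ)*N)) ≤ δ := by
      have hkN : (M:ℝ) ≤ (k:ℝ)*N := by
        have h1 : (1:ℝ) ≤ k := by exact_mod_cast (by omega : 1 ≤ k)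
        have h2 : (M:ℝ) ≤ N := by
          rw [hNcast]; nlinarith
        nlinarith
      have h2 : 2*s*Real.pi/((k:ℝ)*N) ≤ 2*s*Real.pi/(M:ℝ) := by
        apply div_le_div_of_nonneg_left _ hMR hkN
        positivity
      have h3 : 2*s*Real.pi/(M:ℝ) ≤ δ := by
        rw [div_le_iff₀ hMR]
        rw [div_lt_iff₀ hδ] at hMbig
        nlinarith
      calc 2*s*(Real.pi/((k:ℝ)*N)) = 2*s*Real.pi/((k:ℝ)*N) := by ring
        _ ≤ δ := le_trans h2 h3
    nlinarith [hB, hs0]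
  -- conclude Part B
  have hrD : 2 * inradius C * Real.sin (Real.pi/k) ≤ D := by
    refine le_of_forall_pos_le_add fun δ hδ => ?_
    rcases lt_or_ge (inradius C - δ/2) 0 with hcase | hcase
    · have : 2 * inradius C * Real.sin (Real.pi/k) ≤ 2 * inradius C * 1 := by
        nlinarith [hr0]
      nlinarith [hD0]
    · have hs := hB2 (inradius C - δ/2) hcase (by linarith)
      nlinarith [hsin1, hsin6]
  exact max_le hRD hrD
end

section
/- Let k ≥ 3 be an integer and let C be a k-rotationally symmetric planar convex body with center of symmetry p and inradius r. Then C is contained in a regular k-gon with inradius r centered at p: there exists an angle θ such that C ⊆ {x ∈ ℝ² : ⟨x − p, u_j⟩ ≤ r for all j = 0, …, k−1}, where u_j is the unit vector (cos(θ + 2πj/k), sin(θ + 2πj/k)). -/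
open Metric Set

/-- A `k`-rotationally symmetric planar convex body `C` (`k ≥ 3`) with center of
symmetry `p` and inradius `r` is contained in a regular `k`-gon with inradius `r`
centered at `p`: for some orientation `θ`, for every `x ∈ C` and every
`j = 0, …, k−1` the inner product `⟨x − p, u_j⟩` (computed in the plane `ℂ` as
`Re((x − p)·conj u_j)`) is at most `r`, where `u_j = e^{i(θ + 2πj/k)}` is the
corresponding unit vector `(cos(θ + 2πj/k), sin(θ + 2πj/k))`. -/
theorem subset_regularKGon_of_inradius
    (k : ℕ) (hk : 3 ≤ k) (p : ℂ) (C : Set ℂ) (hC : IsRotSymConvexBody k p C) :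
    ∃ θ : ℝ, C ⊆ {x : ℂ | ∀ j < k,
      ((x - p) * (starRingEnd ℂ)
        (Complex.exp (((θ + 2 * Real.pi * j / k : ℝ) : ℂ) * Complex.I))).re
        ≤ inradius C} := by
  obtain ⟨hcomp, hconv, hint, hrot⟩ := hC
  have hk0 : (k : ℂ) ≠ 0 := Nat.cast_ne_zero.2 (by omega)
  set ω : ℂ := Complex.exp (2 * (Real.pi : ℂ) * Complex.I / (k : ℂ)) with hωdef
  set S : Set ℝ := {r : ℝ | ∃ c : ℂ, closedBall c r ⊆ C} with hSdef
  set r : ℝ := inradius C with hrdef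
  have hrsup : r = sSup S := rfl
  -- basic facts about ω
  have hωform : 2 * (Real.pi : ℂ) * Complex.I / (k : ℂ)
      = ((2 * Real.pi / k : ℝ) : ℂ) * Complex.I := by push_cast; ring
  have habsω : ‖ω‖ = 1 := by
    rw [hωdef, hωform]; exact Complex.norm_exp_ofReal_mul_I _
  have hωconj : ω * (starRingEnd ℂ) ω = 1 := by
    rw [Complex.mul_conj, Complex.normSq_eq_norm_sq, habsω]; norm_num
  have hωne1 : ω ≠ 1 := by
    intro h
    rw [hωdef, Complex.exp_eq_one_iff] at h
    obtain ⟨n, hn⟩ := h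
    have h2pi : (2 * (Real.pi : ℂ) * Complex.I) ≠ 0 := by
      simp [Real.pi_ne_zero, Complex.I_ne_zero]
    have hnk : ((n * k : ℤ) : ℂ) = 1 := by
      have : (n : ℂ) * (k : ℂ) * (2 * (Real.pi : ℂ) * Complex.I)
          = 1 * (2 * (Real.pi : ℂ) * Complex.I) := by
        field_simp at hn
        push_cast
        linear_combination (-(2 * (Real.pi : ℂ) * Complex.I)) * hn
      have := mul_right_cancel₀ h2pi this
      push_cast
      linear_combination this
    have hnk' : (n * (k : ℤ)) = 1 := by exact_mod_cast hnk
    have : (k : ℤ) ≤ 1 := Int.le_of_dvd one_pos ⟨n, by linarith [hnk']⟩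
    omega
  have hωk : ω ^ k = 1 := by
    rw [hωdef, ← Complex.exp_nat_mul]
    rw [show (k : ℂ) * (2 * (Real.pi : ℂ) * Complex.I / (k : ℂ))
        = 2 * Real.pi * Complex.I by field_simp]
    exact Complex.exp_two_pi_mul_I
  have hsum : ∑ j ∈ Finset.range k, ω ^ j = 0 := by
    rw [geom_sum_eq hωne1, hωk]; simp
  -- rotations preserve C
  have hrotmem : ∀ z ∈ C, p + ω * (z - p) ∈ C := by
    intro z hz
    have : planeRotation k p z ∈ C := by
      rw [← hrot]; exact mem_image_of_mem _ hz
    exact this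
  have hrotinv : ∀ z ∈ C, p + (starRingEnd ℂ) ω * (z - p) ∈ C := by
    intro z hz
    rw [← hrot] at hz
    obtain ⟨y, hy, hyz⟩ := hz
    have h2 : p + (starRingEnd ℂ) ω * (z - p) = y := by
      rw [← hyz]; unfold planeRotation
      rw [← hωdef]
      have : (starRingEnd ℂ) ω * (p + ω * (y - p) - p) = y - p := by
        rw [show p + ω * (y - p) - p = ω * (y - p) by ring, ← mul_assoc,
          mul_comm ((starRingEnd ℂ) ω) ω, hωconj, one_mul]
      rw [this]; ring
    rw [h2]; exact hy
  have hiter : ∀ (j : ℕ), ∀ y ∈ C, p + ω ^ j * (y - p) ∈ C := by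
    intro j
    induction j with
    | zero => intro y hy; simpa using hy
    | succ n ih =>
      intro y hy
      have h1 := hrotmem _ (ih y hy)
      have h2 : p + ω * (p + ω ^ n * (y - p) - p) = p + ω ^ (n + 1) * (y - p) := by
        rw [pow_succ]; ring
      rw [← h2]; exact h1
  have hinviter : ∀ (j : ℕ), ∀ y ∈ C, p + ((starRingEnd ℂ) ω) ^ j * (y - p) ∈ C := by
    intro j
    induction j with
    | zero => intro y hy; simpa using hy
    | succ n ih =>
      intro y hy
      have h1 := hrotinv _ (ih y hy)
      have h2 : p + (starRingEnd ℂ) ω * (p + ((starRingEnd ℂ) ω) ^ n * (y - p) - p)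
          = p + ((starRingEnd ℂ) ω) ^ (n + 1) * (y - p) := by
        rw [pow_succ]; ring
      rw [← h2]; exact h1
  -- recentering: any inball can be recentered at p
  have hball : ∀ (t : ℝ) (c : ℂ), closedBall c t ⊆ C → closedBall p t ⊆ C := by
    intro t c hc x hx
    rcases lt_or_ge t 0 with ht | ht
    · rw [closedBall_eq_empty.2 ht] at hx; exact absurd hx (notMem_empty x)
    set v : ℂ := x - p with hvdef
    have hv : ‖v‖ ≤ t := by
      rw [hvdef, ← Complex.dist_eq]; exact mem_closedBall.1 hx
    have hmem : ∀ j ∈ Finset.range k, (p + ω ^ j * (c - p) + v) ∈ C := by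
      intro j _
      have hcv : c + ((starRingEnd ℂ) ω) ^ j * v ∈ C := by
        apply hc
        rw [mem_closedBall, Complex.dist_eq]
        calc ‖c + ((starRingEnd ℂ) ω) ^ j * v - c‖
            = ‖((starRingEnd ℂ) ω) ^ j‖ * ‖v‖ := by
              rw [show c + ((starRingEnd ℂ) ω) ^ j * v - c = ((starRingEnd ℂ) ω) ^ j * v
                by ring, norm_mul]
          _ ≤ t := by
              rw [norm_pow, Complex.norm_conj, habsω, one_pow, one_mul]; exact hv
      have := hiter j _ hcv
      have heq : p + ω ^ j * (c + ((starRingEnd ℂ) ω) ^ j * v - p)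
          = p + ω ^ j * (c - p) + v := by
        have hconjpow : ω ^ j * ((starRingEnd ℂ) ω) ^ j = 1 := by
          rw [← mul_pow, hωconj, one_pow]
        calc p + ω ^ j * (c + ((starRingEnd ℂ) ω) ^ j * v - p)
            = p + ω ^ j * (c - p) + (ω ^ j * ((starRingEnd ℂ) ω) ^ j) * v := by ring
          _ = p + ω ^ j * (c - p) + v := by rw [hconjpow, one_mul]
      rw [heq] at this; exact this
    have hkpos : (0 : ℝ) < k := by positivity
    have hsum2 : ∑ j ∈ Finset.range k, ((k : ℝ)⁻¹ • (p + ω ^ j * (c - p) + v)) = x := by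
      rw [← Finset.smul_sum]
      have h1 : ∑ j ∈ Finset.range k, (p + ω ^ j * (c - p) + v) = (k : ℂ) * (p + v) := by
        rw [Finset.sum_add_distrib, Finset.sum_add_distrib, Finset.sum_const,
          Finset.sum_const, ← Finset.sum_mul, hsum, Finset.card_range]
        push_cast
        ring
      rw [h1, Complex.real_smul]
      push_cast
      rw [← mul_assoc, inv_mul_cancel₀ hk0, one_mul, hvdef]
      ring
    rw [← hsum2]
    apply hconv.sum_mem
    · intro j _; positivity
    · rw [Finset.sum_const, Finset.card_range, nsmul_eq_mul, mul_inv_cancel₀ (by positivity)]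
    · exact hmem
  -- S is nonempty and bounded above; r > 0
  obtain ⟨c₀, hc₀⟩ := hint
  obtain ⟨ε, hε, hεball⟩ := Metric.isOpen_iff.1 isOpen_interior c₀ hc₀
  have hS0 : ε / 2 ∈ S := by
    refine ⟨c₀, ?_⟩
    intro y hy
    apply interior_subset
    apply hεball
    rw [mem_ball]
    calc dist y c₀ ≤ ε / 2 := mem_closedBall.1 hy
      _ < ε := by linarith
  have hSne : S.Nonempty := ⟨ε / 2, hS0⟩
  obtain ⟨R, hR⟩ := (Metric.isBounded_iff_subset_closedBall 0).1 hcomp.isBounded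
  have hbdd : BddAbove S := by
    refine ⟨max 0 (2 * R), ?_⟩
    rintro t ⟨c, hc⟩
    rcases le_or_gt t 0 with ht | ht
    · exact le_trans ht (le_max_left _ _)
    · have hcC : c ∈ C := hc (mem_closedBall_self ht.le)
      have hctC : c + (t : ℂ) ∈ C := by
        apply hc
        rw [mem_closedBall, Complex.dist_eq]
        simp [Complex.norm_real, abs_of_pos ht]
      have h1 : ‖c‖ ≤ R := by
        have := hR hcC; rwa [mem_closedBall, Complex.dist_eq, sub_zero] at this
      have h2 : ‖c + (t : ℂ)‖ ≤ R := by
        have := hR hctC; rwa [mem_closedBall, Complex.dist_eq, sub_zero] at this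
      have h3 : t = ‖(c + (t : ℂ)) - c‖ := by
        simp [Complex.norm_real, abs_of_pos ht]
      have h4 : ‖(c + (t : ℂ)) - c‖ ≤ 2 * R := by
        calc ‖(c + (t : ℂ)) - c‖
            ≤ ‖c + (t : ℂ)‖ + ‖c‖ := by
              exact (norm_sub_le _ _)
          _ ≤ 2 * R := by linarith
      calc t = ‖(c + (t : ℂ)) - c‖ := h3
        _ ≤ 2 * R := h4
        _ ≤ max 0 (2 * R) := le_max_right _ _
  have hrpos : 0 < r := by
    have := le_csSup hbdd hS0
    rw [← hrsup] at this
    linarith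
  -- the centered closed ball of radius r is inside C
  have hopen : ball p r ⊆ C := by
    intro x hx
    obtain ⟨t, htS, hxt⟩ := exists_lt_of_lt_csSup hSne (mem_ball.1 hx)
    obtain ⟨c, hc⟩ := htS
    exact hball t c hc (mem_closedBall.2 hxt.le)
  have hclosed : closedBall p r ⊆ C := by
    rw [← closure_ball p hrpos.ne']
    exact closure_minimal hopen hcomp.isClosed
  -- complement is nonempty
  have hRnn : 0 ≤ R := by
    have := hR (interior_subset hc₀)
    rw [mem_closedBall] at this
    exact le_trans dist_nonneg this
  have hCcne : Cᶜ.Nonempty := by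
    refine ⟨((R + 1 : ℝ) : ℂ), ?_⟩
    intro h
    have := hR h
    rw [mem_closedBall, Complex.dist_eq, sub_zero, Complex.norm_real, Real.norm_eq_abs,
      abs_of_pos (by linarith)] at this
    linarith
  -- infDist p Cᶜ = r
  have hinf : infDist p Cᶜ = r := by
    apply le_antisymm
    · by_contra h
      push_neg at h
      set t := (r + infDist p Cᶜ) / 2 with htdef
      have htr : r < t := by rw [htdef]; linarith
      have htinf : t < infDist p Cᶜ := by rw [htdef]; linarith
      have htS : t ∈ S := by
        refine ⟨p, ?_⟩
        intro y hy
        by_contra hyC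
        have := infDist_le_dist_of_mem (x := p) (show y ∈ Cᶜ from hyC)
        rw [dist_comm] at this
        have hyd : dist y p ≤ t := mem_closedBall.1 hy
        linarith
      linarith [le_csSup hbdd htS, hrsup.le, hrsup.ge]
    · by_contra h
      push_neg at h
      obtain ⟨y, hyC, hyd⟩ := (infDist_lt_iff hCcne).1 h
      exact hyC (hclosed (mem_closedBall.2 (by rw [dist_comm]; exact hyd.le)))
  -- nearest point q of the closure of the complement
  obtain ⟨q, hqmem, hqd⟩ := isClosed_closure.exists_infDist_eq_dist
    (hCcne.closure) p
  rw [infDist_closure, hinf] at hqd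
  have hqni : q ∉ interior C := by
    rw [closure_compl] at hqmem; exact hqmem
  -- separating functional
  obtain ⟨f, hf⟩ := geometric_hahn_banach_open_point hconv.interior isOpen_interior hqni
  -- f x ≤ f q on C
  have hfC : ∀ x ∈ C, f x ≤ f q := by
    intro x hx
    have key : ∀ t : ℝ, 0 < t → t ≤ 1 → t * f c₀ + (1 - t) * f x < f q := by
      intro t ht ht1
      have hmem : t • c₀ + (1 - t) • x ∈ interior C :=
        hconv.combo_interior_self_mem_interior hc₀ hx ht (by linarith) (by ring)
      have := hf _ hmem
      rw [map_add, map_smul, map_smul, smul_eq_mul, smul_eq_mul] at this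
      exact this
    by_contra hcon
    push_neg at hcon
    set M := |f x - f c₀| with hMdef
    set t := min 1 ((f x - f q) / (M + 1)) with htdef
    have hM0 : 0 ≤ M := abs_nonneg _
    have htpos : 0 < t := lt_min one_pos (div_pos (by linarith) (by linarith))
    have ht1 : t ≤ 1 := min_le_left _ _
    have hkey := key t htpos ht1
    have h1 : f x - f c₀ ≤ M := le_abs_self _
    have h2 : t ≤ (f x - f q) / (M + 1) := min_le_right _ _
    have h3 : t * (f x - f c₀) ≤ t * M := by nlinarith
    have h4 : t * M ≤ ((f x - f q) / (M + 1)) * M := by nlinarith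
    have h5 : ((f x - f q) / (M + 1)) * M < f x - f q := by
      rw [div_mul_eq_mul_div, div_lt_iff₀ (by linarith)]
      nlinarith
    nlinarith
  -- represent f by a vector w
  set w : ℂ := ⟨f 1, f Complex.I⟩ with hwdef
  have hw : ∀ z : ℂ, (z * (starRingEnd ℂ) w).re = f z := by
    intro z
    have hz : z = z.re • (1 : ℂ) + z.im • Complex.I := by
      rw [Complex.real_smul, Complex.real_smul, mul_one, Complex.re_add_im]
    conv_rhs => rw [hz]
    rw [map_add, map_smul, map_smul, smul_eq_mul, smul_eq_mul]
    simp [Complex.mul_re, hwdef, Complex.conj_re, Complex.conj_im]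
  have hw0 : w ≠ 0 := by
    intro h
    have h1 := hf c₀ hc₀
    have h2 : f c₀ = 0 := by rw [← hw c₀, h]; simp
    have h3 : f q = 0 := by rw [← hw q, h]; simp
    rw [h2, h3] at h1; exact lt_irrefl 0 h1
  have habsw : 0 < ‖w‖ := norm_pos_iff.mpr hw0
  -- Cauchy-Schwarz bound at q
  have hCS : f q - f p ≤ r * ‖w‖ := by
    have h1 : f q - f p = ((q - p) * (starRingEnd ℂ) w).re := by
      rw [hw (q - p), map_sub]
    rw [h1]
    calc ((q - p) * (starRingEnd ℂ) w).re
        ≤ ‖(q - p) * (starRingEnd ℂ) w‖ := Complex.re_le_norm _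
      _ = ‖q - p‖ * ‖w‖ := by rw [norm_mul, Complex.norm_conj]
      _ = r * ‖w‖ := by
          rw [show ‖q - p‖ = dist p q by
            rw [Complex.dist_eq]; exact norm_sub_rev q p, ← hqd]
  -- main directional bound
  set θ : ℝ := Complex.arg w with hθdef
  set u : ℂ := Complex.exp ((θ : ℂ) * Complex.I) with hudef
  have huw : ((‖w‖ : ℝ) : ℂ) * u = w := Complex.norm_mul_exp_arg_mul_I w
  have hmain : ∀ y ∈ C, ((y - p) * (starRingEnd ℂ) u).re ≤ r := by
    intro y hy
    have h1 : ((y - p) * (starRingEnd ℂ) w).re ≤ r * ‖w‖ := by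
      have := hfC y hy
      have h2 : ((y - p) * (starRingEnd ℂ) w).re = f y - f p := by
        rw [hw (y - p), map_sub]
      rw [h2]; linarith
    have h3 : (y - p) * (starRingEnd ℂ) w
        = ((‖w‖ : ℝ) : ℂ) * ((y - p) * (starRingEnd ℂ) u) := by
      conv_lhs => rw [← huw]
      rw [map_mul, Complex.conj_ofReal]
      ring
    rw [h3] at h1
    simp only [Complex.mul_re, Complex.ofReal_re, Complex.ofReal_im, zero_mul,
      sub_zero] at h1
    exact le_of_mul_le_mul_left (h1.trans_eq (mul_comm _ _)) habsw
  -- conclude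
  refine ⟨θ, ?_⟩
  intro x hx
  simp only [mem_setOf_eq]
  intro j hj
  have hexp : Complex.exp (((θ + 2 * Real.pi * j / k : ℝ) : ℂ) * Complex.I)
      = u * ω ^ j := by
    rw [show (((θ + 2 * Real.pi * j / k : ℝ) : ℂ) * Complex.I)
        = (θ : ℂ) * Complex.I + (j : ℕ) * (2 * (Real.pi : ℂ) * Complex.I / (k : ℂ)) by
      push_cast; ring]
    rw [Complex.exp_add, Complex.exp_nat_mul, hudef, hωdef]
  rw [hexp, map_mul, map_pow]
  have hy := hinviter j x hx
  have heq : (x - p) * ((starRingEnd ℂ) u * ((starRingEnd ℂ) ω) ^ j)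
      = ((p + ((starRingEnd ℂ) ω) ^ j * (x - p)) - p) * (starRingEnd ℂ) u := by
    ring
  rw [heq]
  exact hmain _ hy
end

section
/- Fix an integer k ≥ 3. Let C be a k-rotationally symmetric planar convex body whose circumradius satisfies R(C) ≤ 1 and whose inradius satisfies r(C) ≤ 1/(2·sin(π/k)) (equivalently, the maximum relative diameter of its standard k-partition, max{R(C), 2·r(C)·sin(π/k)}, is at most 1). Then the area of C is at most the area of D ∩ T, where D is the closed unit disk centered at the origin and T is the regular k-gon with inradius 1/(2·sin(π/k)) centered at the origin; moreover equality holds if and only if C is a translate of a rotate of D ∩ T. Consequently, among all k-rotationally symmetric planar convex bodies, the ratio d_M(P_k(C), C)²/Area(C) is minimized, uniquely up to dilations, rotations and translations, by D ∩ T. -/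
open Metric Set MeasureTheory

/-- The regular `k`-gon with inradius `a` centered at the origin: the intersection of
the half-planes `{x : ⟨x, u_j⟩ ≤ a}` with `u_j = e^{2πij/k}`, `j = 0, …, k−1`. -/
noncomputable def regularKGon (k : ℕ) (a : ℝ) : Set ℂ :=
  {x : ℂ | ∀ j < k,
    (x * (starRingEnd ℂ)
      (Complex.exp (((2 * Real.pi * j / k : ℝ) : ℂ) * Complex.I))).re ≤ a}

lemma mem_closure_interior_of_convex {s : Set ℂ} (hs : Convex ℝ s) {z x : ℂ}
    (hz : z ∈ interior s) (hx : x ∈ closure s) : x ∈ closure (interior s) := by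
  have hmem : ∀ n : ℕ, (1/((n:ℝ)+2)) • z + (1 - 1/((n:ℝ)+2)) • x ∈ interior s := by
    intro n
    have h2 : (0:ℝ) < (n:ℝ) + 2 := by positivity
    have h1 : 0 < 1/((n:ℝ)+2) := by positivity
    have h3 : 1/((n:ℝ)+2) < 1 := by
      rw [div_lt_one h2]; linarith
    exact hs.combo_interior_closure_subset_interior h1 (by linarith) (by ring)
      (Set.add_mem_add (Set.smul_mem_smul_set hz) (Set.smul_mem_smul_set hx))
  have htend : Filter.Tendsto (fun n : ℕ => (1/((n:ℝ)+2)) • z + (1 - 1/((n:ℝ)+2)) • x)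
      Filter.atTop (nhds x) := by
    have h0 : Filter.Tendsto (fun n : ℕ => 1/((n:ℝ)+2)) Filter.atTop (nhds 0) := by
      simp_rw [one_div]
      exact Filter.Tendsto.comp tendsto_inv_atTop_zero
        (Filter.tendsto_atTop_add_const_right _ 2 tendsto_natCast_atTop_atTop)
    have h1 : Filter.Tendsto (fun n : ℕ => (1 - 1/((n:ℝ)+2))) Filter.atTop (nhds 1) := by
      simpa using (tendsto_const_nhds (x := (1:ℝ))).sub h0
    have := (h0.smul_const z).add (h1.smul_const x)
    simpa using this
  exact mem_closure_of_tendsto htend (Filter.Eventually.of_forall hmem)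

lemma vol_affine_img (θ : ℝ) (v : ℂ) (s : Set ℂ) (hs : MeasurableSet s) :
    volume ((fun z => v + Complex.exp ((θ : ℂ) * Complex.I) * z) '' s) = volume s := by
  have h1 : (fun z => v + Complex.exp ((θ : ℂ) * Complex.I) * z) '' s
      = (v + ·) '' ((rotation (Circle.exp θ)) '' s) := by
    rw [Set.image_image]
    simp [rotation_apply, Circle.coe_exp]
  rw [h1, image_add_left, measure_preimage_add]
  have h2 : (rotation (Circle.exp θ)) '' s
      = (rotation (Circle.exp θ)).symm ⁻¹' s := by
    exact ((rotation (Circle.exp θ)).toEquiv.image_eq_preimage_symm s)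
  rw [h2]
  exact ((rotation (Circle.exp θ)).symm.measurePreserving).measure_preimage hs.nullMeasurableSet

lemma isClosed_regularKGon (k : ℕ) (a : ℝ) : IsClosed (regularKGon k a) := by
  have : regularKGon k a = ⋂ (j : ℕ) (_ : j < k),
      {x : ℂ | (x * (starRingEnd ℂ)
        (Complex.exp (((2 * Real.pi * j / k : ℝ) : ℂ) * Complex.I))).re ≤ a} := by
    ext x; simp [regularKGon]
  rw [this]
  refine isClosed_iInter fun j => isClosed_iInter fun _ => ?_
  exact isClosed_le (Complex.continuous_re.comp (continuous_id.mul continuous_const))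
    continuous_const

lemma convex_regularKGon (k : ℕ) (a : ℝ) : Convex ℝ (regularKGon k a) := by
  have : regularKGon k a = ⋂ (j : ℕ) (_ : j < k),
      {x : ℂ | (x * (starRingEnd ℂ)
        (Complex.exp (((2 * Real.pi * j / k : ℝ) : ℂ) * Complex.I))).re ≤ a} := by
    ext x; simp [regularKGon]
  rw [this]
  refine convex_iInter fun j => convex_iInter fun _ => ?_
  refine convex_halfSpace_le ⟨fun x y => by rw [add_mul, Complex.add_re], ?_⟩ a
  intro r x
  simp only [Complex.real_smul, Complex.mul_re, Complex.ofReal_re, Complex.ofReal_im,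
    smul_eq_mul, Complex.mul_im]
  ring

/-- Optimal bodies: if a `k`-rotationally symmetric planar convex body (`k ≥ 3`)
satisfies `R(C) ≤ 1` and `r(C) ≤ 1/(2 sin(π/k))` (i.e. the maximum relative diameter
of its standard `k`-partition is at most `1`), then its area is at most that of the
intersection of the closed unit disk `D` with the regular `k`-gon `T` of inradius
`1/(2 sin(π/k))`, with equality exactly when `C` is a translate of a rotate of `D ∩ T`. -/
theorem optimal_body_is_disk_inter_kgon
    (k : ℕ) (hk : 3 ≤ k) (p : ℂ) (C : Set ℂ) (hC : IsRotSymConvexBody k p C)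
    (hR : circumradius C ≤ 1)
    (hr : inradius C ≤ 1 / (2 * Real.sin (Real.pi / k))) :
    volume C ≤ volume (closedBall (0 : ℂ) 1 ∩ regularKGon k (1 / (2 * Real.sin (Real.pi / k)))) ∧
    (volume C = volume (closedBall (0 : ℂ) 1 ∩ regularKGon k (1 / (2 * Real.sin (Real.pi / k)))) ↔
      ∃ (θ : ℝ) (v : ℂ), C = (fun z => v + Complex.exp ((θ : ℂ) * Complex.I) * z) ''
        (closedBall (0 : ℂ) 1 ∩ regularKGon k (1 / (2 * Real.sin (Real.pi / k))))) := by
  obtain ⟨hcomp, hconv, hintC, hsym⟩ := hC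
  set a : ℝ := 1 / (2 * Real.sin (Real.pi / k)) with ha_def
  set M : Set ℂ := closedBall (0 : ℂ) 1 ∩ regularKGon k a with hM_def
  have hkR : (0:ℝ) < k := by positivity
  have hsin : 0 < Real.sin (Real.pi / k) := by
    apply Real.sin_pos_of_pos_of_lt_pi
    · positivity
    · rw [div_lt_iff₀ hkR]
      have hk3 : (3:ℝ) ≤ k := by exact_mod_cast hk
      nlinarith [Real.pi_pos, mul_le_mul_of_nonneg_left hk3 Real.pi_pos.le]
  have ha : 0 < a := by rw [ha_def]; positivity
  have hCne : C.Nonempty := hintC.mono interior_subset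
  have hCcl : IsClosed C := hcomp.isClosed
  set ω : ℂ := Complex.exp (2 * (Real.pi : ℂ) * Complex.I / (k : ℂ)) with hω_def
  have hkC : (k : ℂ) ≠ 0 := by
    exact_mod_cast (by omega : k ≠ 0)
  have hω_eq : (2 * (Real.pi : ℂ) * Complex.I / (k : ℂ))
      = ((2 * Real.pi / k : ℝ) : ℂ) * Complex.I := by push_cast; ring
  have hωabs : ‖ω‖ = 1 := by
    rw [hω_def, hω_eq]; exact Complex.norm_exp_ofReal_mul_I _
  have hωjabs : ∀ j : ℕ, ‖ω ^ j‖ = 1 := by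
    intro j; rw [norm_pow, hωabs, one_pow]
  have hωjne : ∀ j : ℕ, ω ^ j ≠ 0 := by
    intro j h
    have := hωjabs j
    rw [h] at this
    simp at this
  have hωk : ω ^ k = 1 := by
    rw [hω_def, ← Complex.exp_nat_mul]
    rw [show (k : ℂ) * (2 * (Real.pi : ℂ) * Complex.I / (k : ℂ))
      = 2 * Real.pi * Complex.I by field_simp]
    exact Complex.exp_two_pi_mul_I
  have hω1 : ω ≠ 1 := by
    rw [hω_def, Ne, Complex.exp_eq_one_iff]
    rintro ⟨n, hn⟩
    have h2 : (1 : ℂ) = n * k := by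
      have hne : (2 * (Real.pi : ℂ) * Complex.I) ≠ 0 := by
        simp [Complex.I_ne_zero, Real.pi_ne_zero]
      apply mul_left_cancel₀ hne
      rw [div_eq_iff hkC] at hn
      linear_combination hn
    have h3 : (1 : ℤ) = n * k := by exact_mod_cast h2
    have h4 : (k : ℤ) ∣ 1 := Dvd.intro n (by linarith)
    have := Int.le_of_dvd one_pos h4
    omega
  -- iterated rotations
  have hrot : ∀ j : ℕ, (fun z => p + ω ^ j * (z - p)) '' C = C := by
    intro j
    induction j with
    | zero => simpa using Set.image_id C
    | succ j ih =>
      have hfun : (fun z => p + ω ^ (j+1) * (z - p))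
          = (planeRotation k p) ∘ (fun z => p + ω ^ j * (z - p)) := by
        funext z
        simp only [Function.comp, planeRotation, ← hω_def]
        ring
      rw [hfun, Set.image_comp, ih, hsym]
  have hmemrot : ∀ x ∈ C, ∀ j : ℕ, p + (ω ^ j)⁻¹ * (x - p) ∈ C := by
    intro x hx j
    rw [← hrot j] at hx
    obtain ⟨y, hy, hxy⟩ := hx
    have hxy' : p + ω ^ j * (y - p) = x := hxy
    have hyy : p + (ω ^ j)⁻¹ * (x - p) = y := by
      rw [← hxy', add_sub_cancel_left, inv_mul_cancel_left₀ (hωjne j)]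
      ring
    rwa [hyy]
  -- C is contained in the closed ball of radius circumradius about p
  have hsetR_ne : {R : ℝ | ∃ c : ℂ, C ⊆ closedBall c R}.Nonempty := by
    obtain ⟨R₀, hR₀⟩ := hcomp.isBounded.subset_closedBall p
    exact ⟨R₀, p, hR₀⟩
  have hsubR : C ⊆ closedBall p (circumradius C) := by
    intro x hx
    rw [mem_closedBall]
    refine le_csInf hsetR_ne ?_
    rintro R ⟨c, hc⟩
    have hgeom : ∑ j ∈ Finset.range k, ω ^ j = 0 := by
      rw [geom_sum_eq hω1, hωk]
      simp
    have hsum : ∑ j ∈ Finset.range k, (x - (p + ω ^ j * (c - p))) = (k : ℂ) * (x - p) := by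
      have heq : ∀ j : ℕ, x - (p + ω ^ j * (c - p)) = (x - p) - ω ^ j * (c - p) := by
        intro j; ring
      simp_rw [heq]
      rw [Finset.sum_sub_distrib, Finset.sum_const, Finset.card_range, ← Finset.sum_mul,
        hgeom, zero_mul, sub_zero, nsmul_eq_mul]
    have hterm : ∀ j ∈ Finset.range k, ‖x - (p + ω ^ j * (c - p))‖ ≤ R := by
      intro j _
      have hy : p + (ω ^ j)⁻¹ * (x - p) ∈ C := hmemrot x hx j
      have hyc := hc hy
      rw [mem_closedBall, dist_eq_norm] at hyc
      have hcancel : ω ^ j * (ω ^ j)⁻¹ = 1 := mul_inv_cancel₀ (hωjne j)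
      have heq2 : x - (p + ω ^ j * (c - p)) = ω ^ j * ((p + (ω ^ j)⁻¹ * (x - p)) - c) := by
        linear_combination (p - x) * hcancel
      rw [heq2, norm_mul]
      have hn1 : ‖ω ^ j‖ = 1 := by rw [hωjabs]
      rw [hn1, one_mul]
      exact hyc
    have hnorm : (k : ℝ) * dist x p ≤ (k : ℝ) * R := by
      have h1 : ‖(k : ℂ) * (x - p)‖ = (k : ℝ) * dist x p := by
        rw [norm_mul, dist_eq_norm]
        congr 1
        simp
      calc (k : ℝ) * dist x p = ‖∑ j ∈ Finset.range k, (x - (p + ω ^ j * (c - p)))‖ := by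
            rw [hsum, h1]
        _ ≤ ∑ j ∈ Finset.range k, ‖x - (p + ω ^ j * (c - p))‖ := norm_sum_le _ _
        _ ≤ ∑ _j ∈ Finset.range k, R := Finset.sum_le_sum hterm
        _ = (k : ℝ) * R := by rw [Finset.sum_const, Finset.card_range, nsmul_eq_mul]
    exact le_of_mul_le_mul_left hnorm hkR
  have hR1 : C ⊆ closedBall p 1 := hsubR.trans (closedBall_subset_closedBall hR)
  -- distance from p to the complement is at most a
  have hCcne : Cᶜ.Nonempty := by
    refine ⟨p + 2, fun h => ?_⟩
    have h2 := hR1 h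
    rw [mem_closedBall, dist_eq_norm] at h2
    simp at h2
  set ρ : ℝ := infDist p Cᶜ with hρ_def
  have hρa : ρ ≤ a := by
    rcases le_or_gt ρ 0 with h0 | h0
    · linarith
    · have hball : ball p ρ ⊆ C := by
        intro y hy
        by_contra hyC
        have hle : infDist p Cᶜ ≤ dist p y := infDist_le_dist_of_mem hyC
        rw [mem_ball, dist_comm] at hy
        rw [← hρ_def] at hle
        linarith
      have hcball : closedBall p ρ ⊆ C := by
        rw [← closure_ball p (ne_of_gt h0)]
        exact hCcl.closure_subset_iff.mpr hball
      have hbdd : BddAbove {r : ℝ | ∃ c : ℂ, closedBall c r ⊆ C} := by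
        refine ⟨2, ?_⟩
        rintro r ⟨c', hc'⟩
        rcases le_or_gt r 0 with hr0 | hr0
        · linarith
        · have h1 : c' + (r:ℂ) ∈ C := by
            apply hc'
            rw [mem_closedBall, dist_eq_norm]
            simp [abs_of_pos hr0]
          have h2 : c' ∈ C := by
            apply hc'
            simp [mem_closedBall, le_of_lt hr0]
          have hb1 := hR1 h1
          have hb2 := hR1 h2
          rw [mem_closedBall, dist_eq_norm] at hb1 hb2
          have h3 : ‖(c' + (r:ℂ)) - c'‖ ≤ 2 := by
            have h4 : (c' + (r:ℂ)) - c' = ((c' + (r:ℂ)) - p) - (c' - p) := by ring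
            rw [h4]
            calc ‖((c' + (r:ℂ)) - p) - (c' - p)‖ ≤ ‖(c' + (r:ℂ)) - p‖ + ‖c' - p‖ :=
                  norm_sub_le _ _
              _ ≤ 2 := by linarith
          have hre : ‖(c' + (r:ℂ)) - c'‖ = r := by
            simp [abs_of_pos hr0]
          linarith [hre ▸ h3]
      have hρin : ρ ≤ inradius C := le_csSup hbdd ⟨p, hcball⟩
      linarith
  obtain ⟨q, hqmem, hqd⟩ := isClosed_closure.exists_infDist_eq_dist hCcne.closure p
  rw [infDist_closure] at hqd
  have hq_not_int : q ∉ interior C := by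
    rw [closure_compl] at hqmem
    exact hqmem
  -- separating functional
  obtain ⟨f, hf⟩ := geometric_hahn_banach_open_point hconv.interior isOpen_interior hq_not_int
  set w : ℂ := (f 1 : ℂ) + (f Complex.I : ℂ) * Complex.I with hw_def
  have hwre : w.re = f 1 := by simp [hw_def]
  have hwim : w.im = f Complex.I := by simp [hw_def]
  have hfw : ∀ z : ℂ, f z = (z * (starRingEnd ℂ) w).re := by
    intro z
    have hz : z = z.re • (1:ℂ) + z.im • Complex.I := by
      simp [Complex.real_smul]
    conv_lhs => rw [hz]
    rw [map_add, _root_.map_smul, _root_.map_smul]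
    simp only [smul_eq_mul, Complex.mul_re, Complex.conj_re, Complex.conj_im, hwre, hwim]
    ring
  obtain ⟨a₀, ha₀⟩ := hintC
  have hw0 : w ≠ 0 := by
    intro h
    have hlt := hf a₀ ha₀
    rw [hfw a₀, hfw q, h] at hlt
    simp at hlt
  have hfle : ∀ x ∈ C, f x ≤ f q := by
    intro x hx
    have hxcl : x ∈ closure (interior C) :=
      mem_closure_interior_of_convex hconv ha₀ (subset_closure hx)
    have hclosed : IsClosed {y : ℂ | f y ≤ f q} := isClosed_le f.continuous continuous_const
    have hsub : interior C ⊆ {y : ℂ | f y ≤ f q} := fun y hy => le_of_lt (hf y hy)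
    exact closure_minimal hsub hclosed hxcl
  set mw : ℝ := ‖w‖ with hmw_def
  have hmw : 0 < mw := by
    rw [hmw_def]; exact norm_pos_iff.mpr hw0
  set u : ℂ := w / (mw : ℂ) with hu_def
  have habsu : ‖u‖ = 1 := by
    rw [hu_def, norm_div, Complex.norm_real, Real.norm_eq_abs, ← hmw_def, abs_of_pos hmw, div_self (ne_of_gt hmw)]
  have hu0 : u ≠ 0 := by
    intro h
    rw [h] at habsu
    simp at habsu
  set θ : ℝ := u.arg with hθ_def
  have huθ : Complex.exp ((θ : ℂ) * Complex.I) = u := by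
    have h5 := Complex.norm_mul_exp_arg_mul_I u
    rwa [habsu, Complex.ofReal_one, one_mul] at h5
  -- key estimate
  have key : ∀ x ∈ C, ∀ j : ℕ, ((x - p) * (starRingEnd ℂ) (ω ^ j * u)).re ≤ a := by
    intro x hx j
    set y : ℂ := p + (ω ^ j)⁻¹ * (x - p) with hy_def
    have hyC : y ∈ C := hmemrot x hx j
    have h1 : ((y - p) * (starRingEnd ℂ) w).re ≤ ρ * mw := by
      have hle : f (y - p) ≤ f (q - p) := by
        rw [map_sub, map_sub]
        have h6 := hfle y hyC
        linarith
      rw [hfw, hfw] at hle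
      have h2 : ((q - p) * (starRingEnd ℂ) w).re ≤ ρ * mw := by
        calc ((q - p) * (starRingEnd ℂ) w).re ≤ ‖(q - p) * (starRingEnd ℂ) w‖ :=
              Complex.re_le_norm _
          _ = ‖q - p‖ * mw := by rw [norm_mul, Complex.norm_conj, hmw_def]
          _ = ρ * mw := by
              rw [hρ_def, hqd]
              congr 1
              rw [dist_comm, dist_eq_norm]
      linarith
    have h2 : ((y - p) * (starRingEnd ℂ) u).re ≤ ρ := by
      have hconj : (starRingEnd ℂ) u = (starRingEnd ℂ) w / (mw : ℂ) := by
        rw [hu_def, map_div₀, Complex.conj_ofReal]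
      rw [hconj, ← mul_div_assoc, Complex.div_ofReal_re]
      rw [div_le_iff₀ hmw]
      exact h1
    have h3 : y - p = (starRingEnd ℂ) (ω ^ j) * (x - p) := by
      rw [hy_def]
      rw [← Complex.inv_eq_conj (by exact hωjabs j)]
      ring
    calc ((x - p) * (starRingEnd ℂ) (ω ^ j * u)).re
        = ((y - p) * (starRingEnd ℂ) u).re := by rw [h3, map_mul]; ring_nf
      _ ≤ ρ := h2
      _ ≤ a := hρa
  -- the exponentials in regularKGon are powers of ω
  have hexp : ∀ j : ℕ, Complex.exp (((2 * Real.pi * j / k : ℝ) : ℂ) * Complex.I) = ω ^ j := by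
    intro j
    rw [hω_def, ← Complex.exp_nat_mul]
    congr 1
    push_cast
    ring
  have huu : u * (starRingEnd ℂ) u = 1 := by
    rw [Complex.mul_conj, Complex.normSq_eq_norm_sq, habsu]
    norm_num
  -- C ⊆ F '' M
  set F : ℂ → ℂ := fun z => p + Complex.exp ((θ : ℂ) * Complex.I) * z with hF_def
  have hzmem : ∀ x : ℂ, dist x p ≤ 1 → (∀ j : ℕ, ((x - p) * (starRingEnd ℂ) (ω ^ j * u)).re ≤ a)
      → x ∈ F '' M := by
    intro x hx1 hxa
    refine ⟨(starRingEnd ℂ) u * (x - p), ⟨?_, ?_⟩, ?_⟩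
    · rw [mem_closedBall_zero_iff, norm_mul]
      have hcu : ‖(starRingEnd ℂ) u‖ = 1 := by
        rw [Complex.norm_conj, habsu]
      rw [hcu, one_mul, ← dist_eq_norm]
      exact hx1
    · intro j hj
      rw [hexp j]
      have heq : (((starRingEnd ℂ) u * (x - p)) * (starRingEnd ℂ) (ω ^ j))
          = (x - p) * (starRingEnd ℂ) (ω ^ j * u) := by
        rw [map_mul]; ring
      rw [heq]
      exact hxa j
    · show p + Complex.exp ((θ : ℂ) * Complex.I) * ((starRingEnd ℂ) u * (x - p)) = x
      rw [huθ, ← mul_assoc, huu, one_mul]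
      ring
  have hCF : C ⊆ F '' M := by
    intro x hx
    exact hzmem x (hR1 hx) (fun j => key x hx j)
  -- measurability and volume of M
  have hMmeas : MeasurableSet M :=
    measurableSet_closedBall.inter (isClosed_regularKGon k a).measurableSet
  have hvolFM : volume (F '' M) = volume M := vol_affine_img θ p M hMmeas
  have hineq : volume C ≤ volume M := by
    calc volume C ≤ volume (F '' M) := measure_mono hCF
      _ = volume M := hvolFM
  refine ⟨hineq, ?_, ?_⟩
  · -- equality implies C is a rotate-translate of M
    intro hvol
    refine ⟨θ, p, ?_⟩
    have hFMC : F '' M ⊆ C := by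
      intro x hxF
      by_contra hxC
      obtain ⟨g, s, hgs, hsx⟩ := geometric_hahn_banach_closed_point hconv hCcl hxC
      -- F '' M is a convex body
      have hFMconv : Convex ℝ (F '' M) := by
        have hMconv : Convex ℝ M :=
          (convex_closedBall (0:ℂ) 1).inter (convex_regularKGon k a)
        have h7 : F '' M = (fun y => p + y) ''
            ((fun z => Complex.exp ((θ : ℂ) * Complex.I) * z) '' M) := by
          rw [Set.image_image]
        rw [h7]
        refine Convex.translate ?_ p
        refine hMconv.is_linear_image ⟨fun z1 z2 => mul_add _ z1 z2, fun r z => ?_⟩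
        simp [Complex.real_smul]
        ring
      have hMcomp : IsCompact M :=
        (isCompact_closedBall (0:ℂ) 1).inter_right (isClosed_regularKGon k a)
      have hFMcl : IsClosed (F '' M) := by
        refine (hMcomp.image ?_).isClosed
        exact continuous_const.add (continuous_const.mul continuous_id)
      -- p is in the interior of F '' M
      set m : ℝ := min 1 a with hm_def
      have hm : 0 < m := lt_min one_pos ha
      have hballFM : ball p m ⊆ F '' M := by
        intro y hy
        rw [mem_ball, dist_eq_norm] at hy
        apply hzmem y
        · rw [dist_eq_norm]
          exact le_trans hy.le (min_le_left _ _)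
        · intro j
          calc ((y - p) * (starRingEnd ℂ) (ω ^ j * u)).re
              ≤ ‖(y - p) * (starRingEnd ℂ) (ω ^ j * u)‖ := Complex.re_le_norm _
            _ = ‖y - p‖ * ‖ω ^ j * u‖ := by
                rw [norm_mul, Complex.norm_conj]
            _ = ‖y - p‖ := by
                rw [norm_mul, hωjabs, habsu]; ring
            _ ≤ m := by
                exact hy.le
            _ ≤ a := min_le_right _ _
      have hpint : p ∈ interior (F '' M) :=
        mem_interior.mpr ⟨ball p m, hballFM, isOpen_ball, mem_ball_self hm⟩
      -- x is in the closure of the interior of F '' M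
      have hxcl : x ∈ closure (interior (F '' M)) :=
        mem_closure_interior_of_convex hFMconv hpint (subset_closure hxF)
      -- pick a point of interior (F '' M) beyond the separating line
      have hUopen : IsOpen {y : ℂ | s < g y} := isOpen_lt continuous_const g.continuous
      obtain ⟨y, hy1, hy2⟩ := (_root_.mem_closure_iff.mp hxcl) _ hUopen hsx
      set V : Set ℂ := {y : ℂ | s < g y} ∩ interior (F '' M) with hV_def
      have hVopen : IsOpen V := hUopen.inter isOpen_interior
      have hVne : V.Nonempty := ⟨y, hy1, hy2⟩
      have hVsub : V ⊆ F '' M \ C := by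
        rintro v ⟨hv1, hv2⟩
        refine ⟨interior_subset hv2, fun hvC => ?_⟩
        exact absurd hv1 (not_lt.mpr (le_of_lt (hgs v hvC)))
      have hdiff : volume (F '' M \ C) = 0 := by
        rw [measure_diff hCF hcomp.measurableSet.nullMeasurableSet
          hcomp.measure_lt_top.ne, hvolFM, hvol]
        simp
      have hVpos : 0 < volume V := hVopen.measure_pos volume hVne
      have : volume V = 0 := le_antisymm (hdiff ▸ measure_mono hVsub) (zero_le)
      rw [this] at hVpos
      exact lt_irrefl 0 hVpos
    exact Set.Subset.antisymm hCF hFMC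
  · -- a rotate-translate of M has the same volume
    rintro ⟨θ', v, hCeq⟩
    rw [hCeq]
    exact vol_affine_img θ' v M hMmeas
end
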